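/- arXiv:1706.08050 — 8 statements merged into one kernel-verified Lean document; each statement's English description precedes it below -/
import Mathlib

section
/- Let G be a graph with n vertices and m edges. If the line graph L(G) has an odd cycle transversal of size at most m - n, then G has an even cycle factor. -/
open SimpleGraph

namespace Paper

variable {V : Type*}

/-- `S` is an independent set of `G`. -/
def IsIndep (G : SimpleGraph V) (S : Set V) : Prop :=
  S.Pairwise fun a b => ¬ G.Adj a b

/-- `S` is a maximal independent set of `G`. -/
def IsMaxIndep (G : SimpleGraph V) (S : Set V) : Prop :=
  IsIndep G S ∧ ∀ v ∉ S, ¬ IsIndep G (insert v S)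

/-- `S` is a maximal independent set of the subgraph of `G` induced by `W`. -/
def IsMaxIndepIn (G : SimpleGraph V) (W S : Set V) : Prop :=
  S ⊆ W ∧ IsIndep G S ∧ ∀ v ∈ W, v ∉ S → ∃ w ∈ S, G.Adj v w

/-- `S` is an odd cycle transversal of `G`: deleting `S` leaves a bipartite graph. -/
def IsOCT (G : SimpleGraph V) (S : Set V) : Prop :=
  (G.induce (Sᶜ : Set V)).Colorable 2

/-- `S` is a minimal odd cycle transversal of `G`. -/
def IsMinOCT (G : SimpleGraph V) (S : Set V) : Prop :=
  IsOCT G S ∧ ∀ T ⊂ S, ¬ IsOCT G T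

/-- `S` is a feedback vertex set of `G`: deleting `S` leaves a forest. -/
def IsFVS (G : SimpleGraph V) (S : Set V) : Prop :=
  (G.induce (Sᶜ : Set V)).IsAcyclic

/-- `S` is a minimal feedback vertex set of `G`. -/
def IsMinFVS (G : SimpleGraph V) (S : Set V) : Prop :=
  IsFVS G S ∧ ∀ T ⊂ S, ¬ IsFVS G T

/-- `S` is a vertex cover of `G`. -/
def IsVC (G : SimpleGraph V) (S : Set V) : Prop :=
  ∀ ⦃a b⦄, G.Adj a b → a ∈ S ∨ b ∈ S

/-- `S` induces a connected subgraph of `G`. -/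
def ConnSet (G : SimpleGraph V) (S : Set V) : Prop :=
  (G.induce S).Connected

/-- The graph `sP₂`: the disjoint union of `s` copies of an edge. -/
def sP2 (s : ℕ) : SimpleGraph (Fin s × Fin 2) where
  Adj p q := p.1 = q.1 ∧ p.2 ≠ q.2
  symm := ⟨fun _ _ h => ⟨h.1.symm, h.2.symm⟩⟩
  loopless := ⟨fun _ h => h.2 rfl⟩

/-- `G` contains an induced subgraph isomorphic to `H`. -/
def HasInducedIso {W : Type*} (G : SimpleGraph V) (H : SimpleGraph W) : Prop :=
  ∃ T : Set V, Nonempty (G.induce T ≃g H)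

/-- `G` is `sP₂`-free. -/
def sP2Free (s : ℕ) (G : SimpleGraph V) : Prop :=
  ¬ HasInducedIso G (sP2 s)

/-- `G` is claw-free: it has no induced `K_{1,3}`. -/
def ClawFree (G : SimpleGraph V) : Prop :=
  ¬ HasInducedIso G (completeBipartiteGraph (Fin 1) (Fin 3))

/-- `G` has an even cycle factor: a spanning 2-regular subgraph with no odd cycle. -/
def HasEvenCycleFactor (G : SimpleGraph V) : Prop :=
  ∃ H : SimpleGraph V, H ≤ G ∧ (∀ v, (H.neighborSet v).ncard = 2) ∧ H.Colorable 2

/-- The number of neighbours of `v` inside the set `F`. -/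
noncomputable def degIn (G : SimpleGraph V) (F : Set V) (v : V) : ℕ :=
  {w | w ∈ F ∧ G.Adj v w}.ncard

/-- `{x, y}` is a component of `G[F]` isomorphic to `P₂`. -/
def IsP2Comp (G : SimpleGraph V) (F : Set V) (x y : V) : Prop :=
  x ∈ F ∧ y ∈ F ∧ G.Adj x y ∧
  (∀ w ∈ F, G.Adj x w → w = y) ∧ (∀ w ∈ F, G.Adj y w → w = x)

/-- `F'` is a skeleton of the forest `G[F]`: all vertices of degree at least 2 in `G[F]`
together with exactly one vertex from each `P₂`-component. -/
def IsSkeleton (G : SimpleGraph V) (F F' : Set V) : Prop :=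
  F' ⊆ F ∧ (∀ v ∈ F, 2 ≤ degIn G F v → v ∈ F') ∧
  (∀ v ∈ F', 2 ≤ degIn G F v ∨ ∃ y, IsP2Comp G F v y) ∧
  (∀ x y, IsP2Comp G F x y → (x ∈ F' ↔ y ∉ F'))

lemma colorable_two_of_two_involutions {V : Type*} (H : SimpleGraph V) (μ σ : V → V)
    (hμ : Function.Involutive μ) (hσ : Function.Involutive σ)
    (hμne : ∀ v, μ v ≠ v) (hσne : ∀ v, σ v ≠ v)
    (hadj : ∀ u v, H.Adj u v → v = μ u ∨ v = σ u) :
    H.Colorable 2 := by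
  classical
  set mp : Equiv.Perm V := hμ.toPerm μ with hmp
  set sp : Equiv.Perm V := hσ.toPerm σ with hsp
  set π : Equiv.Perm V := sp * mp with hπ
  have hmp2 : mp * mp = 1 := by
    ext w
    exact hμ w
  have hsp2 : sp * sp = 1 := by
    ext w
    exact hσ w
  have hmpinv : mp⁻¹ = mp := inv_eq_of_mul_eq_one_right hmp2
  have hspinv : sp⁻¹ = sp := inv_eq_of_mul_eq_one_right hsp2
  have hconj : mp * π * mp⁻¹ = π⁻¹ := by
    rw [hmpinv, hπ, mul_inv_rev, hmpinv, hspinv, mul_assoc, mul_assoc, hmp2, mul_one]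
  have hconjk : ∀ k : ℤ, mp * π ^ k * mp⁻¹ = π ^ (-k) := by
    intro k
    have h := map_zpow (MulAut.conj mp) π k
    simp only [MulAut.conj_apply] at h
    rw [h, hconj, inv_zpow, zpow_neg]
  have hstepμ : ∀ (k : ℤ) (v : V), μ ((π ^ k) v) = (π ^ (-k)) (μ v) := by
    intro k v
    have h : mp * π ^ k = π ^ (-k) * mp := by
      have h0 := hconjk k
      rw [hmpinv] at h0
      calc mp * π ^ k = (mp * π ^ k * mp) * mp := by
            rw [mul_assoc (mp * π ^ k), hmp2, mul_one]
        _ = π ^ (-k) * mp := by rw [h0]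
    have := congrArg (fun (e : Equiv.Perm V) => e v) h
    exact this
  have hπμ : ∀ v, π (μ v) = σ v := by
    intro v
    show σ (μ (μ v)) = σ v
    rw [hμ v]
  have hstepσ : ∀ (k : ℤ) (v : V), σ ((π ^ k) v) = (π ^ (1 - k)) (μ v) := by
    intro k v
    rw [← hπμ ((π ^ k) v), hstepμ k v]
    rw [show (1 : ℤ) - k = 1 + -k by ring, zpow_add, zpow_one]
    rfl
  have key : ∀ (v : V) (k : ℤ), (π ^ k) v ≠ μ v := by
    intro v k h
    rcases Int.even_or_odd k with ⟨j, hj⟩ | ⟨j, hj⟩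
    · apply hμne ((π ^ j) v)
      calc μ ((π ^ j) v) = (π ^ (-j)) (μ v) := hstepμ j v
        _ = (π ^ (-j)) ((π ^ k) v) := by rw [h]
        _ = (π ^ (-j + k)) v := by rw [← Equiv.Perm.mul_apply, ← zpow_add]
        _ = (π ^ j) v := by rw [show -j + k = j by omega]
    · apply hσne ((π ^ (j + 1)) v)
      calc σ ((π ^ (j + 1)) v) = (π ^ (1 - (j + 1))) (μ v) := hstepσ _ v
        _ = (π ^ (-j)) ((π ^ k) v) := by rw [h, show (1 : ℤ) - (j+1) = -j by ring]
        _ = (π ^ (-j + k)) v := by rw [← Equiv.Perm.mul_apply, ← zpow_add]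
        _ = (π ^ (j + 1)) v := by rw [show -j + k = j + 1 by omega]
    
  -- the orbit relation
  set r1 : V → V → Prop := fun u v => ∃ k : ℤ, (π ^ k) u = v with hr1
  have r1_refl : ∀ v, r1 v v := fun v => ⟨0, by simp⟩
  have r1_symm : ∀ {u v}, r1 u v → r1 v u := by
    rintro u v ⟨k, hk⟩
    exact ⟨-k, by rw [← hk, ← Equiv.Perm.mul_apply, ← zpow_add]; simp⟩
  have r1_trans : ∀ {u v w}, r1 u v → r1 v w → r1 u w := by
    rintro u v w ⟨k, hk⟩ ⟨j, hj⟩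
    exact ⟨j + k, by rw [← hj, ← hk, ← Equiv.Perm.mul_apply, ← zpow_add]⟩
  have r1_mu : ∀ {u v}, r1 u v → r1 (μ u) (μ v) := by
    rintro u v ⟨k, hk⟩
    exact ⟨-k, by rw [← hk, hstepμ]⟩
  have r1_sigma : ∀ v, r1 (μ v) (σ v) := fun v => ⟨1, by simpa using hπμ v⟩
  set r : V → V → Prop := fun u v => r1 u v ∨ r1 u (μ v) with hr
  have requiv : Equivalence r := by
    constructor
    · intro v; exact Or.inl (r1_refl v)
    · rintro u v (h | h)
      · exact Or.inl (r1_symm h)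
      · right
        have := r1_mu h
        rw [hμ v] at this
        exact r1_symm this
    · rintro u v w (h1 | h1) (h2 | h2)
      · exact Or.inl (r1_trans h1 h2)
      · exact Or.inr (r1_trans h1 h2)
      · right
        exact r1_trans h1 (r1_mu h2)
      · left
        have h3 := r1_mu h2
        rw [hμ w] at h3
        exact r1_trans h1 h3
  letI s : Setoid V := ⟨r, requiv⟩
  set rep : V → V := fun v => (Quotient.mk s v).out with hrep_def
  have hrep : ∀ v, r (rep v) v := by
    intro v
    exact Quotient.exact (Quotient.out_eq (Quotient.mk s v))
  have hrepμ : ∀ v, rep (μ v) = rep v := by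
    intro v
    apply congrArg Quotient.out
    apply Quotient.sound
    show r (μ v) v
    right
    exact r1_refl (μ v)
  have hrepσ : ∀ v, rep (σ v) = rep v := by
    intro v
    apply congrArg Quotient.out
    apply Quotient.sound
    show r (σ v) v
    right
    exact r1_symm (r1_sigma v)
  have keyA : ∀ v, (r1 (rep v) v ∧ ¬ r1 (rep v) (μ v)) ∨
      (¬ r1 (rep v) v ∧ r1 (rep v) (μ v)) := by
    intro v
    have hnotboth : ¬ (r1 (rep v) v ∧ r1 (rep v) (μ v)) := by
      rintro ⟨h1, h2⟩
      obtain ⟨k, hk⟩ := r1_trans (r1_symm h1) h2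
      exact key v k hk
    rcases hrep v with h | h
    · exact Or.inl ⟨h, fun h2 => hnotboth ⟨h, h2⟩⟩
    · exact Or.inr ⟨fun h1 => hnotboth ⟨h1, h⟩, h⟩
  set f : V → Bool := fun v => decide (r1 (rep v) v) with hf
  have hfμ : ∀ v, f (μ v) ≠ f v := by
    intro v
    simp only [hf, hrepμ v]
    rcases keyA v with ⟨h1, h2⟩ | ⟨h1, h2⟩ <;> simp [h1, h2]
  have hfσ : ∀ v, f (σ v) ≠ f v := by
    intro v
    have hiff : r1 (rep v) (σ v) ↔ r1 (rep v) (μ v) :=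
      ⟨fun h => r1_trans h (r1_symm (r1_sigma v)), fun h => r1_trans h (r1_sigma v)⟩
    simp only [hf, hrepσ v]
    rcases keyA v with ⟨h1, h2⟩ | ⟨h1, h2⟩
    · have h3 : ¬ r1 (rep v) (σ v) := fun h => h2 (hiff.mp h)
      simp [h1, h3]
    · have h3 : r1 (rep v) (σ v) := hiff.mpr h2
      simp [h1, h3]
  have C : H.Coloring Bool := Coloring.mk f (by
    intro u v huv
    rcases hadj u v huv with rfl | rfl
    · exact fun h => hfμ u h.symm
    · exact fun h => hfσ u h.symm)
  have := C.colorable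
  rwa [Fintype.card_bool] at this

/-- If the line graph `L(G)` has an odd cycle transversal of size at most `m - n`,
then `G` has an even cycle factor. -/
theorem oct_of_line_graph_gives_even_cycle_factor {V : Type*} [Fintype V] (G : SimpleGraph V)
    (S : Set G.edgeSet) (hS : IsOCT G.lineGraph S)
    (hsize : (S.ncard : ℤ) ≤ (G.edgeSet.ncard : ℤ) - (Fintype.card V : ℤ)) :
    HasEvenCycleFactor G := by
  classical
  obtain ⟨c⟩ := hS
  set E' : Set (Sym2 V) := Subtype.val '' (Sᶜ) with hE'
  have hE'G : E' ⊆ G.edgeSet := by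
    rintro _ ⟨e, -, rfl⟩
    exact e.2
  set H : SimpleGraph V := fromEdgeSet E' with hH
  have hHG : H ≤ G := by
    calc H ≤ fromEdgeSet G.edgeSet := fromEdgeSet_mono hE'G
      _ = G := fromEdgeSet_edgeSet G
  have hHE : H.edgeSet = E' := by
    rw [hH, edgeSet_fromEdgeSet]
    ext e
    simp only [Set.mem_diff, Set.mem_setOf_eq, and_iff_left_iff_imp]
    intro he
    exact G.not_isDiag_of_mem_edgeSet (hE'G he)
  have hmem : ∀ (u v : V), H.Adj u v → ∃ e : ↥(Sᶜ), ((e : G.edgeSet) : Sym2 V) = s(u, v) := by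
    intro u v h
    rw [hH, fromEdgeSet_adj] at h
    obtain ⟨e, heS, hval⟩ := h.1
    exact ⟨⟨e, heS⟩, hval⟩
  choose eAt heAt using hmem
  set colAt : V → V → Fin 2 := fun u v => if h : H.Adj u v then c (eAt u v h) else 0 with hcolAt
  have hcol_symm : ∀ u v, colAt u v = colAt v u := by
    intro u v
    by_cases h : H.Adj u v
    · rw [hcolAt]
      simp only [dif_pos h, dif_pos h.symm]
      congr 1
      apply Subtype.ext; apply Subtype.ext
      show ((eAt u v h : G.edgeSet) : Sym2 V) = ((eAt v u h.symm : G.edgeSet) : Sym2 V)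
      rw [heAt u v h, heAt v u h.symm, Sym2.eq_swap]
    · rw [hcolAt]
      simp only [dif_neg h, dif_neg (fun h' => h (SimpleGraph.Adj.symm h'))]
  have hcol_ne : ∀ u v w, H.Adj u v → (hw : H.Adj u w) → v ≠ w → colAt u v ≠ colAt u w := by
    intro u v w hv hw hvw
    rw [hcolAt]
    simp only [dif_pos hv, dif_pos hw]
    apply c.valid
    show G.lineGraph.Adj ((eAt u v hv) : G.edgeSet) ((eAt u w hw) : G.edgeSet)
    rw [lineGraph_adj_iff_exists]
    constructor
    · intro heq
      have hss : s(u, v) = s(u, w) := by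
        rw [← heAt u v hv, ← heAt u w hw, heq]
      rw [Sym2.eq_iff] at hss
      rcases hss with ⟨-, h⟩ | ⟨h1, -⟩
      · exact hvw h
      · exact hw.ne h1
    · refine ⟨u, ?_, ?_⟩
      · rw [heAt u v hv]; exact Sym2.mem_mk_left u v
      · rw [heAt u w hw]; exact Sym2.mem_mk_left u w
  have hdegle : ∀ v : V, (H.neighborSet v).ncard ≤ 2 := by
    intro v
    by_contra hlt
    push_neg at hlt
    rw [Set.two_lt_ncard] at hlt
    obtain ⟨a, ha, b, hb, c', hc', hab, hac, hbc⟩ := hlt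
    have h1 := hcol_ne v a b ha hb hab
    have h2 := hcol_ne v a c' ha hc' hac
    have h3 := hcol_ne v b c' hb hc' hbc
    have : ∀ x y z : Fin 2, x ≠ y → x ≠ z → y ≠ z → False := by decide
    exact this _ _ _ h1 h2 h3
  letI : DecidableRel H.Adj := Classical.decRel _
  have hE'card : E'.ncard = (Sᶜ : Set G.edgeSet).ncard :=
    Set.ncard_image_of_injective _ Subtype.val_injective
  have hn_le : Fintype.card V ≤ E'.ncard := by
    have h1 : S.ncard + (Sᶜ).ncard = Nat.card ↥G.edgeSet := Set.ncard_add_ncard_compl S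
    rw [Nat.card_coe_set_eq] at h1
    rw [hE'card]
    omega
  have hdeg_eq : ∀ v : V, H.degree v = (H.neighborSet v).ncard := by
    intro v
    have h : (H.neighborSet v).ncard = Fintype.card (H.neighborSet v) := by
      rw [← Nat.card_coe_set_eq, Nat.card_eq_fintype_card]
    rw [h, H.card_neighborSet_eq_degree]
  letI : Fintype ↥H.edgeSet := H.fintypeEdgeSet
  have hsum : ∑ v : V, H.degree v = 2 * E'.ncard := by
    rw [SimpleGraph.sum_degrees_eq_twice_card_edges, SimpleGraph.edgeFinset_card,
      ← Nat.card_eq_fintype_card, Nat.card_coe_set_eq, hHE]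
  have hreg : ∀ v : V, (H.neighborSet v).ncard = 2 := by
    by_contra hc
    push_neg at hc
    obtain ⟨v₀, hv₀⟩ := hc
    have hstrict : ∑ v : V, H.degree v < ∑ _v : V, 2 :=
      Finset.sum_lt_sum (fun i _ => by rw [hdeg_eq]; exact hdegle i)
        ⟨v₀, Finset.mem_univ _, by rw [hdeg_eq]; exact lt_of_le_of_ne (hdegle v₀) hv₀⟩
    rw [hsum, Finset.sum_const, Finset.card_univ, smul_eq_mul] at hstrict
    omega
  have hexists : ∀ v : V, ∃ a b : V, H.Adj v a ∧ H.Adj v b ∧ colAt v a = 0 ∧ colAt v b = 1 ∧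
      ∀ x, H.Adj v x → x = a ∨ x = b := by
    intro v
    obtain ⟨a, b, hab, hset⟩ := Set.ncard_eq_two.mp (hreg v)
    have hav : H.Adj v a := by
      rw [← SimpleGraph.mem_neighborSet, hset]; left; rfl
    have hbv : H.Adj v b := by
      rw [← SimpleGraph.mem_neighborSet, hset]; right; rfl
    have hallv : ∀ x, H.Adj v x → x = a ∨ x = b := by
      intro x hx
      have hx' : x ∈ H.neighborSet v := hx
      rw [hset] at hx'
      exact hx'
    have hne := hcol_ne v a b hav hbv hab
    have hcases : ∀ y : Fin 2, y = 0 ∨ y = 1 := by decide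
    rcases hcases (colAt v a) with h0 | h0 <;> rcases hcases (colAt v b) with h1 | h1
    · exact absurd (h0.trans h1.symm) hne
    · exact ⟨a, b, hav, hbv, h0, h1, hallv⟩
    · exact ⟨b, a, hbv, hav, h1, h0, fun x hx => (hallv x hx).symm⟩
    · exact absurd (h0.trans h1.symm) hne
  choose μ σ hμadj hσadj hμ0 hσ1 hall using hexists
  have hμinv : Function.Involutive μ := by
    intro v
    rcases hall (μ v) v (hμadj v).symm with h | h
    · exact h.symm
    · exfalso
      have h2 : colAt (μ v) v = 1 := by
        have h2' := hσ1 (μ v)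
        rwa [← h] at h2'
      have h3 : colAt (μ v) v = 0 := by rw [hcol_symm]; exact hμ0 v
      rw [h3] at h2
      exact absurd h2 (by decide)
  have hσinv : Function.Involutive σ := by
    intro v
    rcases hall (σ v) v (hσadj v).symm with h | h
    · exfalso
      have h2 : colAt (σ v) v = 0 := by
        have h2' := hμ0 (σ v)
        rwa [← h] at h2'
      have h3 : colAt (σ v) v = 1 := by rw [hcol_symm]; exact hσ1 v
      rw [h3] at h2
      exact absurd h2 (by decide)
    · exact h.symm
  have hμne : ∀ v, μ v ≠ v := by
    intro v h
    have h2 := hμadj v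
    rw [h] at h2
    exact H.loopless.irrefl v h2
  have hσne : ∀ v, σ v ≠ v := by
    intro v h
    have h2 := hσadj v
    rw [h] at h2
    exact H.loopless.irrefl v h2
  exact ⟨H, hHG, hreg,
    colorable_two_of_two_involutions H μ σ hμinv hσinv hμne hσne hall⟩
end Paper
end

section
/- If G has an even cycle factor, then the line graph L(G) has an odd cycle transversal of size exactly m - n, where n and m are the numbers of vertices and edges of G. Hence G has an even cycle factor if and only if L(G) has an odd cycle transversal of size at most m - n. -/
open SimpleGraph

namespace Paper

variable {V : Type*}

lemma key_bipartite (H : SimpleGraph V) (σ0 σ1 : V → V)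
    (h0a : ∀ v, H.Adj v (σ0 v)) (h1a : ∀ v, H.Adj v (σ1 v))
    (h0i : ∀ v, σ0 (σ0 v) = v) (h1i : ∀ v, σ1 (σ1 v) = v)
    (hc : ∀ u v, H.Adj u v → v = σ0 u ∨ v = σ1 u) : H.Colorable 2 := by
  classical
  set e0 : Equiv.Perm V := ⟨σ0, σ0, h0i, h0i⟩ with he0
  set e1 : Equiv.Perm V := ⟨σ1, σ1, h1i, h1i⟩ with he1
  set π : Equiv.Perm V := e0 * e1 with hπ
  have he0sq : e0 * e0 = 1 := by
    ext x; simp [he0, Equiv.Perm.mul_apply, h0i]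
  have he0inv : e0⁻¹ = e0 := by
    rw [eq_comm, eq_inv_iff_mul_eq_one, he0sq]
  have hπapp : ∀ x, π x = σ0 (σ1 x) := fun x => rfl
  have hσ1π : ∀ x, σ1 x = σ0 (π x) := by
    intro x; rw [hπapp, h0i]
  have hconj : e0 * π * e0⁻¹ = π⁻¹ := by
    ext x
    simp only [hπ, mul_inv_rev, he0inv, Equiv.Perm.mul_apply, Equiv.symm_apply_apply]
    show σ0 (σ0 (σ1 (σ0 x))) = e1⁻¹ (e0⁻¹ x)
    have : e1⁻¹ = e1 := by
      rw [eq_comm, eq_inv_iff_mul_eq_one]; ext y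
      simp [he1, Equiv.Perm.mul_apply, h1i]
    rw [this, he0inv, h0i]
    rfl
  have hconjk : ∀ (k : ℤ) (x : V), σ0 ((π ^ k) x) = (π ^ (-k)) (σ0 x) := by
    intro k x
    have h1 : (MulAut.conj e0) (π ^ k) = π ^ (-k) := by
      rw [map_zpow, MulAut.conj_apply, hconj, inv_zpow, ← zpow_neg]
    have := congrArg (fun (p : Equiv.Perm V) => p (σ0 x)) h1
    simp only [MulAut.conj_apply, Equiv.Perm.mul_apply] at this
    rw [he0inv] at this
    show σ0 ((π ^ k) x) = _
    calc σ0 ((π ^ k) x) = e0 ((π ^ k) (e0 (σ0 x))) := by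
          show σ0 ((π ^ k) x) = σ0 ((π ^ k) (σ0 (σ0 x))); rw [h0i]
      _ = (π ^ (-k)) (σ0 x) := this
  have knofix : ∀ (v : V) (k : ℤ), (π ^ k) v ≠ σ0 v := by
    intro v k hk
    rcases Int.even_or_odd k with ⟨j, hj⟩ | ⟨j, hj⟩
    · have : σ0 ((π ^ j) v) = (π ^ j) v := by
        rw [hconjk, ← hk, hj, ← Equiv.Perm.mul_apply, ← zpow_add]
        have hj' : -j + (j + j) = j := by ring
        rw [hj']
      exact H.loopless.irrefl _ (this ▸ h0a ((π ^ j) v))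
    · have : σ1 ((π ^ j) v) = (π ^ j) v := by
        rw [hσ1π]
        have hstep : π ((π ^ j) v) = (π ^ (j + 1)) v := by
          rw [← Equiv.Perm.mul_apply, ← zpow_one_add]
          have : 1 + j = j + 1 := by ring
          rw [this]
        rw [hstep, hconjk, ← hk, hj, ← Equiv.Perm.mul_apply, ← zpow_add]
        have hj' : -(j + 1) + (2 * j + 1) = j := by ring
        rw [hj']
      exact H.loopless.irrefl _ (this ▸ h1a ((π ^ j) v))
  have hcomp : ∀ (a b : ℤ) (x : V), (π ^ a) ((π ^ b) x) = (π ^ (a + b)) x := by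
    intro a b x
    rw [← Equiv.Perm.mul_apply, ← zpow_add]
  set r : V → V → Prop :=
    fun v w => (∃ k : ℤ, (π ^ k) v = w) ∨ (∃ k : ℤ, (π ^ k) (σ0 v) = w) with hr
  have hσ0w : ∀ (v w : V) (k : ℤ), (π ^ k) (σ0 v) = w → σ0 w = (π ^ (-k)) v := by
    intro v w k hkw
    rw [← hkw, hconjk, h0i]
  have hflip : ∀ (v w : V) (k : ℤ), (π ^ k) (σ0 v) = w → (π ^ k) (σ0 w) = v := by
    intro v w k hkw
    rw [hσ0w v w k hkw, hcomp, (by ring : k + -k = (0:ℤ))]; rfl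
  have hrrefl : ∀ v, r v v := fun v => Or.inl ⟨0, rfl⟩
  have hrsymm : ∀ v w, r v w → r w v := by
    rintro v w (⟨k, hk⟩ | ⟨k, hk⟩)
    · exact Or.inl ⟨-k, by rw [← hk, hcomp, (by ring : -k + k = (0:ℤ))]; rfl⟩
    · exact Or.inr ⟨k, hflip v w k hk⟩
  have hrtrans : ∀ u v w, r u v → r v w → r u w := by
    rintro u v w (⟨k, hk⟩ | ⟨k, hk⟩) (⟨a, ha⟩ | ⟨a, ha⟩)
    · exact Or.inl ⟨a + k, by rw [← hk, hcomp] at ha; exact ha⟩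
    · refine Or.inr ⟨a - k, ?_⟩
      have h2 : σ0 v = (π ^ (-k)) (σ0 u) := by
        rw [← hk, hconjk]
      rw [h2, hcomp, (by ring : a + -k = a - k)] at ha
      exact ha
    · exact Or.inr ⟨a + k, by rw [← hk, hcomp] at ha; exact ha⟩
    · refine Or.inl ⟨a - k, ?_⟩
      have h2 : σ0 v = (π ^ (-k)) u := hσ0w u v k hk
      rw [h2, hcomp, (by ring : a + -k = a - k)] at ha
      exact ha
  -- build the quotient and the coloring
  set s : Setoid V := ⟨r, hrrefl, fun {a b} h => hrsymm a b h,
    fun {a b c} h1 h2 => hrtrans a b c h1 h2⟩ with hs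
  set μ : V → V := fun v => (@Quotient.mk V s v).out with hμ
  have hμr : ∀ v, r (μ v) v := fun v => @Quotient.mk_out V s v
  have hμeq : ∀ u v, r u v → μ u = μ v := by
    intro u v huv
    simp only [hμ]
    congr 1
    exact Quotient.sound huv
  have hπinv : ∀ x, π⁻¹ x = σ1 (σ0 x) := by
    intro x
    rw [hπ, mul_inv_rev, he0inv]
    have he1inv : e1⁻¹ = e1 := by
      rw [eq_comm, eq_inv_iff_mul_eq_one]; ext y
      simp [he1, Equiv.Perm.mul_apply, h1i]
    rw [he1inv]; rfl
  have hfinal : ∀ (u v : V), H.Adj u v → ∀ d : ℤ, (π ^ d) u ≠ v := by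
    intro u v hadj d hd
    rcases hc u v hadj with hv | hv
    · exact knofix u d (hv ▸ hd)
    · apply knofix (π u) (d - 1)
      rw [← hσ1π u, ← hv, ← hd]
      have : π u = (π ^ (1:ℤ)) u := by rfl
      rw [this, hcomp, (by ring : d - 1 + 1 = d)]
  set c : V → Fin 2 := fun v => if (∃ k : ℤ, (π ^ k) (μ v) = v) then 0 else 1 with hcdef
  have hvalid : ∀ {u v : V}, H.Adj u v → c u ≠ c v := by
    intro u v hadj hcc
    have hruv : r u v := by
      rcases hc u v hadj with hv | hv
      · exact Or.inr ⟨0, hv.symm⟩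
      · refine Or.inr ⟨-1, ?_⟩
        rw [zpow_neg_one, hπinv, h0i, hv]
    have hm : μ u = μ v := hμeq u v hruv
    have hshift : ∀ (x : V) (a b : ℤ), (π ^ a) x = u → (π ^ b) x = v → False := by
      intro x a b pa pb
      apply hfinal u v hadj (b - a)
      rw [← pa, hcomp, (by ring : b - a + a = b), pb]
    by_cases hPu : ∃ k : ℤ, (π ^ k) (μ u) = u
    · by_cases hPv : ∃ k : ℤ, (π ^ k) (μ v) = v
      · obtain ⟨a, pa⟩ := hPu
        obtain ⟨b, pb⟩ := hPv
        rw [← hm] at pb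
        exact hshift (μ u) a b pa pb
      · rw [hcdef] at hcc
        simp only [if_pos hPu, if_neg hPv] at hcc
        exact absurd hcc (by decide)
    · by_cases hPv : ∃ k : ℤ, (π ^ k) (μ v) = v
      · rw [hcdef] at hcc
        simp only [if_neg hPu, if_pos hPv] at hcc
        exact absurd hcc (by decide)
      · have h1 := hμr u
        have h2 := hμr v
        rcases h1 with ⟨a, pa⟩ | ⟨a, pa⟩
        · exact hPu ⟨a, pa⟩
        rcases h2 with ⟨b, pb⟩ | ⟨b, pb⟩
        · exact hPv ⟨b, pb⟩
        rw [← hm] at pb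
        exact hshift (σ0 (μ u)) a b pa pb
  exact ⟨⟨c, hvalid⟩⟩


/-- pair extraction from ncard = 2 -/
lemma mem_pair_of_ncard_two {S : Set V} (h : S.ncard = 2) {a b : V} (ha : a ∈ S) (hb : b ∈ S)
    (hab : a ≠ b) : ∀ x ∈ S, x = a ∨ x = b := by
  obtain ⟨x, y, hxy, rfl⟩ := Set.ncard_eq_two.mp h
  intro z hz
  simp only [Set.mem_insert_iff, Set.mem_singleton_iff] at ha hb hz
  rcases ha with rfl | rfl <;> rcases hb with rfl | rfl <;> tauto

/-- In a 2-regular bipartite graph, there is a perfect matching on the color classes. -/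
lemma exists_matching_fun [Fintype V] (H : SimpleGraph V) (c : H.Coloring (Fin 2))
    (hreg : ∀ v, (H.neighborSet v).ncard = 2) :
    ∃ f : {v : V // c v = 0} → V, Function.Injective f ∧
      (∀ a, H.Adj a.val (f a)) ∧ (∀ v : V, c v = 1 → ∃ a, f a = v) := by
  classical
  have hdeg : ∀ v, H.degree v = 2 := by
    intro v
    rw [degree, neighborFinset_def, ← Set.ncard_eq_toFinset_card']
    exact hreg v
  have hc1 : ∀ {u w : V}, H.Adj u w → c u = 0 → c w = 1 := by
    intro u w h hu
    have := c.valid h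
    rw [hu] at this
    omega
  have hc0 : ∀ {u w : V}, H.Adj u w → c u = 1 → c w = 0 := by
    intro u w h hu
    have := c.valid h
    rw [hu] at this
    omega
  set A := {v : V // c v = 0} with hA
  set t : A → Finset V := fun a => H.neighborFinset a.val with ht
  -- Hall's condition by double counting
  have hall : ∀ s : Finset A, s.card ≤ (s.biUnion t).card := by
    intro s
    set N := s.biUnion t with hN
    set P : Finset (A × V) := (s ×ˢ N).filter (fun p => H.Adj p.1.val p.2) with hP
    have hfst : P.card = 2 * s.card := by
      rw [Finset.card_eq_sum_card_fiberwise (f := Prod.fst) (t := s)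
        (fun p hp => (Finset.mem_product.mp (Finset.mem_filter.mp hp).1).1)]
      rw [Finset.sum_congr rfl (g := fun _ => 2)]
      · rw [Finset.sum_const, smul_eq_mul, mul_comm]
      intro a ha
      have : P.filter (fun p => p.1 = a) = {a} ×ˢ (H.neighborFinset a.val) := by
        ext ⟨x, y⟩
        simp only [hP, Finset.mem_filter, Finset.mem_product, Finset.mem_singleton,
          mem_neighborFinset]
        constructor
        · rintro ⟨⟨⟨hx, hy⟩, hadj⟩, rfl⟩
          exact ⟨rfl, hadj⟩
        · rintro ⟨hxa, hadj⟩
          subst hxa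
          refine ⟨⟨⟨ha, ?_⟩, hadj⟩, rfl⟩
          rw [hN, Finset.mem_biUnion]
          exact ⟨x, ha, by rw [ht, mem_neighborFinset]; exact hadj⟩
      rw [this, Finset.card_product, Finset.card_singleton, one_mul, ← degree, hdeg]
    have hsnd : P.card ≤ 2 * N.card := by
      rw [Finset.card_eq_sum_card_fiberwise (f := Prod.snd) (t := N)
        (fun p hp => (Finset.mem_product.mp (Finset.mem_filter.mp hp).1).2)]
      have : ∀ b ∈ N, (P.filter (fun p => p.2 = b)).card ≤ 2 := by
        intro b _
        rw [← hdeg b, degree]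
        apply Finset.card_le_card_of_injOn (fun p => p.1.val)
        · intro p hp
          simp only [hP, Finset.mem_coe, Finset.mem_filter, Finset.mem_product] at hp
          rw [Finset.mem_coe, mem_neighborFinset]
          exact (hp.2 ▸ hp.1.2).symm
        · intro p hp q hq hpq
          simp only [Finset.coe_filter, Set.mem_setOf_eq] at hp hq
          ext
          · exact hpq
          · rw [hp.2, hq.2]
      calc ∑ b ∈ N, (P.filter (fun p => p.2 = b)).card ≤ ∑ _b ∈ N, 2 :=
            Finset.sum_le_sum this
        _ = 2 * N.card := by rw [Finset.sum_const, smul_eq_mul, mul_comm]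
    omega
  obtain ⟨f, hfinj, hfmem⟩ := (Finset.all_card_le_biUnion_card_iff_exists_injective t).mp hall
  have hfadj : ∀ a : A, H.Adj a.val (f a) := by
    intro a
    have := hfmem a
    rwa [ht, mem_neighborFinset] at this
  -- |A| = |B| by double counting edges
  have hcards : Fintype.card {v : V // c v = 0} = Fintype.card {v : V // c v = 1} := by
    set Au : Finset V := Finset.univ.filter (fun v => c v = 0) with hAu
    set Bu : Finset V := Finset.univ.filter (fun v => c v = 1) with hBu
    set Q : Finset (V × V) := (Au ×ˢ Bu).filter (fun p => H.Adj p.1 p.2) with hQ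
    have hQ1 : Q.card = 2 * Au.card := by
      rw [Finset.card_eq_sum_card_fiberwise (f := Prod.fst) (t := Au)
        (fun p hp => (Finset.mem_product.mp (Finset.mem_filter.mp hp).1).1)]
      rw [Finset.sum_congr rfl (g := fun _ => 2)]
      · rw [Finset.sum_const, smul_eq_mul, mul_comm]
      intro a ha
      have hac : c a = 0 := by
        rw [hAu, Finset.mem_filter] at ha; exact ha.2
      have : Q.filter (fun p => p.1 = a) = {a} ×ˢ (H.neighborFinset a) := by
        ext ⟨x, y⟩
        simp only [hQ, Finset.mem_filter, Finset.mem_product, Finset.mem_singleton,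
          mem_neighborFinset]
        constructor
        · rintro ⟨⟨⟨_, _⟩, hadj⟩, rfl⟩
          exact ⟨rfl, hadj⟩
        · rintro ⟨hxa, hadj⟩
          subst hxa
          refine ⟨⟨⟨ha, ?_⟩, hadj⟩, rfl⟩
          rw [hBu, Finset.mem_filter]
          exact ⟨Finset.mem_univ _, hc1 hadj hac⟩
      rw [this, Finset.card_product, Finset.card_singleton, one_mul, ← degree, hdeg]
    have hQ2 : Q.card = 2 * Bu.card := by
      rw [Finset.card_eq_sum_card_fiberwise (f := Prod.snd) (t := Bu)
        (fun p hp => (Finset.mem_product.mp (Finset.mem_filter.mp hp).1).2)]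
      rw [Finset.sum_congr rfl (g := fun _ => 2)]
      · rw [Finset.sum_const, smul_eq_mul, mul_comm]
      intro b hb
      have hbc : c b = 1 := by
        rw [hBu, Finset.mem_filter] at hb; exact hb.2
      have : Q.filter (fun p => p.2 = b) = (H.neighborFinset b).map
          ⟨fun w => (w, b), fun w w' h => (Prod.mk.injEq _ _ _ _ ▸ h).1⟩ := by
        ext ⟨x, y⟩
        simp only [hQ, Finset.mem_filter, Finset.mem_product, Finset.mem_map,
          mem_neighborFinset, Function.Embedding.coeFn_mk, Prod.mk.injEq]
        constructor
        · rintro ⟨⟨⟨hx, hy⟩, hadj⟩, rfl⟩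
          exact ⟨x, hadj.symm, rfl⟩
        · rintro ⟨w, hadj, rfl, rfl⟩
          refine ⟨⟨⟨?_, ?_⟩, hadj.symm⟩, rfl⟩
          · rw [hAu, Finset.mem_filter]
            exact ⟨Finset.mem_univ _, hc0 hadj hbc⟩
          · rw [hBu, Finset.mem_filter]
            exact ⟨Finset.mem_univ _, hbc⟩
      rw [this, Finset.card_map, ← degree, hdeg]
    have h1 : Fintype.card {v : V // c v = 0} = Au.card := by
      rw [Fintype.card_subtype, ← hAu]
    have h2 : Fintype.card {v : V // c v = 1} = Bu.card := by
      rw [Fintype.card_subtype, ← hBu]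
    omega
  refine ⟨f, hfinj, hfadj, ?_⟩
  -- surjectivity onto color class 1
  set g : {v : V // c v = 0} → {v : V // c v = 1} := fun a => ⟨f a, hc1 (hfadj a) a.2⟩ with hg
  have hginj : Function.Injective g := by
    intro a b hab
    apply hfinj
    exact congrArg Subtype.val hab
  have hgsurj : Function.Surjective g :=
    ((Fintype.bijective_iff_injective_and_card g).mpr ⟨hginj, hcards⟩).2
  intro v hv
  obtain ⟨a, ha⟩ := hgsurj ⟨v, hv⟩
  exact ⟨a, congrArg Subtype.val ha⟩


lemma edgeSet_ncard_of_two_regular [Fintype V] (H : SimpleGraph V)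
    (hreg : ∀ v, (H.neighborSet v).ncard = 2) : H.edgeSet.ncard = Fintype.card V := by
  classical
  have hdeg : ∀ v, H.degree v = 2 := by
    intro v
    rw [degree, neighborFinset_def, ← Set.ncard_eq_toFinset_card']
    exact hreg v
  have hhs := H.sum_degrees_eq_twice_card_edges
  rw [Finset.sum_congr rfl (fun v _ => hdeg v), Finset.sum_const, smul_eq_mul, mul_comm,
    Finset.card_univ] at hhs
  have h2 : H.edgeFinset.card = H.edgeSet.ncard := (Set.ncard_eq_toFinset_card' _).symm
  omega

lemma forward [Fintype V] (G : SimpleGraph V) (h : HasEvenCycleFactor G) :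
    ∃ S : Set G.edgeSet, IsOCT G.lineGraph S ∧
      (S.ncard : ℤ) = (G.edgeSet.ncard : ℤ) - (Fintype.card V : ℤ) := by
  classical
  obtain ⟨H, hle, hreg, ⟨c⟩⟩ := h
  have hc1 : ∀ {u w : V}, H.Adj u w → c u = 0 → c w = 1 := by
    intro u w h hu
    have := c.valid h
    rw [hu] at this
    omega
  obtain ⟨f, hfinj, hfadj, hfsurj⟩ := exists_matching_fun H c hreg
  set M0 : Set (Sym2 V) := {e | ∃ a : {v : V // c v = 0}, e = s(a.val, f a)} with hM0
  set S : Set G.edgeSet := {e | (e : Sym2 V) ∉ H.edgeSet} with hS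
  have hmemSc : ∀ e : G.edgeSet, e ∈ Sᶜ ↔ (e : Sym2 V) ∈ H.edgeSet := by
    intro e
    simp [hS]
  -- membership characterizations
  have hchar0 : ∀ (u w : V) (hu : c u = 0), H.Adj u w →
      (s(u, w) ∈ M0 ↔ w = f ⟨u, hu⟩) := by
    intro u w hu hadj
    constructor
    · rintro ⟨a, ha⟩
      rw [Sym2.eq_iff] at ha
      rcases ha with ⟨h1, h2⟩ | ⟨h1, h2⟩
      · have : a = ⟨u, hu⟩ := Subtype.ext h1.symm
        rw [h2, this]
      · exfalso
        have := hc1 (hfadj a) a.2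
        rw [← h1, hu] at this
        exact absurd this (by decide)
    · rintro rfl
      exact ⟨⟨u, hu⟩, rfl⟩
  have hchar1 : ∀ (u w : V), c u = 1 → H.Adj u w →
      (s(u, w) ∈ M0 ↔ ∃ a, u = f a ∧ a.val = w) := by
    intro u w hu hadj
    constructor
    · rintro ⟨a, ha⟩
      rw [Sym2.eq_iff] at ha
      rcases ha with ⟨h1, h2⟩ | ⟨h1, h2⟩
      · exfalso
        have : c u = 0 := h1 ▸ a.2
        rw [hu] at this
        exact absurd this (by decide)
      · exact ⟨a, h1, h2.symm⟩
    · rintro ⟨a, rfl, rfl⟩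
      exact ⟨a, Sym2.eq_swap⟩
  refine ⟨S, ?_, ?_⟩
  · -- the OCT property
    refine ⟨⟨fun x => if (x.val : Sym2 V) ∈ M0 then (0 : Fin 2) else 1, ?_⟩⟩
    intro x y hadj hcc
    have hadj' : G.lineGraph.Adj x.val y.val := hadj
    obtain ⟨hne, v, hv1, hv2⟩ := lineGraph_adj_iff_exists.mp hadj'
    set w1 := Sym2.Mem.other hv1 with hw1
    set w2 := Sym2.Mem.other hv2 with hw2
    have he1 : s(v, w1) = (x.val : Sym2 V) := Sym2.other_spec hv1
    have he2 : s(v, w2) = (y.val : Sym2 V) := Sym2.other_spec hv2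
    have hmem1 : (x.val : Sym2 V) ∈ H.edgeSet := (hmemSc _).mp x.2
    have hmem2 : (y.val : Sym2 V) ∈ H.edgeSet := (hmemSc _).mp y.2
    have hadj1 : H.Adj v w1 := by rw [← mem_edgeSet, he1]; exact hmem1
    have hadj2 : H.Adj v w2 := by rw [← mem_edgeSet, he2]; exact hmem2
    have hw12 : w1 ≠ w2 := by
      intro hw
      apply hne
      apply Subtype.ext
      rw [← he1, ← he2, hw]
    have hN1 : w1 ∈ H.neighborSet v := hadj1
    have hN2 : w2 ∈ H.neighborSet v := hadj2
    have hpair := mem_pair_of_ncard_two (hreg v) hN1 hN2 hw12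
    -- colors of x and y must differ
    have honeM0 : ((x.val : Sym2 V) ∈ M0 ∧ (y.val : Sym2 V) ∉ M0) ∨
        ((x.val : Sym2 V) ∉ M0 ∧ (y.val : Sym2 V) ∈ M0) := by
      have hx0 : (x.val : Sym2 V) = s(v, w1) := he1.symm
      have hy0 : (y.val : Sym2 V) = s(v, w2) := he2.symm
      rcases (by omega : c v = 0 ∨ c v = 1) with hv | hv
      · have hcx := hchar0 v w1 hv hadj1
        have hcy := hchar0 v w2 hv hadj2
        have hfN : f ⟨v, hv⟩ ∈ H.neighborSet v := hfadj ⟨v, hv⟩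
        rcases hpair _ hfN with hfw | hfw
        · left
          rw [hx0, hy0, hcx, hcy]
          exact ⟨hfw.symm, fun h => hw12 (hfw ▸ h ▸ rfl)⟩
        · right
          rw [hx0, hy0, hcx, hcy]
          exact ⟨fun h => hw12 (hfw ▸ h ▸ rfl), hfw.symm⟩
      · have hcx := hchar1 v w1 hv hadj1
        have hcy := hchar1 v w2 hv hadj2
        obtain ⟨a, hfa⟩ := hfsurj v hv
        have haN : a.val ∈ H.neighborSet v := (hfa ▸ hfadj a).symm
        have hnotboth : ¬ ((∃ a, v = f a ∧ a.val = w1) ∧ (∃ a, v = f a ∧ a.val = w2)) := by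
          rintro ⟨⟨a1, hva1, ha1⟩, ⟨a2, hva2, ha2⟩⟩
          have : a1 = a2 := hfinj (hva1 ▸ hva2)
          exact hw12 (ha1 ▸ ha2 ▸ this ▸ rfl)
        rcases hpair _ haN with haw | haw
        · left
          rw [hx0, hy0, hcx, hcy]
          have h1 : ∃ b, v = f b ∧ b.val = w1 := ⟨a, hfa.symm, haw⟩
          exact ⟨h1, fun h2 => hnotboth ⟨h1, h2⟩⟩
        · right
          rw [hx0, hy0, hcx, hcy]
          have h2 : ∃ b, v = f b ∧ b.val = w2 := ⟨a, hfa.symm, haw⟩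
          exact ⟨fun h1 => hnotboth ⟨h1, h2⟩, h2⟩
    rcases honeM0 with ⟨h1, h2⟩ | ⟨h1, h2⟩
    · simp only [if_pos h1, if_neg h2] at hcc
      exact absurd hcc (by decide)
    · simp only [if_neg h1, if_pos h2] at hcc
      exact absurd hcc (by decide)
  · -- cardinality
    have hn : H.edgeSet.ncard = Fintype.card V := edgeSet_ncard_of_two_regular H hreg
    have hsub : H.edgeSet ⊆ G.edgeSet := edgeSet_mono hle
    have himg : Subtype.val '' (Sᶜ) = H.edgeSet := by
      ext q
      constructor
      · rintro ⟨e, he, rfl⟩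
        exact (hmemSc e).mp he
      · intro hq
        exact ⟨⟨q, hsub hq⟩, (hmemSc ⟨q, hsub hq⟩).mpr hq, rfl⟩
    have h1 : (Sᶜ).ncard = H.edgeSet.ncard := by
      rw [← himg, Set.ncard_image_of_injective _ Subtype.val_injective]
    have h2 : S.ncard + (Sᶜ).ncard = G.edgeSet.ncard := by
      rw [Set.ncard_add_ncard_compl, Nat.card_coe_set_eq]
    have hm : S.ncard + Fintype.card V = G.edgeSet.ncard := by omega
    omega


lemma backward [Fintype V] (G : SimpleGraph V) (S : Set G.edgeSet)
    (hoct : IsOCT G.lineGraph S)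
    (hcard : (S.ncard : ℤ) ≤ (G.edgeSet.ncard : ℤ) - (Fintype.card V : ℤ)) :
    HasEvenCycleFactor G := by
  classical
  obtain ⟨χ⟩ := hoct
  set F' : Set (Sym2 V) := Subtype.val '' (Sᶜ) with hF'
  have hF'sub : F' ⊆ G.edgeSet := by
    rintro q ⟨e, _, rfl⟩
    exact e.2
  set Hrel : V → V → Prop := fun u v => u ≠ v ∧ s(u,v) ∈ F' with hHrel
  have hHsymm : Symmetric Hrel := by
    rintro u v ⟨h1, h2⟩
    exact ⟨h1.symm, Sym2.eq_swap ▸ h2⟩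
  set H : SimpleGraph V := ⟨Hrel, ⟨fun a b h => hHsymm h⟩, ⟨fun v h => h.1 rfl⟩⟩ with hH
  have hle : H ≤ G := by
    rintro u v ⟨h1, h2⟩
    exact (G.mem_edgeSet).mp (hF'sub h2)
  have hadjmem : ∀ {u w : V}, H.Adj u w → s(u,w) ∈ F' := fun h => h.2
  have hmemF : ∀ (q : Sym2 V) (hq : q ∈ F'), (⟨q, hF'sub hq⟩ : G.edgeSet) ∈ Sᶜ := by
    rintro q ⟨e, he, rfl⟩
    exact (Subtype.coe_eta e _).symm ▸ he
  set ℓ : (q : Sym2 V) → q ∈ F' → Fin 2 :=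
    fun q hq => χ ⟨⟨q, hF'sub hq⟩, hmemF q hq⟩ with hℓ
  have hℓcongr : ∀ (q q' : Sym2 V) (h : q ∈ F') (h' : q' ∈ F'), q = q' → ℓ q h = ℓ q' h' := by
    rintro q q' h h' rfl
    rfl
  have hℓne : ∀ (q1 q2 : Sym2 V) (h1 : q1 ∈ F') (h2 : q2 ∈ F'), q1 ≠ q2 →
      ∀ v, v ∈ q1 → v ∈ q2 → ℓ q1 h1 ≠ ℓ q2 h2 := by
    intro q1 q2 h1 h2 hne v hv1 hv2
    apply χ.valid
    show G.lineGraph.Adj _ _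
    exact lineGraph_adj_iff_exists.mpr
      ⟨fun h => hne (congrArg Subtype.val h), v, hv1, hv2⟩
  -- distinct edges at a common vertex
  have hedgne : ∀ (v w w' : V), H.Adj v w → H.Adj v w' → w ≠ w' → s(v,w) ≠ s(v,w') := by
    intro v w w' h h' hne heq
    rw [Sym2.eq_iff] at heq
    rcases heq with ⟨_, h2⟩ | ⟨h1, _⟩
    · exact hne h2
    · exact h'.1 h1
  have hℓnbr : ∀ (v w w' : V) (h : H.Adj v w) (h' : H.Adj v w'), w ≠ w' →
      ℓ s(v,w) h.2 ≠ ℓ s(v,w') h'.2 := by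
    intro v w w' h h' hne
    exact hℓne s(v,w) s(v,w') h.2 h'.2 (hedgne v w w' h h' hne) v
      (Sym2.mem_mk_left v w) (Sym2.mem_mk_left v w')
  -- degrees are at most 2
  have hdegle : ∀ v, H.degree v ≤ 2 := by
    intro v
    have : H.degree v ≤ (Finset.univ : Finset (Fin 2)).card := by
      apply Finset.card_le_card_of_injOn
        (fun w => if hq : s(v,w) ∈ F' then ℓ s(v,w) hq else 0)
      · exact fun _ _ => Finset.mem_univ _
      · intro w hw w' hw' heq
        simp only [Finset.mem_coe, mem_neighborFinset] at hw hw'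
        simp only [dif_pos (hadjmem hw), dif_pos (hadjmem hw')] at heq
        by_contra hne
        exact hℓnbr v w w' hw hw' hne heq
    simpa using this
  -- the edge set of H is F'
  have hedge : H.edgeSet = F' := by
    ext q
    refine q.ind (fun a b => ?_)
    rw [mem_edgeSet]
    constructor
    · exact fun h => h.2
    · intro h
      exact ⟨G.ne_of_adj ((G.mem_edgeSet).mp (hF'sub h)), h⟩
  -- counting: all degrees are equal to 2
  have hSsum : S.ncard + (Sᶜ).ncard = G.edgeSet.ncard := by
    rw [Set.ncard_add_ncard_compl, Nat.card_coe_set_eq]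
  have hF'card : F'.ncard = (Sᶜ).ncard := Set.ncard_image_of_injective _ Subtype.val_injective
  have hnle : Fintype.card V ≤ F'.ncard := by omega
  have hefc : H.edgeFinset.card = F'.ncard := by
    rw [← Set.ncard_coe_finset, coe_edgeFinset, hedge]
  have hhs := H.sum_degrees_eq_twice_card_edges
  have hsumle : ∑ v, H.degree v ≤ 2 * Fintype.card V := by
    calc ∑ v, H.degree v ≤ ∑ _v : V, 2 := Finset.sum_le_sum (fun v _ => hdegle v)
      _ = 2 * Fintype.card V := by rw [Finset.sum_const, smul_eq_mul, mul_comm, Finset.card_univ]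
  have hdeg2 : ∀ v, H.degree v = 2 := by
    by_contra hcon
    push_neg at hcon
    obtain ⟨v0, hv0⟩ := hcon
    have hlt : ∑ v, H.degree v < ∑ _v : V, 2 := by
      apply Finset.sum_lt_sum (fun v _ => hdegle v)
      exact ⟨v0, Finset.mem_univ _, lt_of_le_of_ne (hdegle v0) hv0⟩
    rw [Finset.sum_const, smul_eq_mul, mul_comm, Finset.card_univ] at hlt
    omega
  have hreg : ∀ v, (H.neighborSet v).ncard = 2 := by
    intro v
    rw [Set.ncard_eq_toFinset_card', ← neighborFinset_def, ← degree]
    exact hdeg2 v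
  -- existence and uniqueness of an i-labelled edge at each vertex
  have hcover : ∀ (a b i : Fin 2), a ≠ b → i = a ∨ i = b := by decide
  have hex : ∀ (v : V) (i : Fin 2), ∃ w, ∃ h : H.Adj v w, ℓ s(v,w) h.2 = i := by
    intro v i
    obtain ⟨w1, w2, hne, hpair⟩ := Finset.card_eq_two.mp (hdeg2 v)
    have hadj1 : H.Adj v w1 := by
      rw [← mem_neighborFinset, hpair]
      simp
    have hadj2 : H.Adj v w2 := by
      rw [← mem_neighborFinset, hpair]
      simp
    rcases hcover (ℓ s(v,w1) hadj1.2) (ℓ s(v,w2) hadj2.2) i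
        (hℓnbr v w1 w2 hadj1 hadj2 hne) with hi | hi
    · exact ⟨w1, hadj1, hi.symm⟩
    · exact ⟨w2, hadj2, hi.symm⟩
  have huniq : ∀ (v w w' : V) (h : H.Adj v w) (h' : H.Adj v w'),
      ℓ s(v,w) h.2 = ℓ s(v,w') h'.2 → w = w' := by
    intro v w w' h h' heq
    by_contra hne
    exact hℓnbr v w w' h h' hne heq
  -- the two partner functions
  set σ0 : V → V := fun v => (hex v 0).choose with hσ0
  set σ1 : V → V := fun v => (hex v 1).choose with hσ1
  have hs0 : ∀ v, ∃ h : H.Adj v (σ0 v), ℓ s(v, σ0 v) h.2 = 0 := fun v => (hex v 0).choose_spec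
  have hs1 : ∀ v, ∃ h : H.Adj v (σ1 v), ℓ s(v, σ1 v) h.2 = 1 := fun v => (hex v 1).choose_spec
  have h0a : ∀ v, H.Adj v (σ0 v) := fun v => (hs0 v).choose
  have h1a : ∀ v, H.Adj v (σ1 v) := fun v => (hs1 v).choose
  have hsymℓ : ∀ (u w : V) (h : H.Adj u w), ℓ s(w,u) h.symm.2 = ℓ s(u,w) h.2 :=
    fun u w h => hℓcongr s(w,u) s(u,w) h.symm.2 h.2 Sym2.eq_swap
  have h0i : ∀ v, σ0 (σ0 v) = v := by
    intro v
    obtain ⟨h, hl⟩ := hs0 v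
    obtain ⟨h', hl'⟩ := hs0 (σ0 v)
    apply huniq (σ0 v) _ _ h' h.symm
    rw [hl', hsymℓ v (σ0 v) h, hl]
  have h1i : ∀ v, σ1 (σ1 v) = v := by
    intro v
    obtain ⟨h, hl⟩ := hs1 v
    obtain ⟨h', hl'⟩ := hs1 (σ1 v)
    apply huniq (σ1 v) _ _ h' h.symm
    rw [hl', hsymℓ v (σ1 v) h, hl]
  have hc : ∀ u v, H.Adj u v → v = σ0 u ∨ v = σ1 u := by
    intro u v h
    rcases hcover 0 1 (ℓ s(u,v) h.2) (by decide) with hi | hi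
    · left
      obtain ⟨h', hl'⟩ := hs0 u
      exact huniq u v (σ0 u) h h' (hi.symm ▸ hl'.symm ▸ rfl)
    · right
      obtain ⟨h', hl'⟩ := hs1 u
      exact huniq u v (σ1 u) h h' (hi.symm ▸ hl'.symm ▸ rfl)
  exact ⟨H, hle, hreg, key_bipartite H σ0 σ1 h0a h1a h0i h1i hc⟩

/-- If `G` has an even cycle factor then `L(G)` has an odd cycle transversal of size
exactly `m - n`; hence `G` has an even cycle factor iff `L(G)` has an odd cycle transversal of
size at most `m - n`. -/
theorem even_cycle_factor_iff_line_graph_oct {V : Type*} [Fintype V] (G : SimpleGraph V) :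
    (HasEvenCycleFactor G →
      ∃ S : Set G.edgeSet, IsOCT G.lineGraph S ∧
        (S.ncard : ℤ) = (G.edgeSet.ncard : ℤ) - (Fintype.card V : ℤ)) ∧
    (HasEvenCycleFactor G ↔
      ∃ S : Set G.edgeSet, IsOCT G.lineGraph S ∧
        (S.ncard : ℤ) ≤ (G.edgeSet.ncard : ℤ) - (Fintype.card V : ℤ)) := by
  refine ⟨forward G, ?_, ?_⟩
  · intro h
    obtain ⟨S, hoct, hcd⟩ := forward G h
    exact ⟨S, hoct, le_of_eq hcd⟩
  · rintro ⟨S, hoct, hcd⟩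
    exact backward G S hoct hcd
end Paper
end

section
/- If an odd cycle transversal S of a graph G is minimal (no proper subset of S is an odd cycle transversal) and one of the endpoints u, v of a twice-subdivided edge lies in a minimal odd cycle transversal S' of the subdivided graph G', then neither of the two new subdivision vertices lies in S'. -/
open SimpleGraph

namespace Paper

variable {V : Type*}

/-- The graph obtained from `G` by subdividing the edge `uv` twice: the edge `uv` is removed and
replaced by the path `u - a - b - v` through two new vertices `a = Sum.inr 0`, `b = Sum.inr 1`. -/
def subdivideTwice (G : SimpleGraph V) (u v : V) : SimpleGraph (V ⊕ Fin 2) :=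
  SimpleGraph.fromRel fun x y =>
    (∃ a b : V, x = Sum.inl a ∧ y = Sum.inl b ∧ G.Adj a b ∧ s(a, b) ≠ s(u, v)) ∨
    (x = Sum.inl u ∧ y = Sum.inr 0) ∨
    (x = Sum.inr 0 ∧ y = Sum.inr 1) ∨
    (x = Sum.inr 1 ∧ y = Sum.inl v)

lemma oct_anti {G : SimpleGraph V} {S T : Set V} (h : S ⊆ T) (hS : IsOCT G S) : IsOCT G T := by
  obtain ⟨c⟩ := hS
  exact ⟨SimpleGraph.Coloring.mk (fun x => c ⟨x.1, fun hx => x.2 (h hx)⟩)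
    (fun {x y} hadj hc => c.valid (by exact hadj) hc)⟩

lemma adj_a {G : SimpleGraph V} {u v : V} {x : V ⊕ Fin 2}
    (h : (subdivideTwice G u v).Adj (Sum.inr 0) x) : x = Sum.inl u ∨ x = Sum.inr 1 := by
  simp only [subdivideTwice, fromRel_adj] at h
  obtain ⟨hne, h | h⟩ := h <;>
    rcases h with (⟨a, b, h1, h2, h3, h4⟩ | ⟨h1, h2⟩ | ⟨h1, h2⟩ | ⟨h1, h2⟩) <;> simp_all

lemma adj_b {G : SimpleGraph V} {u v : V} {x : V ⊕ Fin 2}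
    (h : (subdivideTwice G u v).Adj (Sum.inr 1) x) : x = Sum.inl v ∨ x = Sum.inr 0 := by
  simp only [subdivideTwice, fromRel_adj] at h
  obtain ⟨hne, h | h⟩ := h <;>
    rcases h with (⟨a, b, h1, h2, h3, h4⟩ | ⟨h1, h2⟩ | ⟨h1, h2⟩ | ⟨h1, h2⟩) <;> simp_all

/-- If `S` is a minimal odd cycle transversal of `G` and one of `u, v` lies in a
minimal odd cycle transversal `S'` of the twice-subdivided graph `G'`, then neither new
subdivision vertex lies in `S'`. -/
theorem min_oct_subdivide_twice_avoids_new_vertices {V : Type*} (G : SimpleGraph V) (u v : V)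
    (huv : G.Adj u v) (S : Set V) (hS : IsMinOCT G S)
    (S' : Set (V ⊕ Fin 2)) (hS' : IsMinOCT (subdivideTwice G u v) S')
    (hends : Sum.inl u ∈ S' ∨ Sum.inl v ∈ S') :
    Sum.inr 0 ∉ S' ∧ Sum.inr 1 ∉ S' := by
  classical
  obtain ⟨hOCT, hmin⟩ := hS'
  obtain ⟨c⟩ := hOCT
  set G' := subdivideTwice G u v with hG'
  let f : V ⊕ Fin 2 → Fin 2 := fun x =>
    if h : x ∈ (S'ᶜ : Set (V ⊕ Fin 2)) then c ⟨x, h⟩ else 0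
  let A : Fin 2 := if Sum.inl u ∈ S' then f (Sum.inl v) else f (Sum.inl u) + 1
  let B : Fin 2 := if Sum.inl u ∈ S' then f (Sum.inl v) + 1 else f (Sum.inl u)
  have hAB : A ≠ B := by
    simp only [A, B]; split <;> simp [Fin.ext_iff] <;> omega
  let g : V ⊕ Fin 2 → Fin 2 := fun x =>
    if x = Sum.inr 0 then A else if x = Sum.inr 1 then B else f x
  have hgother : ∀ x, x ≠ Sum.inr 0 → x ≠ Sum.inr 1 → g x = f x := by
    intro x h0 h1; simp [g, h0, h1]
  -- membership in the complement of S' \ {a,b} for "other" vertices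
  have hmem : ∀ x : V ⊕ Fin 2, x ∈ ((S' \ {Sum.inr 0, Sum.inr 1})ᶜ : Set (V ⊕ Fin 2)) →
      x ≠ Sum.inr 0 → x ≠ Sum.inr 1 → x ∈ (S'ᶜ : Set (V ⊕ Fin 2)) := by
    intro x hx h0 h1 hxS
    exact hx ⟨hxS, by simp [h0, h1]⟩
  have hfval : ∀ (x : V ⊕ Fin 2) (hx : x ∈ (S'ᶜ : Set (V ⊕ Fin 2))), f x = c ⟨x, hx⟩ := by
    intro x hx; exact dif_pos hx
  have key : ∀ x y : V ⊕ Fin 2, x ∈ ((S' \ {Sum.inr 0, Sum.inr 1})ᶜ : Set (V ⊕ Fin 2)) →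
      y ∈ ((S' \ {Sum.inr 0, Sum.inr 1})ᶜ : Set (V ⊕ Fin 2)) →
      G'.Adj x y → g x ≠ g y := by
    have main : ∀ x y : V ⊕ Fin 2, x ∈ ((S' \ {Sum.inr 0, Sum.inr 1})ᶜ : Set (V ⊕ Fin 2)) →
        y ∈ ((S' \ {Sum.inr 0, Sum.inr 1})ᶜ : Set (V ⊕ Fin 2)) →
        G'.Adj x y → x = Sum.inr 0 ∨ x = Sum.inr 1 → g x ≠ g y := by
      rintro x y hx hy hadj (rfl | rfl)
      · rcases adj_a hadj with rfl | rfl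
        · -- y = Sum.inl u : u must be outside S'
          have huS : Sum.inl u ∉ S' := by
            intro h
            exact absurd (hmem _ hy (by simp) (by simp) ) (by simp [h])
          have : g (Sum.inl u) = f (Sum.inl u) := hgother _ (by simp) (by simp)
          rw [this]
          have : g (Sum.inr 0) = A := by simp [g]
          rw [this]
          simp only [A, if_neg huS]
          simp [Fin.ext_iff]
        · -- y = b
          have h1 : g (Sum.inr 0) = A := by simp [g]
          have h2 : g (Sum.inr 1) = B := by simp [g, Fin.ext_iff]
          rw [h1, h2]; exact hAB
      · rcases adj_b hadj with rfl | rfl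
        · -- y = Sum.inl v
          have hvS : Sum.inl v ∉ S' := by
            intro h
            exact absurd (hmem _ hy (by simp) (by simp)) (by simp [h])
          have huS : Sum.inl u ∈ S' := by
            rcases hends with h | h
            · exact h
            · exact absurd h hvS
          have h1 : g (Sum.inl v) = f (Sum.inl v) := hgother _ (by simp) (by simp)
          have h2 : g (Sum.inr 1) = B := by simp [g, Fin.ext_iff]
          rw [h1, h2]
          simp only [B, if_pos huS]
          simp [Fin.ext_iff]
        · -- y = a
          have h1 : g (Sum.inr 0) = A := by simp [g]
          have h2 : g (Sum.inr 1) = B := by simp [g, Fin.ext_iff]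
          rw [h1, h2]; exact hAB.symm
    intro x y hx hy hadj
    by_cases hx0 : x = Sum.inr 0
    · exact main x y hx hy hadj (Or.inl hx0)
    by_cases hx1 : x = Sum.inr 1
    · exact main x y hx hy hadj (Or.inr hx1)
    by_cases hy0 : y = Sum.inr 0
    · exact (main y x hy hx hadj.symm (Or.inl hy0)).symm
    by_cases hy1 : y = Sum.inr 1
    · exact (main y x hy hx hadj.symm (Or.inr hy1)).symm
    -- both ordinary vertices
    have hxS := hmem x hx hx0 hx1
    have hyS := hmem y hy hy0 hy1
    rw [hgother x hx0 hx1, hgother y hy0 hy1, hfval x hxS, hfval y hyS]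
    exact c.valid (by exact hadj)
  have hW : IsOCT G' (S' \ {Sum.inr 0, Sum.inr 1}) := by
    exact ⟨SimpleGraph.Coloring.mk (fun x => g x.1)
      (fun {x y} hadj => key x.1 y.1 x.2 y.2 (by exact hadj))⟩
  constructor
  · intro ha
    refine hmin (S' \ {Sum.inr 0}) ⟨Set.diff_subset, fun hsub => ?_⟩ ?_
    · exact ((hsub ha).2 rfl)
    · refine oct_anti ?_ hW
      intro x hx
      exact ⟨hx.1, fun h => hx.2 (Or.inl h)⟩
  · intro hb
    refine hmin (S' \ {Sum.inr 1}) ⟨Set.diff_subset, fun hsub => ?_⟩ ?_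
    · exact ((hsub hb).2 rfl)
    · refine oct_anti ?_ hW
      intro x hx
      exact ⟨hx.1, fun h => hx.2 (Or.inr h)⟩
end Paper
end

section
/- For every s ≥ 1, the number of maximal independent sets of an sP_2-free graph on n vertices is at most n^{2s} + 1. -/
open SimpleGraph

namespace Paper

variable {V : Type*}

/-! ### Auxiliary material for the Balas–Yu bound -/

section BalasYuProof

/-- The removed zone of a pair `p = (u, x)`: the union of closed neighbourhoods of `u` and `x`. -/
def BYRset (G : SimpleGraph V) (p : V × V) : Set V :=
  {y | y = p.1 ∨ G.Adj p.1 y ∨ y = p.2 ∨ G.Adj p.2 y}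

/-- The forced part of a maximal independent set inside the removed zone. -/
def BYZset (G : SimpleGraph V) (W : Set V) (p : V × V) (T : Set V) : Set V :=
  {z | z ∈ W ∧ G.Adj p.2 z ∧ ¬ G.Adj p.1 z ∧ z ≠ p.1 ∧ z ∉ T ∧ ∀ t ∈ T, ¬ G.Adj t z}

/-- Decoding function: reconstructs a maximal independent set from `p` and its trace `T`. -/
def BYdecode (G : SimpleGraph V) (W : Set V) (p : V × V) (T : Set V) : Set V :=
  insert p.1 (T ∪ BYZset G W p T)

/-- `W` contains no induced matching with `k` edges. -/
def BYNoMatchIn (G : SimpleGraph V) (k : ℕ) (W : Set V) : Prop :=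
  ¬ ∃ f : Fin k → V × V,
      (∀ i, (f i).1 ∈ W ∧ (f i).2 ∈ W ∧ G.Adj (f i).1 (f i).2) ∧
      (∀ i j, i ≠ j → ∀ a b, (a = (f i).1 ∨ a = (f i).2) → (b = (f j).1 ∨ b = (f j).2) →
        a ≠ b ∧ ¬ G.Adj a b)

lemma BY_fin2cases : ∀ (i j : Fin 2), i ≠ j → (i = 0 ∧ j = 1) ∨ (i = 1 ∧ j = 0) := by
  decide

/-- An `sP₂`-free graph has no induced matching of size `s` in any vertex subset. -/
lemma BY_noMatchIn_of_free {s : ℕ} (G : SimpleGraph V) (hfree : sP2Free s G) (W : Set V) :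
    BYNoMatchIn G s W := by
  classical
  rintro ⟨f, hf, hcross⟩
  apply hfree
  set g : Fin s × Fin 2 → V := fun p => if p.2 = 0 then (f p.1).1 else (f p.1).2 with hg
  have hmem : ∀ p : Fin s × Fin 2, g p = (f p.1).1 ∨ g p = (f p.1).2 := by
    intro p; by_cases h : p.2 = 0 <;> simp [hg, h]
  have hginj : Function.Injective g := by
    intro p q hpq
    by_cases h1 : p.1 = q.1
    · by_cases h2 : p.2 = q.2
      · exact Prod.ext h1 h2
      · exfalso
        have hadj := (hf p.1).2.2
        rcases BY_fin2cases p.2 q.2 h2 with ⟨hp0, hq1⟩ | ⟨hp1, hq0⟩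
        · have e1 : g p = (f p.1).1 := by simp [hg, hp0]
          have e2 : g q = (f p.1).2 := by
            rw [hg]; simp only [hq1, ← h1]; rw [if_neg (by decide)]
          rw [e1, e2] at hpq; exact hadj.ne hpq
        · have e1 : g p = (f p.1).2 := by
            rw [hg]; simp only [hp1]; rw [if_neg (by decide)]
          have e2 : g q = (f p.1).1 := by simp [hg, hq0, ← h1]
          rw [e1, e2] at hpq; exact hadj.ne hpq.symm
    · exact absurd hpq (hcross p.1 q.1 h1 (g p) (g q) (hmem p) (hmem q)).1
  have key : ∀ p q : Fin s × Fin 2, G.Adj (g p) (g q) ↔ (sP2 s).Adj p q := by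
    intro p q
    constructor
    · intro hadj
      by_cases h1 : p.1 = q.1
      · refine (⟨h1, ?_⟩ : p.1 = q.1 ∧ p.2 ≠ q.2)
        intro h2
        have hpq : p = q := Prod.ext h1 h2
        rw [hpq] at hadj; exact hadj.ne rfl
      · exact absurd hadj (hcross p.1 q.1 h1 (g p) (g q) (hmem p) (hmem q)).2
    · rintro (⟨h1, h2⟩ : p.1 = q.1 ∧ p.2 ≠ q.2)
      rcases BY_fin2cases p.2 q.2 h2 with ⟨hp0, hq1⟩ | ⟨hp1, hq0⟩
      · have e1 : g p = (f p.1).1 := by simp [hg, hp0]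
        have e2 : g q = (f p.1).2 := by
          rw [hg]; simp only [hq1, ← h1]; rw [if_neg (by decide)]
        rw [e1, e2]; exact (hf p.1).2.2
      · have e1 : g p = (f p.1).2 := by
          rw [hg]; simp only [hp1]; rw [if_neg (by decide)]
        have e2 : g q = (f p.1).1 := by simp [hg, hq0, ← h1]
        rw [e1, e2]; exact (hf p.1).2.2.symm
  refine ⟨Set.range g, ⟨?_⟩⟩
  refine ⟨(Equiv.ofInjective g hginj).symm, ?_⟩
  intro a b
  have ha := Equiv.apply_ofInjective_symm hginj a
  have hb := Equiv.apply_ofInjective_symm hginj b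
  rw [← key ((Equiv.ofInjective g hginj).symm a) ((Equiv.ofInjective g hginj).symm b), ha, hb]
  rfl

/-- Removing the closed neighbourhoods of the two ends of an edge decreases the
induced matching number. -/
lemma BY_noMatch_descent (G : SimpleGraph V) {k : ℕ} {W : Set V}
    (h : BYNoMatchIn G (k + 1) W) {p : V × V} (hu : p.1 ∈ W) (hx : p.2 ∈ W)
    (hadj : G.Adj p.2 p.1) : BYNoMatchIn G k (W \ BYRset G p) := by
  rintro ⟨f, hf, hcross⟩
  apply h
  have hnotR : ∀ y, y ∈ W \ BYRset G p →
      y ≠ p.1 ∧ ¬ G.Adj p.1 y ∧ y ≠ p.2 ∧ ¬ G.Adj p.2 y := by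
    intro y hy
    refine ⟨fun hh => hy.2 (Or.inl hh), fun hh => hy.2 (Or.inr (Or.inl hh)),
      fun hh => hy.2 (Or.inr (Or.inr (Or.inl hh))), fun hh => hy.2 (Or.inr (Or.inr (Or.inr hh)))⟩
  have hend : ∀ (j : Fin k) (b : V), (b = (f j).1 ∨ b = (f j).2) → b ∈ W \ BYRset G p := by
    intro j b hb
    rcases hb with rfl | rfl
    · exact (hf j).1
    · exact (hf j).2.1
  refine ⟨Fin.cons (p.1, p.2) (f ·), ?_, ?_⟩
  · intro i
    rcases Fin.eq_zero_or_eq_succ i with rfl | ⟨i', rfl⟩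
    · simpa using ⟨hu, hx, hadj.symm⟩
    · simp only [Fin.cons_succ]
      exact ⟨(hf i').1.1, (hf i').2.1.1, (hf i').2.2⟩
  · intro i j hij a b hai hbj
    rcases Fin.eq_zero_or_eq_succ i with rfl | ⟨i', rfl⟩
    · rcases Fin.eq_zero_or_eq_succ j with rfl | ⟨j', rfl⟩
      · exact absurd rfl hij
      · simp only [Fin.cons_zero, Fin.cons_succ] at hai hbj
        obtain ⟨hb1, hb2, hb3, hb4⟩ := hnotR b (hend j' b hbj)
        rcases hai with rfl | rfl
        · exact ⟨Ne.symm hb1, hb2⟩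
        · exact ⟨Ne.symm hb3, hb4⟩
    · rcases Fin.eq_zero_or_eq_succ j with rfl | ⟨j', rfl⟩
      · simp only [Fin.cons_zero, Fin.cons_succ] at hai hbj
        obtain ⟨ha1, ha2, ha3, ha4⟩ := hnotR a (hend i' a hai)
        rcases hbj with rfl | rfl
        · exact ⟨ha1, fun hh => ha2 hh.symm⟩
        · exact ⟨ha3, fun hh => ha4 hh.symm⟩
      · simp only [Fin.cons_succ] at hai hbj
        exact hcross i' j' (fun hh => hij (by rw [hh])) a b hai hbj

/-- If `W` spans no edges, then `W` is the unique maximal independent set in `W`. -/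
lemma BY_edgeless_case (G : SimpleGraph V) {W : Set V}
    (h : ∀ a ∈ W, ∀ b ∈ W, ¬ G.Adj a b) :
    {S : Set V | IsMaxIndepIn G W S} = {W} := by
  ext S
  simp only [Set.mem_setOf_eq, Set.mem_singleton_iff]
  constructor
  · rintro ⟨h1, _h2, h3⟩
    refine Set.Subset.antisymm h1 ?_
    intro v hv
    by_contra hvS
    obtain ⟨w, hwS, hadj⟩ := h3 v hv hvS
    exact h v hv w (h1 hwS) hadj
  · rintro rfl
    refine ⟨Set.Subset.rfl, ?_, ?_⟩
    · intro a ha b hb _ 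
      exact h a ha b hb
    · intro v hv hv'
      exact absurd hv hv'

/-- Key decomposition: every maximal independent set in `W` is encoded by an adjacent
pair `(u, x)` with `u ∈ S`, `x ∉ S`, together with its trace outside the removed zone. -/
lemma BY_exists_encode [Fintype V] (G : SimpleGraph V) {W S : Set V}
    (hS : IsMaxIndepIn G W S) {a b : V} (ha : a ∈ W) (hb : b ∈ W) (hab : G.Adj a b) :
    ∃ p : V × V, p.1 ∈ W ∧ p.2 ∈ W ∧ G.Adj p.2 p.1 ∧
      IsMaxIndepIn G (W \ BYRset G p) (S \ BYRset G p) ∧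
      S = BYdecode G W p (S \ BYRset G p) := by
  classical
  obtain ⟨hSW, hInd, hMax⟩ := hS
  have hWS : ∃ x, x ∈ W ∧ x ∉ S := by
    by_cases haS : a ∈ S
    · by_cases hbS : b ∈ S
      · exact absurd hab (hInd haS hbS hab.ne)
      · exact ⟨b, hb, hbS⟩
    · exact ⟨a, ha, haS⟩
  obtain ⟨x₀, hx₀⟩ := hWS
  have hx₀m : x₀ ∈ (Set.toFinite (W \ S)).toFinset := by
    rw [Set.Finite.mem_toFinset]; exact ⟨hx₀.1, hx₀.2⟩
  obtain ⟨x, hxm, hxmin⟩ := Finset.exists_min_image (Set.toFinite (W \ S)).toFinset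
    (fun y => (S ∩ {w | G.Adj y w}).ncard) ⟨x₀, hx₀m⟩
  rw [Set.Finite.mem_toFinset] at hxm
  obtain ⟨hxW, hxS⟩ := hxm
  obtain ⟨u, huS, hxu⟩ := hMax x hxW hxS
  set p : V × V := (u, x) with hp
  set T : Set V := S \ BYRset G p with hT
  have hTsub : T ⊆ S := Set.diff_subset
  -- The core minimality argument: no vertex of `W \ S` avoiding `u` can have all its
  -- `S`-neighbours adjacent to `x`.
  have core : ∀ z, z ∈ W → z ∉ S → ¬ G.Adj u z → (∀ t ∈ T, ¬ G.Adj t z) → False := by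
    intro z hzW hzS hzu hzT
    have hsubB : S ∩ {w | G.Adj z w} ⊆ (S ∩ {w | G.Adj x w}) \ {u} := by
      rintro w ⟨hwS, hwz⟩
      have hwu : w ≠ u := fun hh => hzu ((hh ▸ hwz : G.Adj z u)).symm
      have hwT : w ∉ T := fun hwT' => hzT w hwT' (Set.mem_setOf_eq ▸ hwz).symm
      have hwR : w ∈ BYRset G p := by
        by_contra hc; exact hwT ⟨hwS, hc⟩
      rcases hwR with h1 | h2 | h3 | h4
      · exact absurd h1 hwu
      · exact absurd h2 (hInd huS hwS (Ne.symm hwu))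
      · exact absurd hwS (by rw [h3]; exact hxS)
      · exact ⟨⟨hwS, h4⟩, by simpa using hwu⟩
    have huB : u ∈ S ∩ {w | G.Adj x w} := ⟨huS, hxu⟩
    have hlt : (S ∩ {w | G.Adj z w}).ncard < (S ∩ {w | G.Adj x w}).ncard := by
      refine lt_of_le_of_lt (Set.ncard_le_ncard hsubB (Set.toFinite _))
        (Set.ncard_lt_ncard ?_ (Set.toFinite _))
      exact ⟨Set.diff_subset, fun hcon => (hcon huB).2 rfl⟩
    have hge := hxmin z (by rw [Set.Finite.mem_toFinset]; exact ⟨hzW, hzS⟩)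
    omega
  have huR : u ∈ BYRset G p := Or.inl rfl
  refine ⟨p, hSW huS, hxW, hxu, ⟨?_, hInd.mono hTsub, ?_⟩, ?_⟩
  · -- T ⊆ W \ R
    intro t ht
    exact ⟨hSW (hTsub ht), ht.2⟩
  · -- maximality of T in W \ R
    intro z hz hzT
    have hzS : z ∉ S := fun hzS' => hzT ⟨hzS', hz.2⟩
    by_contra hno
    push_neg at hno
    refine core z hz.1 hzS ?_ ?_
    · intro hh; exact hz.2 (Or.inr (Or.inl hh))
    · intro t ht hadj; exact hno t ht hadj.symm
  · -- decoding identity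
    apply Set.Subset.antisymm
    · intro s' hs'
      by_cases hsR : s' ∈ BYRset G p
      · rcases hsR with h1 | h2 | h3 | h4
        · exact Set.mem_insert_iff.mpr (Or.inl h1)
        · have hsu : s' = u := by
            by_contra hne
            exact (hInd huS hs' (Ne.symm hne)) h2
          exact Set.mem_insert_iff.mpr (Or.inl hsu)
        · exact absurd hs' (by rw [h3]; exact hxS)
        · by_cases hsu : s' = u
          · exact Set.mem_insert_iff.mpr (Or.inl hsu)
          · refine Set.mem_insert_iff.mpr (Or.inr (Set.mem_union_right _ ?_))
            refine ⟨hSW hs', h4, ?_, hsu, ?_, ?_⟩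
            · intro hadj; exact (hInd huS hs' (Ne.symm hsu)) hadj
            · intro hsT; exact hsT.2 (Or.inr (Or.inr (Or.inr h4)))
            · intro t ht hadj
              have htne : t ≠ s' := fun hh => ht.2 (hh ▸ (Or.inr (Or.inr (Or.inr h4))))
              exact (hInd (hTsub ht) hs' htne) hadj
      · exact Set.mem_insert_iff.mpr (Or.inr (Set.mem_union_left _ ⟨hs', hsR⟩))
    · intro y hy
      rcases Set.mem_insert_iff.mp hy with rfl | hy2
      · exact huS
      · rcases hy2 with hyT | hyZ
        · exact hTsub hyT
        · obtain ⟨hyW, _hyx, hyu, _hyune, _hyT, hyTadj⟩ := hyZ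
          by_contra hyS
          exact core y hyW hyS hyu hyTadj

/-- Summing `ncard` over a finite union. -/
lemma BY_ncard_biUnion_le {β : Type*} [Finite β] {α : Type*} (t : Finset α) (f : α → Set β) :
    (⋃ i ∈ t, f i).ncard ≤ ∑ i ∈ t, (f i).ncard := by
  classical
  induction t using Finset.induction_on with
  | empty => simp
  | insert _ _ ha ih =>
      rw [Finset.set_biUnion_insert, Finset.sum_insert ha]
      exact le_trans (Set.ncard_union_le _ _) (Nat.add_le_add_left ih _)

/-- The key counting lemma. -/
lemma BY_key [Fintype V] (G : SimpleGraph V) :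
    ∀ (s : ℕ) (W : Set V), BYNoMatchIn G s W →
      {S : Set V | IsMaxIndepIn G W S}.ncard ≤ max 1 (W.ncard ^ (2 * s - 2)) := by
  intro s
  induction s with
  | zero =>
      intro W h
      exact absurd ⟨fun i => i.elim0, fun i => i.elim0, fun i j _ => i.elim0⟩ h
  | succ s ih =>
      intro W hW
      by_cases hedge : ∃ a ∈ W, ∃ b ∈ W, G.Adj a b
      · obtain ⟨a, ha, b, hb, hab⟩ := hedge
        rcases Nat.eq_zero_or_pos s with rfl | hs1
        · exact absurd ⟨fun _ => (a, b), fun _ => ⟨ha, hb, hab⟩,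
            fun i j hij => absurd (Fin.ext (by have := i.isLt; have := j.isLt; omega)) hij⟩ hW
        · classical
          have hn2 : 2 ≤ W.ncard := by
            have hsub : ({a, b} : Set V) ⊆ W := by
              intro y hy
              rcases hy with rfl | hy
              · exact ha
              · rw [Set.mem_singleton_iff] at hy; exact hy ▸ hb
            have hle := Set.ncard_le_ncard hsub (Set.toFinite W)
            rwa [Set.ncard_pair hab.ne] at hle
          set EF : Finset (V × V) :=
            Finset.univ.filter (fun p : V × V => p.1 ∈ W ∧ p.2 ∈ W ∧ G.Adj p.2 p.1) with hEF
          have hcover : {S : Set V | IsMaxIndepIn G W S} ⊆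
              ⋃ p ∈ EF, (BYdecode G W p) '' {T : Set V | IsMaxIndepIn G (W \ BYRset G p) T} := by
            intro S hSmem
            obtain ⟨p, h1, h2, h3, hmis, hdec⟩ := BY_exists_encode G hSmem ha hb hab
            have hpEF : p ∈ EF := by
              rw [hEF, Finset.mem_filter]
              exact ⟨Finset.mem_univ _, h1, h2, h3⟩
            exact Set.mem_biUnion hpEF ⟨S \ BYRset G p, hmis, hdec.symm⟩
          have hstep : ∀ p ∈ EF,
              ((BYdecode G W p) '' {T : Set V | IsMaxIndepIn G (W \ BYRset G p) T}).ncard ≤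
                max 1 (W.ncard ^ (2 * s - 2)) := by
            intro p hpEF
            rw [hEF, Finset.mem_filter] at hpEF
            obtain ⟨-, hp1, hp2, hp3⟩ := hpEF
            have hdesc : BYNoMatchIn G s (W \ BYRset G p) := BY_noMatch_descent G hW hp1 hp2 hp3
            refine le_trans (Set.ncard_image_le (Set.toFinite _))
              (le_trans (ih (W \ BYRset G p) hdesc) ?_)
            exact max_le_max le_rfl
              (Nat.pow_le_pow_left (Set.ncard_le_ncard Set.diff_subset (Set.toFinite W)) _)
          have hEFcard : EF.card ≤ W.ncard * W.ncard := by
            have hsub : EF ⊆ (Set.toFinite W).toFinset ×ˢ (Set.toFinite W).toFinset := by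
              intro p hpEF
              rw [hEF, Finset.mem_filter] at hpEF
              rw [Finset.mem_product, Set.Finite.mem_toFinset, Set.Finite.mem_toFinset]
              exact ⟨hpEF.2.1, hpEF.2.2.1⟩
            have hcard := Finset.card_le_card hsub
            rw [Finset.card_product] at hcard
            have hWcard : (Set.toFinite W).toFinset.card = W.ncard :=
              (Set.ncard_eq_toFinset_card W (Set.toFinite W)).symm
            rwa [hWcard] at hcard
          calc {S : Set V | IsMaxIndepIn G W S}.ncard
              ≤ (⋃ p ∈ EF, (BYdecode G W p) ''
                  {T : Set V | IsMaxIndepIn G (W \ BYRset G p) T}).ncard :=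
                Set.ncard_le_ncard hcover (Set.toFinite _)
            _ ≤ ∑ p ∈ EF, ((BYdecode G W p) ''
                  {T : Set V | IsMaxIndepIn G (W \ BYRset G p) T}).ncard :=
                BY_ncard_biUnion_le _ _
            _ ≤ ∑ _p ∈ EF, max 1 (W.ncard ^ (2 * s - 2)) := Finset.sum_le_sum hstep
            _ = EF.card * max 1 (W.ncard ^ (2 * s - 2)) := by
                rw [Finset.sum_const, smul_eq_mul]
            _ ≤ (W.ncard * W.ncard) * max 1 (W.ncard ^ (2 * s - 2)) :=
                Nat.mul_le_mul_right _ hEFcard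
            _ ≤ max 1 (W.ncard ^ (2 * (s + 1) - 2)) := by
                have h1n : (1 : ℕ) ≤ W.ncard := by omega
                rw [max_eq_right (Nat.one_le_pow _ _ (by omega))]
                have hpow : W.ncard * W.ncard * W.ncard ^ (2 * s - 2) =
                    W.ncard ^ (2 * (s + 1) - 2) := by
                  rw [← pow_two, ← pow_add]
                  congr 1
                  omega
                rw [hpow]
                exact le_max_right _ _
      · push_neg at hedge
        rw [BY_edgeless_case G hedge, Set.ncard_singleton]
        exact le_max_left _ _

/-- Maximal independent sets are maximal independent sets in `univ`. -/
lemma BY_isMaxIndep_iff (G : SimpleGraph V) (S : Set V) :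
    IsMaxIndep G S ↔ IsMaxIndepIn G Set.univ S := by
  constructor
  · rintro ⟨h1, h2⟩
    refine ⟨Set.subset_univ S, h1, ?_⟩
    intro v _ hvS
    by_contra hno
    push_neg at hno
    apply h2 v hvS
    intro y hy z hz hyz
    rcases Set.mem_insert_iff.mp hy with rfl | hyS
    · rcases Set.mem_insert_iff.mp hz with rfl | hzS
      · exact absurd rfl hyz
      · exact hno z hzS
    · rcases Set.mem_insert_iff.mp hz with rfl | hzS
      · exact fun hadj => hno y hyS hadj.symm
      · exact h1 hyS hzS hyz
  · rintro ⟨_h0, h1, h2⟩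
    refine ⟨h1, ?_⟩
    intro v hvS hins
    obtain ⟨w, hwS, hvw⟩ := h2 v (Set.mem_univ v) hvS
    exact hins (Set.mem_insert v S) (Set.mem_insert_of_mem v hwS) hvw.ne hvw

end BalasYuProof

/-- For every `s ≥ 1`, an `sP₂`-free graph on `n` vertices has at most
`n ^ (2 * s) + 1` maximal independent sets. -/
theorem balas_yu_bound {V : Type*} [Fintype V] (G : SimpleGraph V) (s : ℕ) (hs : 1 ≤ s)
    (hfree : sP2Free s G) :
    {S : Set V | IsMaxIndep G S}.ncard ≤ Fintype.card V ^ (2 * s) + 1 := by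
  classical
  have hnm : BYNoMatchIn G s Set.univ := BY_noMatchIn_of_free G hfree Set.univ
  have hfam : {S : Set V | IsMaxIndep G S} = {S : Set V | IsMaxIndepIn G Set.univ S} := by
    ext S; exact BY_isMaxIndep_iff G S
  rw [hfam]
  refine le_trans (BY_key G s Set.univ hnm) ?_
  have hn : (Set.univ : Set V).ncard = Fintype.card V := by
    rw [Set.ncard_univ, Nat.card_eq_fintype_card]
  rw [hn]
  apply max_le
  · omega
  · by_cases hc : Fintype.card V = 0
    · rw [hc]
      by_cases he : 2 * s - 2 = 0
      · rw [he, pow_zero]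
        have h0 : (0 : ℕ) ^ (2 * s) = 0 := by
          apply Nat.zero_pow
          omega
        omega
      · rw [Nat.zero_pow (by omega : 0 < 2 * s - 2)]
        exact Nat.zero_le _
    · have h1 : 1 ≤ Fintype.card V := by omega
      have hmono := Nat.pow_le_pow_right h1 (show 2 * s - 2 ≤ 2 * s by omega)
      omega
end Paper
end

section
/- Let G be an sP_2-free graph and let S be a minimal feedback vertex set of G with F = G - S the resulting induced forest. Let F' be a skeleton of F: the set of all vertices of degree at least 2 in F together with one arbitrarily chosen vertex from each component of F isomorphic to P_2. Then |V(F')| ≤ 3s² - 5s + 2. -/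
open SimpleGraph

namespace Paper

variable {V : Type*}

/-- The restriction of `G` to vertices in `F`, as a graph on `V`. -/
def restr (G : SimpleGraph V) (F : Set V) : SimpleGraph V where
  Adj a b := a ∈ F ∧ b ∈ F ∧ G.Adj a b
  symm := ⟨fun _ _ h => ⟨h.2.1, h.1, h.2.2.symm⟩⟩
  loopless := ⟨fun _ h => h.2.2.ne rfl⟩

lemma restr_adj {G : SimpleGraph V} {F : Set V} {a b : V} :
    (restr G F).Adj a b ↔ a ∈ F ∧ b ∈ F ∧ G.Adj a b := Iff.rfl

lemma restr_mono {G : SimpleGraph V} {F₁ F₂ : Set V} (h : F₁ ⊆ F₂) :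
    restr G F₁ ≤ restr G F₂ := fun _ _ hab => ⟨h hab.1, h hab.2.1, hab.2.2⟩

lemma IsAcyclic.anti {G G' : SimpleGraph V} (h : G ≤ G') (hac : G'.IsAcyclic) :
    G.IsAcyclic := fun _ c hc => hac (c.mapLe h) (hc.mapLe h)

/-- The inclusion homomorphism from the induced subgraph to the restriction. -/
def homval (G : SimpleGraph V) (F : Set V) : G.induce F →g restr G F where
  toFun := Subtype.val
  map_rel' := fun {a b} hab => ⟨a.2, b.2, hab⟩

/-- Lift a walk in `restr G F` to a walk in `G.induce F`. -/
def liftW (G : SimpleGraph V) (F : Set V) :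
    ∀ {v w : V}, (restr G F).Walk v w → (hv : v ∈ F) → (hw : w ∈ F) →
      (G.induce F).Walk ⟨v, hv⟩ ⟨w, hw⟩
  | _, _, Walk.nil, _, _ => Walk.nil
  | _, _, Walk.cons h p, _, hw => Walk.cons (by exact h.2.2) (liftW G F p h.2.1 hw)

lemma map_liftW (G : SimpleGraph V) (F : Set V) :
    ∀ {v w : V} (p : (restr G F).Walk v w) (hv : v ∈ F) (hw : w ∈ F),
      (liftW G F p hv hw).map (homval G F) = p
  | _, _, Walk.nil, _, _ => rfl
  | _, _, Walk.cons h p, _, hw => by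
      show Walk.cons _ ((liftW G F p h.2.1 hw).map (homval G F)) = _
      rw [map_liftW G F p h.2.1 hw]
      rfl

lemma walk_endpoints_mem {G : SimpleGraph V} {F : Set V} :
    ∀ {v w : V} (p : (restr G F).Walk v w), v = w ∨ (v ∈ F ∧ w ∈ F) := by
  intro v w p
  induction p with
  | nil => exact Or.inl rfl
  | @cons a b c h p ih =>
    right
    refine ⟨h.1, ?_⟩
    rcases ih with rfl | hm
    · exact h.2.1
    · exact hm.2

/-- unique paths in the restriction graph, given acyclicity of the induced subgraph. -/
lemma restr_isAcyclic {G : SimpleGraph V} {F : Set V} (hac : (G.induce F).IsAcyclic) :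
    (restr G F).IsAcyclic := by
  apply isAcyclic_of_path_unique
  rintro v w ⟨p, hp⟩ ⟨q, hq⟩
  simp only [Subtype.mk.injEq]
  rcases walk_endpoints_mem p with rfl | ⟨hv, hw⟩
  · rw [Walk.isPath_iff_eq_nil.mp hp, Walk.isPath_iff_eq_nil.mp hq]
  · have hP : ((liftW G F p hv hw).map (homval G F)) = p := map_liftW G F p hv hw
    have hQ : ((liftW G F q hv hw).map (homval G F)) = q := map_liftW G F q hv hw
    have hPp : (liftW G F p hv hw).IsPath := by
      apply Walk.IsPath.of_map (f := homval G F); rw [hP]; exact hp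
    have hQp : (liftW G F q hv hw).IsPath := by
      apply Walk.IsPath.of_map (f := homval G F); rw [hQ]; exact hq
    have := hac.path_unique ⟨liftW G F p hv hw, hPp⟩ ⟨liftW G F q hv hw, hQp⟩
    rw [Subtype.mk.injEq] at this
    rw [← hP, ← hQ, this]


/-- An induced matching of size `n` inside `F`. -/
def IndMatch (G : SimpleGraph V) (F : Set V) (n : ℕ) (a b : Fin n → V) : Prop :=
  (∀ i, a i ∈ F) ∧ (∀ i, b i ∈ F) ∧ (∀ i, G.Adj (a i) (b i)) ∧
  ∀ i j, i ≠ j → (a i ≠ a j ∧ a i ≠ b j ∧ b i ≠ a j ∧ b i ≠ b j ∧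
    ¬ G.Adj (a i) (a j) ∧ ¬ G.Adj (a i) (b j) ∧ ¬ G.Adj (b i) (a j) ∧ ¬ G.Adj (b i) (b j))

lemma indMatch_hasIso {G : SimpleGraph V} {F : Set V} {s : ℕ} {a b : Fin s → V}
    (hm : IndMatch G F s a b) : HasInducedIso G (sP2 s) := by
  obtain ⟨haF, hbF, hadj, hcross⟩ := hm
  classical
  set f : Fin s × Fin 2 → V := fun p => if p.2 = 0 then a p.1 else b p.1 with hf
  have h2 : ∀ x : Fin 2, x = 0 ∨ x = 1 := by decide
  have key : ∀ p q : Fin s × Fin 2, G.Adj (f p) (f q) ↔ (p.1 = q.1 ∧ p.2 ≠ q.2) := by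
    rintro ⟨i, x⟩ ⟨j, y⟩
    by_cases hij : i = j
    · subst hij
      rcases h2 x with rfl | rfl <;> rcases h2 y with rfl | rfl
      · simp [hf]
      · simp [hf, hadj i]
      · simp [hf, (hadj i).symm]
      · simp [hf]
    · have hc := hcross i j hij
      rcases h2 x with rfl | rfl <;> rcases h2 y with rfl | rfl
      · simp [hf, hij, hc.2.2.2.2.1]
      · simp [hf, hij, hc.2.2.2.2.2.1]
      · simp [hf, hij, hc.2.2.2.2.2.2.1]
      · simp [hf, hij, hc.2.2.2.2.2.2.2]
  have hinj : Function.Injective f := by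
    rintro ⟨i, x⟩ ⟨j, y⟩ hfeq
    by_cases hij : i = j
    · subst hij
      rcases h2 x with rfl | rfl <;> rcases h2 y with rfl | rfl <;> simp [hf] at hfeq ⊢
      · exact absurd hfeq (hadj i).ne
      · exact absurd hfeq.symm (hadj i).ne
    · have hc := hcross i j hij
      exfalso
      rcases h2 x with rfl | rfl <;> rcases h2 y with rfl | rfl <;> simp [hf] at hfeq
      · exact hc.1 hfeq
      · exact hc.2.1 hfeq
      · exact hc.2.2.1 hfeq
      · exact hc.2.2.2.1 hfeq
  refine ⟨Set.range f, ⟨?_⟩⟩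
  refine ⟨(Equiv.ofInjective f hinj).symm, ?_⟩
  intro x y
  have hx : f ((Equiv.ofInjective f hinj).symm x) = ↑x := Equiv.apply_ofInjective_symm hinj x
  have hy : f ((Equiv.ofInjective f hinj).symm y) = ↑y := Equiv.apply_ofInjective_symm hinj y
  show (sP2 s).Adj _ _ ↔ (G.induce (Set.range f)).Adj x y
  have : (G.induce (Set.range f)).Adj x y ↔ G.Adj ↑x ↑y := Iff.rfl
  rw [this, ← hx, ← hy, key]
  rfl

lemma indMatch_lt {G : SimpleGraph V} {F : Set V} {s n : ℕ} {a b : Fin n → V}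
    (hfree : sP2Free s G) (hm : IndMatch G F n a b) : n < s := by
  by_contra hn
  push_neg at hn
  apply hfree
  obtain ⟨haF, hbF, hadj, hcross⟩ := hm
  refine indMatch_hasIso (F := F) (a := fun i : Fin s => a (Fin.castLE hn i))
    (b := fun i => b (Fin.castLE hn i)) ?_
  refine ⟨fun i => haF _, fun i => hbF _, fun i => hadj _, fun i j hij => ?_⟩
  exact hcross _ _ (fun h => hij (Fin.castLE_injective hn h))


section Tree

variable [DecidableEq V] {H : SimpleGraph V} {u x y y' z : V}

lemma spath (hr : H.Reachable u x) :
    ∃ p : H.Walk u x, p.IsPath ∧ p.length = H.dist u x := by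
  obtain ⟨w, hw⟩ := hr.exists_walk_length_eq_dist
  exact ⟨w.bypass, w.bypass_isPath,
    le_antisymm (le_trans w.length_bypass_le (le_of_eq hw)) (SimpleGraph.dist_le _)⟩

lemma mem_support_dist_le (p : H.Walk u x) (hz : z ∈ p.support) :
    H.dist u z ≤ p.length :=
  le_trans (SimpleGraph.dist_le (p.takeUntil z hz)) (p.length_takeUntil_le hz)

lemma eq_end_of_dist (p : H.Walk u x) (hp : p.length = H.dist u x)
    (hz : z ∈ p.support) (hd : H.dist u z = H.dist u x) : z = x := by
  by_contra hne
  have h1 : H.dist u z ≤ (p.takeUntil z hz).length := SimpleGraph.dist_le _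
  have h2 : (p.takeUntil z hz).length + (p.dropUntil z hz).length = p.length := by
    rw [← Walk.length_append, Walk.take_spec]
  have h3 : (p.dropUntil z hz).length ≠ 0 := fun h0 => hne (Walk.eq_of_length_eq_zero h0)
  omega

lemma isPath_concat {p : H.Walk u x} (hp : p.IsPath) (h : H.Adj x z)
    (hz : z ∉ p.support) : (p.concat h).IsPath := by
  rw [Walk.isPath_def, Walk.support_concat, ← List.concat_eq_append]
  exact List.Nodup.concat hz ((Walk.isPath_def _).mp hp)

lemma path_length_unique (hH : H.IsAcyclic) {p q : H.Walk u x} (hp : p.IsPath)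
    (hq : q.IsPath) : p.length = q.length := by
  have h := hH.path_unique ⟨p, hp⟩ ⟨q, hq⟩
  rw [Subtype.mk.injEq] at h
  rw [h]

lemma adj_dist_ne (hH : H.IsAcyclic) (hr : H.Reachable u x)
    (ha : H.Adj x z) : H.dist u x ≠ H.dist u z := by
  intro hd
  obtain ⟨p, hp, hpl⟩ := spath hr
  have hzs : z ∉ p.support := by
    intro hzs
    exact ha.ne (eq_end_of_dist p hpl hzs hd.symm).symm
  obtain ⟨q2, hq2, hq2l⟩ := spath (hr.trans ha.reachable)
  have hlen := path_length_unique hH (isPath_concat hp ha hzs) hq2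
  rw [Walk.length_concat, hpl, hq2l] at hlen
  omega

lemma adj_dist_succ_le (ha : H.Adj x z) (hr : H.Reachable u x) :
    H.dist u z ≤ H.dist u x + 1 := by
  obtain ⟨p, hp, hl⟩ := spath hr
  have := SimpleGraph.dist_le (p.concat ha)
  rwa [Walk.length_concat, hl] at this

lemma adj_dist_cases (hH : H.IsAcyclic) (hr : H.Reachable u x)
    (ha : H.Adj x z) : H.dist u z + 1 = H.dist u x ∨ H.dist u z = H.dist u x + 1 := by
  have h1 := adj_dist_succ_le ha hr
  have h2 := adj_dist_succ_le ha.symm (hr.trans ha.reachable)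
  have h3 := adj_dist_ne hH hr ha
  omega

lemma parent_unique (hH : H.IsAcyclic) (hr : H.Reachable u x)
    (h1 : H.Adj x y) (h2 : H.Adj x y') (hd1 : H.dist u y + 1 = H.dist u x)
    (hd2 : H.dist u y' + 1 = H.dist u x) : y = y' := by
  by_contra hne
  obtain ⟨q, hq, hql⟩ := spath (hr.trans h1.reachable)
  have hxs : x ∉ q.support := by
    intro hx
    have := mem_support_dist_le q hx
    omega
  have hq1 : (q.concat h1.symm).IsPath := isPath_concat hq h1.symm hxs
  have hy's : y' ∉ (q.concat h1.symm).support := by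
    rw [Walk.support_concat]
    intro hmem
    rcases List.mem_append.mp hmem with hmem | hmem
    · exact hne (eq_end_of_dist (x := y) (z := y') q hql hmem (by omega)).symm
    · rw [List.mem_singleton] at hmem
      exact h2.ne hmem.symm
  obtain ⟨q3, hq3, hq3l⟩ := spath (hr.trans h2.reachable)
  have hlen := path_length_unique hH (isPath_concat hq1 h2 hy's) hq3
  rw [Walk.length_concat, Walk.length_concat, hql, hq3l] at hlen
  omega

lemma parent_exists (hr : H.Reachable u x) (hne : H.dist u x ≠ 0) :
    ∃ y, H.Adj y x ∧ H.dist u y + 1 = H.dist u x := by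
  obtain ⟨p, hp, hl⟩ := spath hr
  cases p with
  | nil => exact absurd hl.symm hne
  | @cons _ b _ h p' =>
    obtain ⟨y, q, h', hc⟩ := Walk.exists_cons_eq_concat h p'
    have hlq : q.length + 1 = H.dist u x := by
      rw [← hl, hc, Walk.length_concat]
    have hdy : H.dist u y ≤ q.length := SimpleGraph.dist_le q
    have hdx : H.dist u x ≤ H.dist u y + 1 := adj_dist_succ_le h' q.reachable
    exact ⟨y, h', by omega⟩

end Tree


lemma step {G : SimpleGraph V} [Fintype V] {N : ℕ} {F F' : Set V}
    (ih : ∀ F₂ F₂' : Set V, F₂.ncard ≤ N → (restr G F₂).IsAcyclic → F₂' ⊆ F₂ →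
        (∀ v ∈ F₂', 2 ≤ degIn G F₂ v ∨ ∃ y, IsP2Comp G F₂ v y) →
        ∃ n a b, IndMatch G F₂ n a b ∧ F₂'.ncard ≤ 4 * n)
    (hcard : F.ncard ≤ N + 1) (hacyc : (restr G F).IsAcyclic) (hsub : F' ⊆ F)
    (R hurtS : Set V) (v₀ v₁ : V)
    (hedge : (restr G F).Adj v₀ v₁)
    (h0R : v₀ ∈ R)
    (hnoadj : ∀ w ∈ F, w ∉ R → ¬ G.Adj w v₀ ∧ ¬ G.Adj w v₁)
    (hgood : ∀ v ∈ F', v ∉ hurtS →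
        v ∉ R ∧ (2 ≤ degIn G (F \ R) v ∨ ∃ y, IsP2Comp G (F \ R) v y))
    (hhurtcard : hurtS.ncard ≤ 4) :
    ∃ n a b, IndMatch G F n a b ∧ F'.ncard ≤ 4 * n := by
  classical
  set F₂ : Set V := F \ R with hF₂
  set F₂' : Set V := {v ∈ F' | v ∉ hurtS} with hF₂'
  have hsub₂ : F₂' ⊆ F₂ := by
    rintro v ⟨hv, hvh⟩
    exact ⟨hsub hv, (hgood v hv hvh).1⟩
  have hcond₂ : ∀ v ∈ F₂', 2 ≤ degIn G F₂ v ∨ ∃ y, IsP2Comp G F₂ v y := by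
    rintro v ⟨hv, hvh⟩
    exact (hgood v hv hvh).2
  have hlt : F₂.ncard ≤ N := by
    have hss : F₂ ⊂ F := by
      constructor
      · exact Set.diff_subset
      · intro hFs
        exact (hFs hedge.1).2 h0R
    have := Set.ncard_lt_ncard hss (Set.toFinite F)
    omega
  obtain ⟨n, a, b, hm, hcnt⟩ := ih F₂ F₂' hlt
    (IsAcyclic.anti (restr_mono Set.diff_subset) hacyc) hsub₂ hcond₂
  obtain ⟨haF, hbF, hadj, hcross⟩ := hm
  -- the new matching
  refine ⟨n + 1, Fin.snoc a v₀, Fin.snoc b v₁, ⟨?_, ?_, ?_, ?_⟩, ?_⟩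
  · intro i
    refine Fin.lastCases ?_ ?_ i
    · rw [Fin.snoc_last]; exact hedge.1
    · intro j; rw [Fin.snoc_castSucc]; exact (haF j).1
  · intro i
    refine Fin.lastCases ?_ ?_ i
    · rw [Fin.snoc_last]; exact hedge.2.1
    · intro j; rw [Fin.snoc_castSucc]; exact (hbF j).1
  · intro i
    refine Fin.lastCases ?_ ?_ i
    · rw [Fin.snoc_last, Fin.snoc_last]; exact hedge.2.2
    · intro j; rw [Fin.snoc_castSucc, Fin.snoc_castSucc]; exact hadj j
  · -- cross conditions
    have key : ∀ j : Fin n, (a j ≠ v₀ ∧ a j ≠ v₁ ∧ ¬ G.Adj (a j) v₀ ∧ ¬ G.Adj (a j) v₁) ∧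
        (b j ≠ v₀ ∧ b j ≠ v₁ ∧ ¬ G.Adj (b j) v₀ ∧ ¬ G.Adj (b j) v₁) := by
      intro j
      have hna := hnoadj (a j) (haF j).1 (haF j).2
      have hnb := hnoadj (b j) (hbF j).1 (hbF j).2
      refine ⟨⟨?_, ?_, hna.1, hna.2⟩, ⟨?_, ?_, hnb.1, hnb.2⟩⟩
      · rintro rfl; exact hna.2 hedge.2.2
      · rintro rfl; exact hna.1 hedge.2.2.symm
      · rintro rfl; exact hnb.2 hedge.2.2
      · rintro rfl; exact hnb.1 hedge.2.2.symm
    intro i j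
    induction i using Fin.lastCases with
    | last =>
      induction j using Fin.lastCases with
      | last => intro hij; exact absurd rfl hij
      | cast j' =>
        intro _
        simp only [Fin.snoc_last, Fin.snoc_castSucc]
        have k := key j'
        exact ⟨k.1.1.symm, k.2.1.symm, k.1.2.1.symm, k.2.2.1.symm,
          fun h => k.1.2.2.1 h.symm, fun h => k.2.2.2.1 h.symm,
          fun h => k.1.2.2.2 h.symm, fun h => k.2.2.2.2 h.symm⟩
    | cast i' =>
      induction j using Fin.lastCases with
      | last =>
        intro _
        simp only [Fin.snoc_last, Fin.snoc_castSucc]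
        have k := key i'
        exact ⟨k.1.1, k.1.2.1, k.2.1, k.2.2.1, k.1.2.2.1, k.1.2.2.2, k.2.2.2.1, k.2.2.2.2⟩
      | cast j' =>
        intro hij
        simp only [Fin.snoc_castSucc]
        refine hcross i' j' ?_
        rintro rfl
        exact hij rfl
  · -- counting
    have hcover : F' ⊆ F₂' ∪ hurtS := by
      intro v hv
      by_cases hvh : v ∈ hurtS
      · exact Or.inr hvh
      · exact Or.inl ⟨hv, hvh⟩
    have h1 : F'.ncard ≤ (F₂' ∪ hurtS).ncard :=
      Set.ncard_le_ncard hcover (Set.toFinite _)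
    have h2 : (F₂' ∪ hurtS).ncard ≤ F₂'.ncard + hurtS.ncard := Set.ncard_union_le _ _
    omega


lemma core (G : SimpleGraph V) [Fintype V] [DecidableEq V] :
    ∀ (N : ℕ) (F F' : Set V), F.ncard ≤ N → (restr G F).IsAcyclic → F' ⊆ F →
    (∀ v ∈ F', 2 ≤ degIn G F v ∨ ∃ y, IsP2Comp G F v y) →
    ∃ (n : ℕ) (a b : Fin n → V), IndMatch G F n a b ∧ F'.ncard ≤ 4 * n := by
  intro N
  induction N with
  | zero =>
    intro F F' hcard hacyc hsub hcond
    refine ⟨0, Fin.elim0, Fin.elim0, ⟨fun i => i.elim0, fun i => i.elim0,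
      fun i => i.elim0, fun i => i.elim0⟩, ?_⟩
    have : F'.ncard ≤ F.ncard := Set.ncard_le_ncard hsub (Set.toFinite F)
    omega
  | succ N ih =>
    intro F F' hcard hacyc hsub hcond
    rcases Set.eq_empty_or_nonempty F' with rfl | ⟨u, hu⟩
    · exact ⟨0, Fin.elim0, Fin.elim0, ⟨fun i => i.elim0, fun i => i.elim0,
        fun i => i.elim0, fun i => i.elim0⟩, by simp⟩
    set H := restr G F with hHdef
    have huF : u ∈ F := hsub hu
    have hmemF : ∀ {x z : V}, H.Adj x z → x ∈ F ∧ z ∈ F := fun h => ⟨h.1, h.2.1⟩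
    -- u has a neighbour in F
    have hnbr : ∃ w, H.Adj u w := by
      rcases hcond u hu with hdeg | ⟨y, hy⟩
      · have hne : {w | w ∈ F ∧ G.Adj u w}.Nonempty := by
          apply Set.nonempty_of_ncard_ne_zero
          unfold degIn at hdeg
          omega
        obtain ⟨w, hwF, hwadj⟩ := hne
        exact ⟨w, huF, hwF, hwadj⟩
      · exact ⟨y, huF, hy.2.1, hy.2.2.1⟩
    obtain ⟨v₀, hv₀C, hv₀max⟩ := Set.exists_max_image {x | H.Reachable u x} (H.dist u)
      (Set.toFinite _) ⟨u, Reachable.refl u⟩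
    have hv₀r : H.Reachable u v₀ := hv₀C
    have hmax : ∀ x, H.Reachable u x → H.dist u x ≤ H.dist u v₀ := fun x hx => hv₀max x hx
    set k := H.dist u v₀ with hkdef
    have hk : 1 ≤ k := by
      obtain ⟨w, hw⟩ := hnbr
      have h1 : H.dist u w ≤ k := hmax w hw.reachable
      have h2 : H.dist u w ≠ 0 := by
        intro h0
        exact hw.ne (hw.reachable.dist_eq_zero_iff.mp h0)
      omega
    obtain ⟨v₁, hadj₁, hd₁⟩ := parent_exists hv₀r (by omega)
    have hv₁r : H.Reachable u v₁ := hv₀r.trans hadj₁.symm.reachable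
    -- every neighbour of v₀ is v₁
    have hN0 : ∀ z, H.Adj v₀ z → z = v₁ := by
      intro z hz
      have hzr : H.Reachable u z := hv₀r.trans hz.reachable
      rcases adj_dist_cases hacyc hv₀r hz with hc | hc
      · exact parent_unique hacyc hv₀r hz hadj₁.symm hc hd₁
      · have := hmax z hzr
        omega
    -- children of v₁ at depth k only see v₁
    have hleaf : ∀ c, H.Adj v₁ c → H.dist u c = k → ∀ z, H.Adj c z → z = v₁ := by
      intro c hc hdc z hz
      have hcr : H.Reachable u c := hv₁r.trans hc.reachable
      rcases adj_dist_cases hacyc hcr hz with h | h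
      · exact parent_unique hacyc hcr hz hc.symm (by omega) (by omega)
      · have := hmax z (hcr.trans hz.reachable)
        omega
    -- a vertex whose only F-neighbour is p, where p has another neighbour, is not in F'
    have hnotF' : ∀ c p z, H.Adj c p → (∀ w, H.Adj c w → w = p) → H.Adj p z → z ≠ c →
        c ∉ F' := by
      intro c p z hcp honly hpz hzc hcF'
      rcases hcond c hcF' with hdeg | ⟨y, hy⟩
      · have hsub1 : {w | w ∈ F ∧ G.Adj c w} ⊆ {p} := by
          rintro w ⟨hwF, hwadj⟩
          exact honly w ⟨hcp.1, hwF, hwadj⟩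
        have := Set.ncard_le_ncard hsub1 (Set.toFinite _)
        rw [Set.ncard_singleton] at this
        unfold degIn at hdeg
        omega
      · have hyp : p = y := hy.2.2.2.1 p hcp.2.1 hcp.2.2
        have := hy.2.2.2.2 z hpz.2.1 (hyp ▸ hpz.2.2)
        exact hzc this
    rcases eq_or_lt_of_le hk with hk1 | hk2
    · -- CASE k = 1
      set R : Set V := {v₀, v₁} ∪ {z | H.Adj v₁ z} with hRdef
      have hv₀R : v₀ ∈ R := Or.inl (Or.inl rfl)
      have hv₁R : v₁ ∈ R := Or.inl (Or.inr rfl)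
      -- every neighbour of v₁ has depth 1 = k
      have hcdep : ∀ c, H.Adj v₁ c → H.dist u c = k := by
        intro c hc
        rcases adj_dist_cases hacyc hv₁r hc with h | h <;> omega
      -- no F₂-vertex is adjacent to anything in R
      have hA : ∀ w z, w ∈ F → w ∉ R → H.Adj w z → z ∉ R := by
        intro w z hwF hwR hwz hzR
        rcases hzR with (rfl | rfl) | hz
        · exact hwR (Or.inl (Or.inr (hN0 w hwz.symm)))
        · exact hwR (Or.inr hwz.symm)
        · exact hwR (Or.inl (Or.inr (hleaf z hz (hcdep z hz) w hwz.symm)))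
      apply step ih hcard hacyc hsub R {v₀, v₁} v₀ v₁ hadj₁.symm hv₀R
      · intro w hwF hwR
        constructor
        · intro hadj
          exact hA w v₀ hwF hwR ⟨hwF, hadj₁.2.1, hadj⟩ hv₀R
        · intro hadj
          exact hA w v₁ hwF hwR ⟨hwF, hadj₁.1, hadj⟩ hv₁R
      · intro v hv hvh
        have hvR : v ∉ R := by
          intro hvR
          rcases hvR with (rfl | rfl) | hz
          · exact hvh (Or.inl rfl)
          · exact hvh (Or.inr rfl)
          · have hvne : v₀ ≠ v := by
              intro h
              exact hvh (Or.inl h.symm)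
            exact hnotF' v v₁ v₀ hz.symm (hleaf v hz (hcdep v hz)) hadj₁ hvne hv
        refine ⟨hvR, ?_⟩
        have hvF : v ∈ F := hsub hv
        have hpres : {w | w ∈ F \ R ∧ G.Adj v w} = {w | w ∈ F ∧ G.Adj v w} := by
          ext w
          simp only [Set.mem_setOf_eq, Set.mem_diff]
          constructor
          · rintro ⟨⟨hwF, _⟩, hwadj⟩
            exact ⟨hwF, hwadj⟩
          · rintro ⟨hwF, hwadj⟩
            exact ⟨⟨hwF, hA v w hvF hvR ⟨hvF, hwF, hwadj⟩⟩, hwadj⟩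
        rcases hcond v hv with hdeg | ⟨y, hy⟩
        · left
          unfold degIn at hdeg ⊢
          rw [hpres]
          exact hdeg
        · right
          refine ⟨y, ⟨hvF, hvR⟩, ⟨hy.2.1, hA v y hvF hvR ⟨hvF, hy.2.1, hy.2.2.1⟩⟩,
            hy.2.2.1, ?_, ?_⟩
          · intro w hw hadj
            exact hy.2.2.2.1 w hw.1 hadj
          · intro w hw hadj
            exact hy.2.2.2.2 w hw.1 hadj
      · have h1 := Set.ncard_insert_le v₀ ({v₁} : Set V)
        rw [Set.ncard_singleton] at h1
        omega
    · -- CASE k ≥ 2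
      have hdv₁ : H.dist u v₁ ≠ 0 := by omega
      obtain ⟨v₂, hadj₂, hd₂⟩ := parent_exists hv₁r hdv₁
      have hv₂r : H.Reachable u v₂ := hv₁r.trans hadj₂.symm.reachable
      have hv₂ne₁ : v₂ ≠ v₁ := hadj₂.ne
      have hv₂ne₀ : v₂ ≠ v₀ := by
        intro h
        rw [h] at hd₂
        omega
      -- v₃ : the parent of v₂ when it exists
      obtain ⟨v₃, hv₃⟩ : ∃ v₃, (H.Adj v₃ v₂ ∧ H.dist u v₃ + 1 = H.dist u v₂) ∨
          (H.dist u v₂ = 0 ∧ v₃ = v₂) := by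
        by_cases h2 : H.dist u v₂ = 0
        · exact ⟨v₂, Or.inr ⟨h2, rfl⟩⟩
        · obtain ⟨w, hw⟩ := parent_exists hv₂r h2
          exact ⟨w, Or.inl hw⟩
      set R : Set V := {v₀, v₁} ∪ {z | H.Adj v₁ z} with hRdef
      have hv₀R : v₀ ∈ R := Or.inl (Or.inl rfl)
      have hv₁R : v₁ ∈ R := Or.inl (Or.inr rfl)
      have hv₂R : v₂ ∈ R := Or.inr hadj₂.symm
      -- children of v₁ other than v₂ are at depth k
      have hchild : ∀ c, H.Adj v₁ c → c ≠ v₂ → H.dist u c = k := by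
        intro c hc hne
        rcases adj_dist_cases hacyc hv₁r hc with h | h
        · exact absurd (parent_unique hacyc hv₁r hc hadj₂.symm h hd₂) hne
        · omega
      -- adjacency from outside R into R goes only to v₂
      have hU1 : ∀ w z, w ∉ R → H.Adj w z → z ∈ R → z = v₂ := by
        intro w z hwR hwz hzR
        by_contra hne
        rcases hzR with (rfl | rfl) | hz
        · exact hwR (Or.inl (Or.inr (hN0 w hwz.symm)))
        · exact hwR (Or.inr hwz.symm)
        · exact hwR (Or.inl (Or.inr (hleaf z hz (hchild z hz hne) w hwz.symm)))
      apply step ih hcard hacyc hsub R {v₀, v₁, v₂, v₃} v₀ v₁ hadj₁.symm hv₀R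
      · -- hnoadj
        intro w hwF hwR
        constructor
        · intro hadj
          exact hv₂ne₀ (hU1 w v₀ hwR ⟨hwF, hadj₁.2.1, hadj⟩ hv₀R).symm
        · intro hadj
          exact hv₂ne₁ (hU1 w v₁ hwR ⟨hwF, hadj₁.1, hadj⟩ hv₁R).symm
      · -- hgood
        intro v hv hvh
        have hvF : v ∈ F := hsub hv
        have hvne₀ : v ≠ v₀ := fun h => hvh (by rw [h]; exact Or.inl rfl)
        have hvne₁ : v ≠ v₁ := fun h => hvh (by rw [h]; exact Or.inr (Or.inl rfl))
        have hvne₂ : v ≠ v₂ := fun h => hvh (by rw [h]; exact Or.inr (Or.inr (Or.inl rfl)))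
        have hvne₃ : v ≠ v₃ := fun h => hvh (by rw [h]; exact Or.inr (Or.inr (Or.inr rfl)))
        have hvR : v ∉ R := by
          intro hvR
          rcases hvR with (h | h) | hz
          · exact hvne₀ h
          · exact hvne₁ h
          · exact hnotF' v v₁ v₂ hz.symm (hleaf v hz (hchild v hz hvne₂)) hadj₂.symm
              hvne₂.symm hv
        refine ⟨hvR, ?_⟩
        by_cases hvW : H.Adj v v₂
        · -- v is adjacent to v₂ : it is a child of v₂ at depth k-1
          have hvr : H.Reachable u v := hv₂r.trans hvW.symm.reachable
          have hdv : H.dist u v + 1 = k := by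
            rcases adj_dist_cases hacyc hvr hvW with h | h
            · omega
            · -- v is the parent of v₂ : impossible, v would be v₃
              exfalso
              rcases hv₃ with ⟨hadj₃, hd₃⟩ | ⟨h0, _⟩
              · exact hvne₃ (parent_unique hacyc hv₂r hvW.symm hadj₃.symm
                  (by omega) hd₃)
              · omega
          -- neighbours of v other than v₂ are leaves attached to v
          have hgleaf : ∀ g, H.Adj v g → g ≠ v₂ →
              H.dist u g = k ∧ (∀ z, H.Adj g z → z = v) ∧ g ∉ R := by
            intro g hg hgne
            have hgr : H.Reachable u g := hvr.trans hg.reachable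
            have hdg : H.dist u g = k := by
              rcases adj_dist_cases hacyc hvr hg with h | h
              · exact absurd (parent_unique hacyc hvr hg hvW h (by omega)) hgne
              · omega
            have hgR : g ∉ R := by
              intro hgR
              exact hgne (hU1 v g hvR hg hgR)
            refine ⟨hdg, ?_, hgR⟩
            intro z hz
            rcases adj_dist_cases hacyc hgr hz with h | h
            · exact parent_unique hacyc hgr hz hg.symm (by omega) (by omega)
            · have := hmax z (hgr.trans hz.reachable)
              omega
          -- the P₂-component case is impossible for v
          have hdeg : 2 ≤ degIn G F v := by
            rcases hcond v hv with h | ⟨y, hy⟩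
            · exact h
            · exfalso
              have hyv₂ : y = v₂ := (hy.2.2.2.1 v₂ hvW.2.1 hvW.2.2).symm
              have := hy.2.2.2.2 v₁ hadj₂.2.1 (by rw [hyv₂]; exact hadj₂.2.2)
              exact hvne₁ this.symm
          have hv₂S : v₂ ∈ {w | w ∈ F ∧ G.Adj v w} := ⟨hvW.2.1, hvW.2.2⟩
          have hS₂ : {w | w ∈ F \ R ∧ G.Adj v w} = {w | w ∈ F ∧ G.Adj v w} \ {v₂} := by
            ext w
            simp only [Set.mem_setOf_eq, Set.mem_diff, Set.mem_singleton_iff]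
            constructor
            · rintro ⟨⟨hwF, hwR⟩, hwadj⟩
              exact ⟨⟨hwF, hwadj⟩, fun h => hwR (h ▸ hv₂R)⟩
            · rintro ⟨⟨hwF, hwadj⟩, hwne⟩
              exact ⟨⟨hwF, (hgleaf w ⟨hvF, hwF, hwadj⟩ hwne).2.2⟩, hwadj⟩
          have hcard₂ : degIn G (F \ R) v = degIn G F v - 1 := by
            unfold degIn
            rw [hS₂]
            exact Set.ncard_diff_singleton_of_mem hv₂S
          rcases Nat.lt_or_ge (degIn G F v) 3 with hd3 | hd3
          · -- degree exactly 2 : v forms a new P₂-component with its unique child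
            have hdeq : degIn G F v = 2 := by omega
            have hone : ({w | w ∈ F ∧ G.Adj v w} \ {v₂}).ncard = 1 := by
              have := Set.ncard_diff_singleton_of_mem hv₂S
              unfold degIn at hdeq
              omega
            obtain ⟨g, hg⟩ := Set.ncard_eq_one.mp hone
            have hgS : g ∈ {w | w ∈ F ∧ G.Adj v w} ∧ g ≠ v₂ := by
              have : g ∈ {w | w ∈ F ∧ G.Adj v w} \ {v₂} := by rw [hg]; rfl
              exact ⟨this.1, this.2⟩
            have hgl := hgleaf g ⟨hvF, hgS.1.1, hgS.1.2⟩ hgS.2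
            right
            refine ⟨g, ⟨hvF, hvR⟩, ⟨hgS.1.1, hgl.2.2⟩, hgS.1.2, ?_, ?_⟩
            · intro w hw hadj
              have : w ∈ {w | w ∈ F \ R ∧ G.Adj v w} := ⟨hw, hadj⟩
              rw [hS₂, hg] at this
              exact this
            · intro w hw hadj
              exact hgl.2.1 w ⟨hgS.1.1, hw.1, hadj⟩
          · left
            omega
        · -- v is not adjacent to v₂ : its neighbourhood is untouched
          have hpres : {w | w ∈ F \ R ∧ G.Adj v w} = {w | w ∈ F ∧ G.Adj v w} := by
            ext w
            simp only [Set.mem_setOf_eq, Set.mem_diff]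
            constructor
            · rintro ⟨⟨hwF, _⟩, hwadj⟩
              exact ⟨hwF, hwadj⟩
            · rintro ⟨hwF, hwadj⟩
              refine ⟨⟨hwF, fun hwR => ?_⟩, hwadj⟩
              have := hU1 v w hvR ⟨hvF, hwF, hwadj⟩ hwR
              rw [this] at hwadj
              exact hvW ⟨hvF, hadj₂.1, hwadj⟩
          rcases hcond v hv with hdeg | ⟨y, hy⟩
          · left
            unfold degIn at hdeg ⊢
            rw [hpres]
            exact hdeg
          · right
            have hyR : y ∉ R := by
              intro hyR
              have := hU1 v y hvR ⟨hvF, hy.2.1, hy.2.2.1⟩ hyR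
              rw [this] at hy
              exact hvW ⟨hvF, hadj₂.1, hy.2.2.1⟩
            refine ⟨y, ⟨hvF, hvR⟩, ⟨hy.2.1, hyR⟩, hy.2.2.1, ?_, ?_⟩
            · intro w hw hadj
              exact hy.2.2.2.1 w hw.1 hadj
            · intro w hw hadj
              exact hy.2.2.2.2 w hw.1 hadj
      · -- hurt set is small
        have h1 := Set.ncard_insert_le v₀ ({v₁, v₂, v₃} : Set V)
        have h2 := Set.ncard_insert_le v₁ ({v₂, v₃} : Set V)
        have h3 := Set.ncard_insert_le v₂ ({v₃} : Set V)
        rw [Set.ncard_singleton] at h3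
        omega


/-- If `S` is a minimal feedback vertex set of an `sP₂`-free graph `G` and `F'` is a
skeleton of the forest `F = G - S`, then `|F'| ≤ 3s² - 5s + 2`. -/
theorem skeleton_size_bound {V : Type*} [Fintype V] (G : SimpleGraph V) (s : ℕ) (hs : 1 ≤ s)
    (hfree : sP2Free s G) (S : Set V) (hS : IsMinFVS G S)
    (F' : Set V) (hF' : IsSkeleton G (Sᶜ : Set V) F') :
    F'.ncard ≤ 3 * s ^ 2 + 2 - 5 * s := by
  classical
  obtain ⟨hsubF, -, hcond, -⟩ := hF'
  have hacyc : (restr G (Sᶜ : Set V)).IsAcyclic := restr_isAcyclic hS.1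
  obtain ⟨n, a, b, hm, hcnt⟩ :=
    core G ((Sᶜ : Set V)).ncard (Sᶜ : Set V) F' le_rfl hacyc hsubF hcond
  have hn : n < s := indMatch_lt hfree hm
  obtain ⟨t, rfl⟩ : ∃ t, s = 1 + t := ⟨s - 1, by omega⟩
  have ht : t ≤ t * t := by
    cases t with
    | zero => exact le_rfl
    | succ m => exact Nat.le_mul_of_pos_left _ (Nat.succ_pos m)
  have hexp : 3 * (1 + t) ^ 2 = 3 + 6 * t + 3 * (t * t) := by ring
  omega
end Paper
end

section
/- Every minimal odd cycle transversal of a graph G equals V(G) \ (X ∪ Y) for some maximal independent set X of G and some maximal independent set Y of G - X. Consequently, for every constant s ≥ 1, an sP_2-free graph on n vertices has at most (n^{2s} + 1)² minimal odd cycle transversals. -/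
open SimpleGraph

namespace Paper

variable {V : Type*}

section BY
variable {G : SimpleGraph V}

/-- closed neighbourhood -/
def nbp (G : SimpleGraph V) (x : V) : Set V := insert x {y | G.Adj x y}

lemma mem_nbp {G : SimpleGraph V} {x u : V} : u ∈ nbp G x ↔ u = x ∨ G.Adj x u := by
  simp [nbp]

/-- an "anticomplete matching" of size k inside W -/
def AM (G : SimpleGraph V) (k : ℕ) (W : Set V) : Prop :=
  ∃ f : Fin k → V × V,
    (∀ i, (f i).1 ∈ W ∧ (f i).2 ∈ W ∧ G.Adj (f i).1 (f i).2) ∧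
    (∀ i j, i ≠ j → ∀ u ∈ ({(f i).1, (f i).2} : Set V),
      ∀ w ∈ ({(f j).1, (f j).2} : Set V), u ≠ w ∧ ¬ G.Adj u w)

lemma am_extend {k : ℕ} {W W' : Set V} {a b : V}
    (hm : AM G k W') (ha : a ∈ W) (hb : b ∈ W) (hab : G.Adj a b)
    (hsub : W' ⊆ W \ (nbp G a ∪ nbp G b)) : AM G (k + 1) W := by
  obtain ⟨f, hpair, hcross⟩ := hm
  have hWsub : W' ⊆ W := fun x hx => (hsub hx).1
  have hkey : ∀ x ∈ W', ∀ c ∈ ({a, b} : Set V), x ≠ c ∧ ¬ G.Adj x c := by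
    intro x hx c hc
    have hx2 := (hsub hx).2
    rcases hc with rfl | hc
    · exact ⟨fun h => hx2 (Or.inl (mem_nbp.mpr (Or.inl h))),
        fun h => hx2 (Or.inl (mem_nbp.mpr (Or.inr h.symm)))⟩
    · rcases hc with rfl
      exact ⟨fun h => hx2 (Or.inr (mem_nbp.mpr (Or.inl h))),
        fun h => hx2 (Or.inr (mem_nbp.mpr (Or.inr h.symm)))⟩
  set f' : Fin (k+1) → V × V := Fin.cases (a, b) f with hf'
  have hf0 : f' 0 = (a, b) := rfl
  have hfs : ∀ j : Fin k, f' j.succ = f j := fun j => rfl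
  have hmempair : ∀ (i : Fin k) (u : V),
      u ∈ ({(f' i.succ).1, (f' i.succ).2} : Set V) → u ∈ W' := by
    intro i u hu
    rw [hfs] at hu
    rcases hu with rfl | hu
    · exact (hpair i).1
    · rcases hu with rfl; exact (hpair i).2.1
  refine ⟨f', ?_, ?_⟩
  · intro i
    rcases Fin.eq_zero_or_eq_succ i with rfl | ⟨j, rfl⟩
    · exact ⟨ha, hb, hab⟩
    · rw [hfs]; exact ⟨hWsub (hpair j).1, hWsub (hpair j).2.1, (hpair j).2.2⟩
  · intro i j hij u hu w hw
    rcases Fin.eq_zero_or_eq_succ i with rfl | ⟨i', rfl⟩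
    · rcases Fin.eq_zero_or_eq_succ j with rfl | ⟨j', rfl⟩
      · exact absurd rfl hij
      · have hwW' : w ∈ W' := hmempair j' w hw
        rw [hf0] at hu
        have := hkey w hwW' u hu
        exact ⟨fun h => this.1 h.symm, fun h => this.2 h.symm⟩
    · have huW' : u ∈ W' := hmempair i' u hu
      rcases Fin.eq_zero_or_eq_succ j with rfl | ⟨j', rfl⟩
      · rw [hf0] at hw
        exact hkey u huW' w hw
      · have hne : i' ≠ j' := fun h => hij (by rw [h])
        rw [hfs] at hu hw
        exact hcross i' j' hne u hu w hw

lemma not_am_of_free {s : ℕ} (hfree : sP2Free s G) (W : Set V) : ¬ AM G s W := by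
  rintro ⟨f, hpair, hcross⟩
  apply hfree
  have fin2 : ∀ j : Fin 2, j = 0 ∨ j = 1 := by decide
  set g : Fin s × Fin 2 → V := fun p => if p.2 = 0 then (f p.1).1 else (f p.1).2 with hg
  have hgv0 : ∀ i : Fin s, g (i, 0) = (f i).1 := fun i => if_pos rfl
  have hgv1 : ∀ i : Fin s, g (i, 1) = (f i).2 := by intro i; simp [hg]
  have hmem : ∀ p : Fin s × Fin 2, g p ∈ ({(f p.1).1, (f p.1).2} : Set V) := by
    intro p; by_cases h : p.2 = 0 <;> simp [hg, h]
  have hadj_iff : ∀ p q : Fin s × Fin 2, G.Adj (g p) (g q) ↔ (p.1 = q.1 ∧ p.2 ≠ q.2) := by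
    rintro ⟨i, j⟩ ⟨i', j'⟩
    by_cases hii : i = i'
    · subst hii
      by_cases hjj : j = j'
      · subst hjj
        constructor
        · intro h; exact absurd h (G.irrefl)
        · rintro ⟨-, h⟩; exact absurd rfl h
      · constructor
        · intro _; exact ⟨rfl, hjj⟩
        · intro _
          rcases fin2 j with rfl | rfl <;> rcases fin2 j' with rfl | rfl
          · exact absurd rfl hjj
          · rw [hgv0, hgv1]; exact (hpair i).2.2
          · rw [hgv1, hgv0]; exact ((hpair i).2.2).symm
          · exact absurd rfl hjj
    · constructor
      · intro h
        exact absurd h (hcross i i' hii (g (i, j)) (hmem (i,j)) (g (i', j')) (hmem (i',j'))).2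
      · rintro ⟨h, -⟩; exact absurd h hii
  have hginj : Function.Injective g := by
    rintro ⟨i, j⟩ ⟨i', j'⟩ hpq
    by_cases hii : i = i'
    · subst hii
      by_cases hjj : j = j'
      · exact Prod.ext rfl hjj
      · exfalso
        have : G.Adj (g (i, j)) (g (i, j')) := (hadj_iff _ _).mpr ⟨rfl, hjj⟩
        rw [hpq] at this
        exact G.irrefl this
    · exact absurd hpq (hcross i i' hii _ (hmem (i,j)) _ (hmem (i',j'))).1
  refine ⟨Set.range g, ⟨?_⟩⟩
  refine SimpleGraph.Iso.symm ⟨(Equiv.ofInjective g hginj), ?_⟩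
  intro p q
  exact hadj_iff p q

lemma indep_not_adj {S : Set V} (h : IsIndep G S) {u w : V} (hu : u ∈ S) (hw : w ∈ S)
    (hadj : G.Adj u w) : False :=
  h hu hw (G.ne_of_adj hadj) hadj

lemma misin_edgeless {W : Set V} (hW : ∀ x ∈ W, ∀ y ∈ W, ¬ G.Adj x y) :
    {S : Set V | IsMaxIndepIn G W S} = {W} := by
  ext S
  simp only [Set.mem_setOf_eq, Set.mem_singleton_iff]
  constructor
  · rintro ⟨hsub, _, hmax⟩
    refine hsub.antisymm ?_
    intro v hv
    by_contra h
    obtain ⟨w, hwS, hadj⟩ := hmax v hv h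
    exact hW v hv w (hsub hwS) hadj
  · rintro rfl
    exact ⟨subset_rfl, fun x hx y hy _ => hW x hx y hy, fun v hv h => absurd hv h⟩

lemma step_mis {W S : Set V} {a b : V}
    (hS : IsMaxIndepIn G W S) (hbS : b ∉ S) (haS : a ∈ S) (hab : G.Adj b a)
    (hmin : ∀ v ∈ W, v ∉ S → {u | u ∈ S ∧ G.Adj v u} ⊆ {u | u ∈ S ∧ G.Adj b u} →
      {u | u ∈ S ∧ G.Adj v u} = {u | u ∈ S ∧ G.Adj b u}) :
    IsMaxIndepIn G (W \ (nbp G a ∪ nbp G b)) (S \ (nbp G a ∪ nbp G b)) := by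
  obtain ⟨hSW, hInd, hMax⟩ := hS
  refine ⟨Set.diff_subset_diff_left hSW, hInd.mono Set.diff_subset, ?_⟩
  intro v hv hvS'
  have hvW : v ∈ W := hv.1
  have hvN : v ∉ nbp G a ∪ nbp G b := hv.2
  have hvS : v ∉ S := fun h => hvS' ⟨h, hvN⟩
  by_contra hno
  push_neg at hno
  have hsub : {u | u ∈ S ∧ G.Adj v u} ⊆ {u | u ∈ S ∧ G.Adj b u} := by
    rintro u ⟨huS, hadj⟩
    have huN : u ∈ nbp G a ∪ nbp G b := by
      by_contra h
      exact hno u ⟨huS, h⟩ hadj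
    rcases huN with hua | hub
    · rcases mem_nbp.mp hua with rfl | hau
      · exact absurd (Or.inl (mem_nbp.mpr (Or.inr hadj.symm))) hvN
      · exact absurd hau (fun h => indep_not_adj hInd haS huS h)
    · rcases mem_nbp.mp hub with rfl | hbu
      · exact absurd huS hbS
      · exact ⟨huS, hbu⟩
  have heq := hmin v hvW hvS hsub
  have haD : a ∈ {u | u ∈ S ∧ G.Adj v u} := heq ▸ (⟨haS, hab⟩ : a ∈ {u | u ∈ S ∧ G.Adj b u})
  exact hvN (Or.inl (mem_nbp.mpr (Or.inr haD.2.symm)))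

lemma step_subset {W S₁ S₂ : Set V} {a b : V}
    (h1 : IsMaxIndepIn G W S₁) (h2 : IsMaxIndepIn G W S₂)
    (hbS₁ : b ∉ S₁) (haS₁ : a ∈ S₁) (haS₂ : a ∈ S₂) (hab : G.Adj b a)
    (hmin1 : ∀ v ∈ W, v ∉ S₁ → {u | u ∈ S₁ ∧ G.Adj v u} ⊆ {u | u ∈ S₁ ∧ G.Adj b u} →
      {u | u ∈ S₁ ∧ G.Adj v u} = {u | u ∈ S₁ ∧ G.Adj b u})
    (heq : S₁ \ (nbp G a ∪ nbp G b) = S₂ \ (nbp G a ∪ nbp G b)) : S₁ ⊆ S₂ := by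
  intro u huS₁
  by_contra huS₂
  have huN : u ∈ nbp G a ∪ nbp G b := by
    by_contra h
    have : u ∈ S₂ \ (nbp G a ∪ nbp G b) := heq ▸ Set.mem_diff_of_mem huS₁ h
    exact huS₂ this.1
  -- eliminate u ∈ nbp a
  have : True := trivial
  rcases huN with hua | hub
  · rcases mem_nbp.mp hua with rfl | hau
    · exact huS₂ haS₂
    · exact indep_not_adj h1.2.1 haS₁ huS₁ hau
  · rcases mem_nbp.mp hub with rfl | hbu
    · exact hbS₁ huS₁
    · -- main line
      obtain ⟨w, hwS₂, huw⟩ := h2.2.2 u (h1.1 huS₁) huS₂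
      have hwS₁ : w ∉ S₁ := fun h => indep_not_adj h1.2.1 huS₁ h huw
      have hwW : w ∈ W := h2.1 hwS₂
      by_cases hsub : {t | t ∈ S₁ ∧ G.Adj w t} ⊆ {t | t ∈ S₁ ∧ G.Adj b t}
      · have := hmin1 w hwW hwS₁ hsub
        have haw : a ∈ {t | t ∈ S₁ ∧ G.Adj w t} :=
          this ▸ (⟨haS₁, hab⟩ : a ∈ {t | t ∈ S₁ ∧ G.Adj b t})
        exact indep_not_adj h2.2.1 hwS₂ haS₂ haw.2
      · obtain ⟨t, htw, htb⟩ := Set.not_subset.mp hsub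
        obtain ⟨htS₁, hwt⟩ := htw
        have hbt : ¬ G.Adj b t := fun h => htb ⟨htS₁, h⟩
        have htN : t ∉ nbp G a ∪ nbp G b := by
          rintro (hta | htb')
          · rcases mem_nbp.mp hta with rfl | hat
            · exact indep_not_adj h2.2.1 hwS₂ haS₂ hwt
            · exact indep_not_adj h1.2.1 haS₁ htS₁ hat
          · rcases mem_nbp.mp htb' with rfl | hbt'
            · exact hbS₁ htS₁
            · exact hbt hbt'
        have htS₂ : t ∈ S₂ := by
          have : t ∈ S₂ \ (nbp G a ∪ nbp G b) := heq ▸ Set.mem_diff_of_mem htS₁ htN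
          exact this.1
        exact indep_not_adj h2.2.1 hwS₂ htS₂ hwt

lemma count_misin [Fintype V] (G : SimpleGraph V) :
    ∀ (s : ℕ) (W : Set V), ¬ AM G (s + 1) W →
      {S : Set V | IsMaxIndepIn G W S}.ncard ≤ max 1 (Fintype.card V ^ (2 * s)) := by
  intro s
  induction s with
  | zero =>
    intro W hAM
    have hW : ∀ x ∈ W, ∀ y ∈ W, ¬ G.Adj x y := by
      intro x hx y hy hadj
      apply hAM
      refine ⟨fun _ => (x, y), fun _ => ⟨hx, hy, hadj⟩, ?_⟩
      intro i j hij
      exact absurd (Fin.ext (by omega)) hij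
    rw [misin_edgeless hW]
    simp
  | succ s ih =>
    intro W hAM
    classical
    by_cases hedge : ∃ x ∈ W, ∃ y ∈ W, G.Adj x y
    · obtain ⟨x₀, hx₀, y₀, hy₀, hxy₀⟩ := hedge
      have hn1 : 1 ≤ Fintype.card V := Fintype.card_pos_iff.mpr ⟨x₀⟩
      -- choice of codes
      have key : ∀ S : Set V, IsMaxIndepIn G W S → ∃ p : V × V,
          p.2 ∈ W ∧ p.2 ∉ S ∧ p.1 ∈ S ∧ G.Adj p.2 p.1 ∧
          (∀ v ∈ W, v ∉ S → {u | u ∈ S ∧ G.Adj v u} ⊆ {u | u ∈ S ∧ G.Adj p.2 u} →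
            {u | u ∈ S ∧ G.Adj v u} = {u | u ∈ S ∧ G.Adj p.2 u}) := by
        intro S hS
        have hcand : (W \ S).Nonempty := by
          by_cases hx : x₀ ∈ S
          · by_cases hy : y₀ ∈ S
            · exact absurd hxy₀ (fun h => indep_not_adj hS.2.1 hx hy h)
            · exact ⟨y₀, hy₀, hy⟩
          · exact ⟨x₀, hx₀, hx⟩
        obtain ⟨b, hbWS, hbmin⟩ := Set.Finite.exists_minimalFor
          (fun v => {u | u ∈ S ∧ G.Adj v u}) (W \ S) (Set.toFinite _) hcand
        obtain ⟨a, haS, hba⟩ := hS.2.2 b hbWS.1 hbWS.2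
        refine ⟨(a, b), hbWS.1, hbWS.2, haS, hba, ?_⟩
        intro v hvW hvS hsub
        exact hsub.antisymm (hbmin ⟨hvW, hvS⟩ hsub)
      set code : Set V → V × V := fun S =>
        if h : IsMaxIndepIn G W S then (key S h).choose else (x₀, x₀) with hcodedef
      have hcode : ∀ (S : Set V) (h : IsMaxIndepIn G W S),
          (code S).2 ∈ W ∧ (code S).2 ∉ S ∧ (code S).1 ∈ S ∧ G.Adj (code S).2 (code S).1 ∧
          (∀ v ∈ W, v ∉ S →
            {u | u ∈ S ∧ G.Adj v u} ⊆ {u | u ∈ S ∧ G.Adj (code S).2 u} →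
            {u | u ∈ S ∧ G.Adj v u} = {u | u ∈ S ∧ G.Adj (code S).2 u}) := by
        intro S h
        simp only [hcodedef, dif_pos h]
        exact (key S h).choose_spec
      -- finset conversions
      have hMMfin : {S : Set V | IsMaxIndepIn G W S}.Finite := Set.toFinite _
      set A : Finset (Set V) := hMMfin.toFinset with hA
      have hcardA : {S : Set V | IsMaxIndepIn G W S}.ncard = A.card := by
        rw [hA, Set.ncard_eq_toFinset_card _ hMMfin]
      rw [hcardA]
      have hfiber := Finset.card_eq_sum_card_fiberwise
        (f := code) (s := A) (t := Finset.univ) (fun x _ => Finset.mem_univ _)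
      rw [hfiber]
      have hperfiber : ∀ p : V × V,
          (A.filter fun S => code S = p).card ≤ max 1 (Fintype.card V ^ (2 * s)) := by
        intro p
        rcases Finset.eq_empty_or_nonempty (A.filter fun S => code S = p) with he | hne
        · rw [he]; simp
        · obtain ⟨S₀, hS₀⟩ := hne
          rw [Finset.mem_filter] at hS₀
          have hS₀W : IsMaxIndepIn G W S₀ := by
            have := hS₀.1
            rw [hA, Set.Finite.mem_toFinset] at this
            exact this
          obtain ⟨hbW, hbS₀, haS₀, hba, -⟩ := hS₀.2 ▸ hcode S₀ hS₀W
          set a := p.1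
          set b := p.2
          have haW : a ∈ W := hS₀W.1 haS₀
          set W' := W \ (nbp G a ∪ nbp G b) with hW'
          have hAM' : ¬ AM G (s + 1) W' := by
            intro h
            exact hAM (am_extend h haW hbW hba.symm subset_rfl)
          have hIH := ih W' hAM'
          have hMM'fin : {S : Set V | IsMaxIndepIn G W' S}.Finite := Set.toFinite _
          have hinj : ∀ S ∈ (A.filter fun S => code S = p),
              (S \ (nbp G a ∪ nbp G b)) ∈ hMM'fin.toFinset := by
            intro S hS
            rw [Finset.mem_filter] at hS
            have hSW : IsMaxIndepIn G W S := by
              have := hS.1; rw [hA, Set.Finite.mem_toFinset] at this; exact this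
            obtain ⟨_, hbS, haS, hba', hmin⟩ := hS.2 ▸ hcode S hSW
            rw [Set.Finite.mem_toFinset]
            exact step_mis hSW hbS haS hba' hmin
          have hinjOn : Set.InjOn (fun S => S \ (nbp G a ∪ nbp G b))
              ↑(A.filter fun S => code S = p) := by
            intro S₁ hS₁ S₂ hS₂ hdiff
            simp only [Finset.coe_filter, Set.mem_setOf_eq] at hS₁ hS₂
            have h1 : IsMaxIndepIn G W S₁ := by
              have := hS₁.1; rw [hA, Set.Finite.mem_toFinset] at this; exact this
            have h2 : IsMaxIndepIn G W S₂ := by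
              have := hS₂.1; rw [hA, Set.Finite.mem_toFinset] at this; exact this
            obtain ⟨-, hbS₁, haS₁, hba₁, hmin₁⟩ := hS₁.2 ▸ hcode S₁ h1
            obtain ⟨-, hbS₂, haS₂, hba₂, hmin₂⟩ := hS₂.2 ▸ hcode S₂ h2
            exact (step_subset h1 h2 hbS₁ haS₁ haS₂ hba₁ hmin₁ hdiff).antisymm
              (step_subset h2 h1 hbS₂ haS₂ haS₁ hba₂ hmin₂ hdiff.symm)
          calc (A.filter fun S => code S = p).card
              ≤ hMM'fin.toFinset.card := Finset.card_le_card_of_injOn _ hinj hinjOn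
            _ = {S : Set V | IsMaxIndepIn G W' S}.ncard :=
                (Set.ncard_eq_toFinset_card _ hMM'fin).symm
            _ ≤ max 1 (Fintype.card V ^ (2 * s)) := hIH
      calc ∑ p ∈ (Finset.univ : Finset (V × V)), (A.filter fun S => code S = p).card
          ≤ (Finset.univ : Finset (V × V)).card • max 1 (Fintype.card V ^ (2 * s)) :=
            Finset.sum_le_card_nsmul _ _ _ (fun p _ => hperfiber p)
        _ = Fintype.card V ^ 2 * max 1 (Fintype.card V ^ (2 * s)) := by
            rw [Finset.card_univ, Fintype.card_prod, smul_eq_mul, sq]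
        _ ≤ max 1 (Fintype.card V ^ (2 * (s + 1))) := by
            have h1 : max 1 (Fintype.card V ^ (2 * s)) = Fintype.card V ^ (2 * s) :=
              max_eq_right (Nat.one_le_pow _ _ hn1)
            rw [h1]
            have : Fintype.card V ^ 2 * Fintype.card V ^ (2 * s)
                = Fintype.card V ^ (2 * (s + 1)) := by
              rw [← pow_add]; ring_nf
            rw [this]
            exact le_max_right _ _
    · push_neg at hedge
      have hW : ∀ x ∈ W, ∀ y ∈ W, ¬ G.Adj x y := hedge
      rw [misin_edgeless hW]
      simp

end BY

section P1
variable {G : SimpleGraph V}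

lemma not_indep_insert {X : Set V} {v w : V} (hw : w ∈ X) (h : G.Adj v w) :
    ¬ IsIndep G (insert v X) := by
  intro hI
  exact hI (Set.mem_insert v X) (Set.mem_insert_of_mem v hw) (G.ne_of_adj h) h

lemma colorable_of_partition {W X : Set V} (hXW : X ⊆ W) (hX : IsIndep G X)
    (hY : IsIndep G (W \ X)) : (G.induce W).Colorable 2 := by
  classical
  refine ⟨SimpleGraph.Coloring.mk (fun w => if (w : V) ∈ X then 0 else 1) ?_⟩
  intro v w hadj heq
  have hvw : G.Adj (v : V) (w : V) := hadj
  by_cases hv : (v : V) ∈ X <;> by_cases hw : (w : V) ∈ X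
  · exact indep_not_adj hX hv hw hvw
  · simp only [if_pos hv, if_neg hw] at heq; exact absurd heq (by decide)
  · simp only [if_neg hv, if_pos hw] at heq; exact absurd heq (by decide)
  · exact indep_not_adj hY ⟨v.2, hv⟩ ⟨w.2, hw⟩ hvw

lemma part1 [Fintype V] {S : Set V} (hS : IsMinOCT G S) :
    ∃ X Y : Set V, IsMaxIndep G X ∧ IsMaxIndepIn G (Xᶜ : Set V) Y ∧ S = (X ∪ Y)ᶜ := by
  classical
  obtain ⟨C⟩ := hS.1
  set P : Set (Set V) := {X | X ⊆ Sᶜ ∧ IsIndep G X ∧ IsIndep G (Sᶜ \ X)} with hP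
  have fin2 : ∀ j : Fin 2, j ≠ 0 → j = 1 := by decide
  have hPne : P.Nonempty := by
    refine ⟨{v | ∃ h : v ∈ (Sᶜ : Set V), C ⟨v, h⟩ = 0}, fun v hv => hv.1, ?_, ?_⟩
    · rintro u ⟨hu, hcu⟩ w ⟨hw, hcw⟩ hne hadj
      have : (G.induce (Sᶜ : Set V)).Adj ⟨u, hu⟩ ⟨w, hw⟩ := hadj
      exact C.valid this (hcu.trans hcw.symm)
    · rintro u ⟨hu, hcu⟩ w ⟨hw, hcw⟩ hne hadj
      have hcu1 : C ⟨u, hu⟩ = 1 := fin2 _ (fun h => hcu ⟨hu, h⟩)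
      have hcw1 : C ⟨w, hw⟩ = 1 := fin2 _ (fun h => hcw ⟨hw, h⟩)
      have : (G.induce (Sᶜ : Set V)).Adj ⟨u, hu⟩ ⟨w, hw⟩ := hadj
      exact C.valid this (hcu1.trans hcw1.symm)
  obtain ⟨X, hXP, hXmax⟩ := Set.Finite.exists_maximalFor Set.ncard P (Set.toFinite P) hPne
  obtain ⟨hXS, hXInd, hYInd⟩ := hXP
  set Y : Set V := Sᶜ \ X with hY
  -- c1 : every y in Y has a neighbour in X
  have c1 : ∀ y ∈ Y, ∃ x ∈ X, G.Adj y x := by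
    intro y hy
    by_contra hno
    push_neg at hno
    have hyX : y ∉ X := hy.2
    have hins : insert y X ∈ P := by
      refine ⟨Set.insert_subset hy.1 hXS, ?_, ?_⟩
      · rintro u (rfl | hu) w (rfl | hw) hne hadj
        · exact hne rfl
        · exact hno w hw hadj
        · exact hno u hu hadj.symm
        · exact hXInd hu hw hne hadj
      · have : Sᶜ \ insert y X ⊆ Sᶜ \ X := by
          intro u hu
          exact ⟨hu.1, fun h => hu.2 (Set.mem_insert_of_mem _ h)⟩
        exact hYInd.mono this
    have hcard := hXmax hins (by
      rw [Set.ncard_insert_of_notMem hyX (Set.toFinite X)]; omega)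
    rw [Set.ncard_insert_of_notMem hyX (Set.toFinite X)] at hcard
    omega
  -- c2 : every v in S has a neighbour in X and a neighbour in Y
  have c2X : ∀ v ∈ S, ∃ x ∈ X, G.Adj v x := by
    intro v hv
    by_contra hno
    push_neg at hno
    apply hS.2 (S \ {v}) (Set.sdiff_singleton_ssubset.mpr hv)
    have hcompl : ((S \ {v})ᶜ : Set V) = Sᶜ ∪ {v} := by
      ext u; by_cases hu : u = v <;> simp [hu, Set.mem_compl_iff]
    refine colorable_of_partition (X := insert v X) ?_ ?_ ?_
    · rw [hcompl]
      exact Set.insert_subset (Set.mem_union_right _ rfl)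
        (fun u hu => Set.mem_union_left _ (hXS hu))
    · rintro u (rfl | hu) w (rfl | hw) hne hadj
      · exact hne rfl
      · exact hno w hw hadj
      · exact hno u hu hadj.symm
      · exact hXInd hu hw hne hadj
    · have hsub : (S \ {v})ᶜ \ insert v X ⊆ Y := by
        intro u hu
        rw [hcompl] at hu
        have huv : u ≠ v := fun h => hu.2 (h ▸ Set.mem_insert v X)
        rcases hu.1 with h | h
        · exact ⟨h, fun hX' => hu.2 (Set.mem_insert_of_mem _ hX')⟩
        · exact absurd h huv
      exact hYInd.mono hsub
  have c2Y : ∀ v ∈ S, ∃ y ∈ Y, G.Adj v y := by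
    intro v hv
    by_contra hno
    push_neg at hno
    apply hS.2 (S \ {v}) (Set.sdiff_singleton_ssubset.mpr hv)
    have hcompl : ((S \ {v})ᶜ : Set V) = Sᶜ ∪ {v} := by
      ext u; by_cases hu : u = v <;> simp [hu, Set.mem_compl_iff]
    have hvX : v ∉ X := fun h => (hXS h) hv
    refine colorable_of_partition (X := X) ?_ ?_ ?_
    · rw [hcompl]; exact fun u hu => Set.mem_union_left _ (hXS hu)
    · exact hXInd
    · have hsub : (S \ {v})ᶜ \ X ⊆ insert v Y := by
        intro u hu
        rw [hcompl] at hu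
        rcases hu.1 with h | h
        · exact Set.mem_insert_of_mem _ ⟨h, hu.2⟩
        · exact h ▸ Set.mem_insert _ _
      refine Set.Pairwise.mono hsub ?_
      rintro u (rfl | hu) w (rfl | hw) hne hadj
      · exact hne rfl
      · exact hno w hw hadj
      · exact hno u hu hadj.symm
      · exact hYInd hu hw hne hadj
  refine ⟨X, Y, ⟨hXInd, ?_⟩, ⟨?_, hYInd, ?_⟩, ?_⟩
  · -- maximality of X
    intro v hvX
    by_cases hvS : v ∈ S
    · obtain ⟨x, hx, hadj⟩ := c2X v hvS
      exact not_indep_insert hx hadj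
    · have hvY : v ∈ Y := ⟨hvS, hvX⟩
      obtain ⟨x, hx, hadj⟩ := c1 v hvY
      exact not_indep_insert hx hadj
  · -- Y ⊆ Xᶜ
    exact fun y hy => hy.2
  · -- maximality of Y within Xᶜ
    intro v hvXc hvY
    have hvS : v ∈ S := by
      by_contra hvS
      exact hvY ⟨hvS, hvXc⟩
    obtain ⟨y, hy, hadj⟩ := c2Y v hvS
    exact ⟨y, hy, hadj⟩
  · -- S = (X ∪ Y)ᶜ
    have : X ∪ Y = Sᶜ := by
      apply Set.Subset.antisymm
      · exact Set.union_subset hXS (fun y hy => hy.1)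
      · intro u hu
        by_cases h : u ∈ X
        · exact Or.inl h
        · exact Or.inr ⟨hu, h⟩
    rw [this, compl_compl]

end P1

section FINAL
variable {G : SimpleGraph V}

lemma maxIndep_in_univ {X : Set V} (h : IsMaxIndep G X) : IsMaxIndepIn G Set.univ X := by
  refine ⟨Set.subset_univ _, h.1, ?_⟩
  intro v _ hvX
  by_contra hno
  push_neg at hno
  apply h.2 v hvX
  rintro x (rfl | hx) y (rfl | hy) hne hadj
  · exact hne rfl
  · exact hno y hy hadj
  · exact hno x hx hadj.symm
  · exact h.1 hx hy hne hadj


/-- Every minimal odd cycle transversal of `G` equals `V(G) \ (X ∪ Y)` for some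
maximal independent set `X` of `G` and some maximal independent set `Y` of `G - X`; consequently
an `sP₂`-free graph on `n` vertices has at most `(n ^ (2s) + 1)²` minimal odd cycle
transversals. -/
theorem min_oct_structure_and_count {V : Type*} [Fintype V] (G : SimpleGraph V) :
    (∀ S : Set V, IsMinOCT G S →
      ∃ X Y : Set V, IsMaxIndep G X ∧ IsMaxIndepIn G (Xᶜ : Set V) Y ∧ S = (X ∪ Y)ᶜ) ∧
    (∀ s : ℕ, 1 ≤ s → sP2Free s G →
      {S : Set V | IsMinOCT G S}.ncard ≤ (Fintype.card V ^ (2 * s) + 1) ^ 2) := by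
  classical
  classical
  refine ⟨fun S hS => part1 hS, ?_⟩
  intro s hs hfree
  set n := Fintype.card V with hn
  -- the Balas-Yu bound for any W
  have hBY : ∀ W : Set V, {T : Set V | IsMaxIndepIn G W T}.ncard ≤ n ^ (2 * s) + 1 := by
    intro W
    obtain ⟨t, rfl⟩ : ∃ t, s = t + 1 := ⟨s - 1, by omega⟩
    have h1 := count_misin G t W (not_am_of_free hfree W)
    rw [← hn] at h1
    refine h1.trans ?_
    rcases Nat.eq_zero_or_pos n with h0 | hpos
    · have e1 : n ^ (2 * t) ≤ 1 := by
        rcases Nat.eq_zero_or_pos t with rfl | ht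
        · rw [h0]; simp
        · rw [h0, Nat.zero_pow (by omega)]; omega
      exact max_le (by omega) (by omega)
    · have hmax : max 1 (n ^ (2 * t)) = n ^ (2 * t) := max_eq_right (Nat.one_le_pow _ _ hpos)
      rw [hmax]
      have h2 : n ^ (2 * t) ≤ n ^ (2 * (t + 1)) := Nat.pow_le_pow_right hpos (by omega)
      omega
  -- choice of X, Y for each minimal OCT
  set F : Set V → Set V × Set V := fun S =>
    if h : IsMinOCT G S then ((part1 h).choose, (part1 h).choose_spec.choose) else (∅, ∅)
    with hF
  have hFspec : ∀ S : Set V, IsMinOCT G S →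
      IsMaxIndep G (F S).1 ∧ IsMaxIndepIn G ((F S).1ᶜ : Set V) (F S).2 ∧
      S = ((F S).1 ∪ (F S).2)ᶜ := by
    intro S h
    simp only [hF, dif_pos h]
    exact (part1 h).choose_spec.choose_spec
  have hMfin : {S : Set V | IsMinOCT G S}.Finite := Set.toFinite _
  set A : Finset (Set V) := hMfin.toFinset with hA
  rw [Set.ncard_eq_toFinset_card _ hMfin]
  -- the set of maximal independent sets, as a finset
  have hXfin : {X : Set V | IsMaxIndep G X}.Finite := Set.toFinite _
  set B : Finset (Set V) := hXfin.toFinset with hB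
  have hBcard : B.card ≤ n ^ (2 * s) + 1 := by
    have hsub : {X : Set V | IsMaxIndep G X} ⊆ {X : Set V | IsMaxIndepIn G Set.univ X} :=
      fun X hX => maxIndep_in_univ hX
    calc B.card = {X : Set V | IsMaxIndep G X}.ncard :=
          (Set.ncard_eq_toFinset_card _ hXfin).symm
      _ ≤ {X : Set V | IsMaxIndepIn G Set.univ X}.ncard :=
          Set.ncard_le_ncard hsub (Set.toFinite _)
      _ ≤ n ^ (2 * s) + 1 := hBY _
  have hmapsto : ∀ S ∈ A, (F S).1 ∈ B := by
    intro S hSA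
    rw [hA, Set.Finite.mem_toFinset] at hSA
    rw [hB, Set.Finite.mem_toFinset]
    exact (hFspec S hSA).1
  rw [Finset.card_eq_sum_card_fiberwise (f := fun S => (F S).1) (t := B) hmapsto]
  have hper : ∀ X ∈ B, (A.filter fun S => (F S).1 = X).card ≤ n ^ (2 * s) + 1 := by
    intro X _
    have hYfin : {Y : Set V | IsMaxIndepIn G (Xᶜ : Set V) Y}.Finite := Set.toFinite _
    have hinj : ∀ S ∈ (A.filter fun S => (F S).1 = X), (F S).2 ∈ hYfin.toFinset := by
      intro S hS
      rw [Finset.mem_filter] at hS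
      have hSM : IsMinOCT G S := by
        have := hS.1; rw [hA, Set.Finite.mem_toFinset] at this; exact this
      rw [Set.Finite.mem_toFinset]
      have := (hFspec S hSM).2.1
      rw [hS.2] at this
      exact this
    have hinjOn : Set.InjOn (fun S => (F S).2) ↑(A.filter fun S => (F S).1 = X) := by
      intro S₁ hS₁ S₂ hS₂ hF2
      simp only [Finset.coe_filter, Set.mem_setOf_eq] at hS₁ hS₂
      have h1 : IsMinOCT G S₁ := by
        have := hS₁.1; rw [hA, Set.Finite.mem_toFinset] at this; exact this
      have h2 : IsMinOCT G S₂ := by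
        have := hS₂.1; rw [hA, Set.Finite.mem_toFinset] at this; exact this
      have e1 := (hFspec S₁ h1).2.2
      have e2 := (hFspec S₂ h2).2.2
      simp only at hF2
      rw [e1, e2, hS₁.2, hS₂.2, hF2]
    calc (A.filter fun S => (F S).1 = X).card
        ≤ hYfin.toFinset.card := Finset.card_le_card_of_injOn _ hinj hinjOn
      _ = {Y : Set V | IsMaxIndepIn G (Xᶜ : Set V) Y}.ncard :=
          (Set.ncard_eq_toFinset_card _ hYfin).symm
      _ ≤ n ^ (2 * s) + 1 := hBY _
  calc ∑ X ∈ B, (A.filter fun S => (F S).1 = X).card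
      ≤ B.card • (n ^ (2 * s) + 1) := Finset.sum_le_card_nsmul _ _ _ hper
    _ = B.card * (n ^ (2 * s) + 1) := smul_eq_mul _ _
    _ ≤ (n ^ (2 * s) + 1) * (n ^ (2 * s) + 1) := Nat.mul_le_mul_right _ hBcard
    _ = (n ^ (2 * s) + 1) ^ 2 := (sq _).symm


end FINAL
end Paper
end

section
/- Let G be a graph and let G' be obtained from G by adding, for each edge uv of G, a new path of even length 2⌊p/2⌋ between u and v (with new internal vertices), keeping the original edge uv. Then for every k, G has a connected vertex cover of size at most k if and only if G' has a connected odd cycle transversal of size at most k. -/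
open SimpleGraph

namespace Paper

variable {V : Type*}

/-- The graph obtained from `G` by adding, for each edge `e` of `G` (with endpoints given by the
orientation `o`), a new path with `q` edges (through `q - 1` new internal vertices) between its
endpoints, keeping all original edges of `G`. -/
def addPaths (G : SimpleGraph V) (q : ℕ) (o : G.edgeSet → V × V) :
    SimpleGraph (V ⊕ (G.edgeSet × Fin (q - 1))) :=
  SimpleGraph.fromRel fun x y =>
    (∃ a b : V, x = Sum.inl a ∧ y = Sum.inl b ∧ G.Adj a b) ∨
    (∃ (e : G.edgeSet) (i : Fin (q - 1)),
      x = Sum.inl (o e).1 ∧ y = Sum.inr (e, i) ∧ (i : ℕ) = 0) ∨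
    (∃ (e : G.edgeSet) (i j : Fin (q - 1)),
      x = Sum.inr (e, i) ∧ y = Sum.inr (e, j) ∧ (j : ℕ) = (i : ℕ) + 1) ∨
    (∃ (e : G.edgeSet) (i : Fin (q - 1)),
      x = Sum.inr (e, i) ∧ y = Sum.inl (o e).2 ∧ (i : ℕ) = q - 2)

section Aux

open Sum

variable {G : SimpleGraph V} {q : ℕ} {o : G.edgeSet → V × V}

lemma addPaths_adj_inl_inl {a b : V} :
    (addPaths G q o).Adj (inl a) (inl b) ↔ G.Adj a b := by
  constructor
  · rintro ⟨hne, h | h⟩ <;>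
      rcases h with ⟨a', b', ha, hb, hab⟩ | ⟨e, i, _, hb, _⟩ | ⟨e, i, j, ha, _, _⟩ |
        ⟨e, i, ha, _, _⟩ <;> simp_all
    exact hab.symm
  · intro h
    exact ⟨by simpa using h.ne, Or.inl (Or.inl ⟨a, b, rfl, rfl, h⟩)⟩

lemma addPaths_adj_inr_inl {e : G.edgeSet} {i : Fin (q - 1)} {w : V}
    (h : (addPaths G q o).Adj (inr (e, i)) (inl w)) : w = (o e).1 ∨ w = (o e).2 := by
  rcases h with ⟨hne, h | h⟩ <;>
    rcases h with ⟨a', b', ha, hb, hab⟩ | ⟨e', i', ha, hb, _⟩ | ⟨e', i', j', ha, hb, _⟩ |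
      ⟨e', i', ha, hb, _⟩ <;> simp_all

lemma addPaths_adj_inr_inr {e f : G.edgeSet} {i j : Fin (q - 1)}
    (h : (addPaths G q o).Adj (inr (e, i)) (inr (f, j))) : e = f := by
  rcases h with ⟨hne, h | h⟩ <;>
    rcases h with ⟨a', b', ha, hb, hab⟩ | ⟨e', i', ha, hb, _⟩ | ⟨e', i', j', ha, hb, _⟩ |
      ⟨e', i', ha, hb, _⟩ <;> simp_all

lemma addPaths_adj_start {e : G.edgeSet} {i : Fin (q - 1)} (hi : (i : ℕ) = 0) :
    (addPaths G q o).Adj (inl (o e).1) (inr (e, i)) :=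
  ⟨by simp, Or.inl (Or.inr (Or.inl ⟨e, i, rfl, rfl, hi⟩))⟩

lemma addPaths_adj_step {e : G.edgeSet} {i j : Fin (q - 1)} (hj : (j : ℕ) = (i : ℕ) + 1) :
    (addPaths G q o).Adj (inr (e, i)) (inr (e, j)) :=
  ⟨by simp [Prod.ext_iff, Fin.ext_iff]; omega, Or.inl (Or.inr (Or.inr (Or.inl ⟨e, i, j, rfl, rfl, hj⟩)))⟩

lemma addPaths_adj_end {e : G.edgeSet} {i : Fin (q - 1)} (hi : (i : ℕ) = q - 2) :
    (addPaths G q o).Adj (inr (e, i)) (inl (o e).2) :=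
  ⟨by simp, Or.inl (Or.inr (Or.inr (Or.inr ⟨e, i, rfl, rfl, hi⟩)))⟩

lemma addPaths_endpoints_adj (ho : ∀ e : G.edgeSet, s((o e).1, (o e).2) = (e : Sym2 V))
    (e : G.edgeSet) : G.Adj (o e).1 (o e).2 := by
  have := e.prop
  rw [← ho e, SimpleGraph.mem_edgeSet] at this
  exact this

lemma zmod2_ne {a b : ZMod 2} (h : a ≠ b) : b = a + 1 := by
  revert h; revert a b; decide

lemma oct_hits_gadget (hq : 2 ≤ q) (hqe : Even q)
    (ho : ∀ e : G.edgeSet, s((o e).1, (o e).2) = (e : Sym2 V))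
    {S' : Set (V ⊕ (G.edgeSet × Fin (q - 1)))} (hS' : IsOCT (addPaths G q o) S')
    (e : G.edgeSet) (h1 : inl (o e).1 ∉ S') (h2 : inl (o e).2 ∉ S') :
    ∃ i : Fin (q - 1), inr (e, i) ∈ S' := by
  by_contra hcon
  push_neg at hcon
  obtain ⟨C⟩ := hS'
  set G' := addPaths G q o with hG'
  have h1' : (inl (o e).1 : V ⊕ (G.edgeSet × Fin (q - 1))) ∈ (S'ᶜ : Set _) := h1
  have h2' : (inl (o e).2 : V ⊕ (G.edgeSet × Fin (q - 1))) ∈ (S'ᶜ : Set _) := h2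
  have hic : ∀ i : Fin (q - 1), (inr (e, i) : V ⊕ (G.edgeSet × Fin (q - 1))) ∈ (S'ᶜ : Set _) :=
    fun i => hcon i
  let c : ↥(S'ᶜ : Set (V ⊕ (G.edgeSet × Fin (q - 1)))) → ZMod 2 := fun x => C x
  have hc : ∀ x y, (G'.induce (S'ᶜ : Set _)).Adj x y → c y = c x + 1 := by
    intro x y hxy
    exact zmod2_ne (fun h => C.valid hxy h)
  have hq1 : 1 ≤ q - 1 := by omega
  have key : ∀ i : ℕ, ∀ h : i < q - 1,
      c ⟨inr (e, ⟨i, h⟩), hic _⟩ = c ⟨inl (o e).1, h1'⟩ + (i + 1 : ℕ) := by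
    intro i
    induction i with
    | zero =>
      intro h
      have := hc ⟨inl (o e).1, h1'⟩ ⟨inr (e, ⟨0, h⟩), hic _⟩
        (addPaths_adj_start (i := ⟨0, h⟩) rfl)
      simpa using this
    | succ n ih =>
      intro h
      have hn : n < q - 1 := by omega
      have := hc ⟨inr (e, ⟨n, hn⟩), hic _⟩ ⟨inr (e, ⟨n + 1, h⟩), hic _⟩
        (addPaths_adj_step rfl)
      rw [this, ih hn]
      push_cast
      ring
  have hlast : q - 2 < q - 1 := by omega
  have hend := hc ⟨inr (e, ⟨q - 2, hlast⟩), hic _⟩ ⟨inl (o e).2, h2'⟩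
    (addPaths_adj_end rfl)
  rw [key (q - 2) hlast] at hend
  have hq0 : ((q : ℕ) : ZMod 2) = 0 :=
    (ZMod.natCast_eq_zero_iff q 2).2 hqe.two_dvd
  have hcast : ((q - 2 + 1 : ℕ) : ZMod 2) + 1 = 0 := by
    have : (q - 2 + 1) + 1 = q := by omega
    calc ((q - 2 + 1 : ℕ) : ZMod 2) + 1 = ((q - 2 + 1 + 1 : ℕ) : ZMod 2) := by push_cast; ring
    _ = ((q : ℕ) : ZMod 2) := by rw [this]
    _ = 0 := hq0
  have : c ⟨inl (o e).2, h2'⟩ = c ⟨inl (o e).1, h1'⟩ := by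
    rw [hend, add_assoc, hcast, add_zero]
  have hadj : (G'.induce (S'ᶜ : Set _)).Adj ⟨inl (o e).1, h1'⟩ ⟨inl (o e).2, h2'⟩ :=
    addPaths_adj_inl_inl.2 (addPaths_endpoints_adj ho e)
  exact C.valid hadj this.symm

lemma addPaths_adj_inl_inr {e : G.edgeSet} {i : Fin (q - 1)} {a : V}
    (h : (addPaths G q o).Adj (inl a) (inr (e, i))) :
    (a = (o e).1 ∧ (i : ℕ) = 0) ∨ (a = (o e).2 ∧ (i : ℕ) = q - 2) := by
  rcases h with ⟨hne, h | h⟩ <;>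
    rcases h with ⟨a', b', ha, hb, hab⟩ | ⟨e', i', ha, hb, hi⟩ | ⟨e', i', j', ha, hb, hi⟩ |
      ⟨e', i', ha, hb, hi⟩ <;> simp_all

lemma addPaths_adj_inr_inr_full {e f : G.edgeSet} {i j : Fin (q - 1)}
    (h : (addPaths G q o).Adj (inr (e, i)) (inr (f, j))) :
    e = f ∧ ((j : ℕ) = (i : ℕ) + 1 ∨ (i : ℕ) = (j : ℕ) + 1) := by
  rcases h with ⟨hne, h | h⟩ <;>
    rcases h with ⟨a', b', ha, hb, hab⟩ | ⟨e', i', ha, hb, hi⟩ | ⟨e', i', j', ha, hb, hi⟩ |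
      ⟨e', i', ha, hb, hi⟩ <;> simp_all

lemma gadget_escape {S' : Set (V ⊕ (G.edgeSet × Fin (q - 1)))} :
    ∀ {x y : ↥S'} (_ : ((addPaths G q o).induce S').Walk x y) {e : G.edgeSet} {i : Fin (q - 1)},
      x.val = inr (e, i) → ∀ {b : V}, y.val = inl b →
        inl (o e).1 ∈ S' ∨ inl (o e).2 ∈ S' := by
  intro x y w
  induction w with
  | nil =>
    intro e i hx b hy
    rw [hy] at hx
    simp at hx
  | @cons xx z yy h p ih =>
    intro e i hx b hy
    have h' : (addPaths G q o).Adj xx.val z.val := h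
    rw [hx] at h'
    obtain ⟨zv, hzm⟩ := z
    rcases zv with w' | ⟨f, j⟩
    · rcases addPaths_adj_inr_inl h' with rfl | rfl
      · exact Or.inl hzm
      · exact Or.inr hzm
    · obtain rfl := addPaths_adj_inr_inr h'
      exact ih rfl hy

lemma gadget_trapped {S' : Set (V ⊕ (G.edgeSet × Fin (q - 1)))}
    (hnoinl : ∀ v : V, inl v ∉ S') {e₀ : G.edgeSet} :
    ∀ {x y : ↥S'} (_ : ((addPaths G q o).induce S').Walk x y) {i : Fin (q - 1)},
      x.val = inr (e₀, i) → ∃ j : Fin (q - 1), y.val = inr (e₀, j) := by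
  intro x y w
  induction w with
  | nil =>
    intro i hx
    exact ⟨_, hx⟩
  | @cons xx z yy h p ih =>
    intro i hx
    have h' : (addPaths G q o).Adj xx.val z.val := h
    rw [hx] at h'
    obtain ⟨zv, hzm⟩ := z
    rcases zv with w' | ⟨f, j⟩
    · exact absurd hzm (hnoinl w')
    · obtain rfl := addPaths_adj_inr_inr h'
      exact ih rfl

lemma project_walk (ho : ∀ e : G.edgeSet, s((o e).1, (o e).2) = (e : Sym2 V))
    {S' : Set (V ⊕ (G.edgeSet × Fin (q - 1)))} :
    ∀ {x y : ↥S'} (_ : ((addPaths G q o).induce S').Walk x y) {b : V}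
      (hb : b ∈ inl ⁻¹' S'), y.val = inl b →
      (∀ a (ha : a ∈ inl ⁻¹' S'), x.val = inl a →
        (G.induce (inl ⁻¹' S')).Reachable ⟨a, ha⟩ ⟨b, hb⟩) ∧
      (∀ (e : G.edgeSet) (i : Fin (q - 1)), x.val = inr (e, i) →
        ∀ u (hu : u ∈ inl ⁻¹' S'), (u = (o e).1 ∨ u = (o e).2) →
          (G.induce (inl ⁻¹' S')).Reachable ⟨u, hu⟩ ⟨b, hb⟩) := by
  intro x y w
  induction w with
  | nil =>
    intro b hb hy
    constructor
    · intro a ha hx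
      rw [hy] at hx
      have hab : b = a := by simpa using hx
      subst hab
      exact Reachable.refl _
    · intro e i hx
      rw [hy] at hx
      simp at hx
  | @cons xx z yy h p ih =>
    intro b hb hy
    have h' : (addPaths G q o).Adj xx.val z.val := h
    constructor
    · intro a ha hx
      rw [hx] at h'
      obtain ⟨zv, hzm⟩ := z
      rcases zv with a' | ⟨f, j⟩
      · have hadj : G.Adj a a' := addPaths_adj_inl_inl.mp h'
        have hstep : (G.induce (inl ⁻¹' S')).Adj ⟨a, ha⟩ ⟨a', hzm⟩ := hadj
        exact hstep.reachable.trans ((ih hb hy).1 a' hzm rfl)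
      · rcases addPaths_adj_inl_inr h' with ⟨rfl, -⟩ | ⟨rfl, -⟩
        · exact (ih hb hy).2 f j rfl _ ha (Or.inl rfl)
        · exact (ih hb hy).2 f j rfl _ ha (Or.inr rfl)
    · intro e i hx u hu hor
      rw [hx] at h'
      obtain ⟨zv, hzm⟩ := z
      rcases zv with w' | ⟨f, j⟩
      · have base := (ih hb hy).1 w' hzm rfl
        have hA : G.Adj (o e).1 (o e).2 := addPaths_endpoints_adj ho e
        rcases addPaths_adj_inr_inl h' with rfl | rfl
        · rcases hor with rfl | rfl
          · exact base
          · have hstep : (G.induce (inl ⁻¹' S')).Adj ⟨_, hu⟩ ⟨(o e).1, hzm⟩ := hA.symm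
            exact hstep.reachable.trans base
        · rcases hor with rfl | rfl
          · have hstep : (G.induce (inl ⁻¹' S')).Adj ⟨_, hu⟩ ⟨(o e).2, hzm⟩ := hA
            exact hstep.reachable.trans base
          · exact base
      · obtain rfl := addPaths_adj_inr_inr h'
        exact (ih hb hy).2 e j rfl u hu hor

end Aux

/-- Let `G'` be obtained from `G` by adding, for each edge `uv`, a new path of even
length `2⌊p/2⌋` between `u` and `v` (keeping the edge `uv`). Then for every `k`, `G` has a
connected vertex cover of size at most `k` iff `G'` has a connected odd cycle transversal of
size at most `k`. -/
theorem connected_vc_iff_connected_oct_of_gadget {V : Type*} [Fintype V] (G : SimpleGraph V)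
    (p : ℕ) (hp : 3 ≤ p) (o : G.edgeSet → V × V)
    (ho : ∀ e : G.edgeSet, s((o e).1, (o e).2) = (e : Sym2 V)) (k : ℕ) :
    (∃ S : Set V, IsVC G S ∧ ConnSet G S ∧ S.ncard ≤ k) ↔
      (∃ S' : Set (V ⊕ (G.edgeSet × Fin (2 * (p / 2) - 1))),
        IsOCT (addPaths G (2 * (p / 2)) o) S' ∧ ConnSet (addPaths G (2 * (p / 2)) o) S' ∧
          S'.ncard ≤ k) := by
  set q := 2 * (p / 2) with hqdef
  have hq : 2 ≤ q := by omega
  have hqe : Even q := ⟨p / 2, by omega⟩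
  obtain ⟨m, hm⟩ := hqe
  constructor
  · rintro ⟨S, hVC, hconn, hcard⟩
    refine ⟨Sum.inl '' S, ?_, ?_, ?_⟩
    · -- OCT
      have hcol : ((addPaths G q o).induce (((Sum.inl '' S)ᶜ : Set _))).Coloring (ZMod 2) := by
        refine SimpleGraph.Coloring.mk
          (fun x => Sum.rec (fun _ => ((0 : ℕ) : ZMod 2))
            (fun pr => (((pr.2.1 : ℕ) + 1 : ℕ) : ZMod 2)) x.val) ?_
        rintro ⟨xv, hx⟩ ⟨yv, hy⟩ hxy
        have h' : (addPaths G q o).Adj xv yv := hxy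
        rcases xv with a | ⟨e, i⟩ <;> rcases yv with b | ⟨f, j⟩
        · have hab := addPaths_adj_inl_inl.mp h'
          rcases hVC hab with h | h
          · exact absurd (Set.mem_image_of_mem _ h) hx
          · exact absurd (Set.mem_image_of_mem _ h) hy
        · rcases addPaths_adj_inl_inr h' with ⟨-, hi⟩ | ⟨-, hi⟩ <;>
          · simp only [hi]
            intro hmod
            rw [ZMod.natCast_eq_natCast_iff] at hmod
            have := hmod
            unfold Nat.ModEq at this
            omega
        · rcases addPaths_adj_inl_inr h'.symm with ⟨-, hi⟩ | ⟨-, hi⟩ <;>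
          · simp only [hi]
            intro hmod
            rw [ZMod.natCast_eq_natCast_iff] at hmod
            have := hmod
            unfold Nat.ModEq at this
            omega
        · obtain ⟨-, hij⟩ := addPaths_adj_inr_inr_full h'
          rcases hij with hij | hij <;>
          · simp only [hij]
            intro hmod
            rw [ZMod.natCast_eq_natCast_iff] at hmod
            have := hmod
            unfold Nat.ModEq at this
            omega
      have := hcol.colorable
      rwa [ZMod.card] at this
    · have hiso : G.induce S ≃g (addPaths G q o).induce (Sum.inl '' S) :=
        { toEquiv := Equiv.Set.image Sum.inl S Sum.inl_injective
          map_rel_iff' := by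
            rintro ⟨a, ha⟩ ⟨b, hb⟩
            exact addPaths_adj_inl_inl }
      have hc : (G.induce S).Connected := hconn
      exact hiso.connected_iff.mp hc
    · rw [Set.ncard_image_of_injective S Sum.inl_injective]
      exact hcard
  · rintro ⟨S', hOCT, hconn', hcard⟩
    have hc2 : ((addPaths G q o).induce S').Connected := hconn'
    have hfin : S'.Finite := Set.toFinite S'
    have hne' : S'.Nonempty := Set.nonempty_coe_sort.mp hc2.nonempty
    have hk1 : 1 ≤ k := le_trans ((Set.ncard_pos hfin).2 hne') hcard
    by_cases hA : ∃ v : V, Sum.inl v ∈ S'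
    · obtain ⟨v₀, hv₀⟩ := hA
      refine ⟨Sum.inl ⁻¹' S', ?_, ?_, ?_⟩
      · intro u v huv
        by_contra hcon
        push_neg at hcon
        obtain ⟨hu, hv⟩ := hcon
        have he : s(u, v) ∈ G.edgeSet := (SimpleGraph.mem_edgeSet G).mpr huv
        have hoe := ho ⟨s(u, v), he⟩
        rw [Sym2.eq_iff] at hoe
        have h1 : Sum.inl (o ⟨s(u, v), he⟩).1 ∉ S' := by
          rcases hoe with ⟨h, -⟩ | ⟨h, -⟩ <;> rw [h] <;> assumption
        have h2 : Sum.inl (o ⟨s(u, v), he⟩).2 ∉ S' := by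
          rcases hoe with ⟨-, h⟩ | ⟨-, h⟩ <;> rw [h] <;> assumption
        obtain ⟨i, hi⟩ := oct_hits_gadget hq ⟨m, hm⟩ ho hOCT ⟨s(u, v), he⟩ h1 h2
        obtain ⟨w⟩ := hc2.preconnected ⟨Sum.inr (⟨s(u, v), he⟩, i), hi⟩ ⟨Sum.inl v₀, hv₀⟩
        rcases gadget_escape w rfl rfl with h | h
        · exact h1 h
        · exact h2 h
      · refine (SimpleGraph.connected_iff _).mpr ⟨?_, ⟨⟨v₀, hv₀⟩⟩⟩
        rintro ⟨a, ha⟩ ⟨b, hb⟩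
        obtain ⟨w⟩ := hc2.preconnected ⟨Sum.inl a, ha⟩ ⟨Sum.inl b, hb⟩
        exact (project_walk ho w hb rfl).1 a ha rfl
      · calc (Sum.inl ⁻¹' S').ncard = (Sum.inl '' (Sum.inl ⁻¹' S')).ncard :=
              (Set.ncard_image_of_injective _ Sum.inl_injective).symm
          _ ≤ S'.ncard := Set.ncard_le_ncard (Set.image_preimage_subset _ _) hfin
          _ ≤ k := hcard
    · push_neg at hA
      obtain ⟨x₀, hx₀⟩ := hne'
      rcases x₀ with v | ⟨e₀, i₀⟩
      · exact absurd hx₀ (hA v)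
      refine ⟨{(o e₀).1}, ?_, ?_, ?_⟩
      · intro u v huv
        have he : s(u, v) ∈ G.edgeSet := (SimpleGraph.mem_edgeSet G).mpr huv
        obtain ⟨i, hi⟩ := oct_hits_gadget hq ⟨m, hm⟩ ho hOCT ⟨s(u, v), he⟩ (hA _) (hA _)
        obtain ⟨w⟩ := hc2.preconnected ⟨Sum.inr (e₀, i₀), hx₀⟩ ⟨Sum.inr (⟨s(u, v), he⟩, i), hi⟩
        obtain ⟨j, hj⟩ := gadget_trapped hA w rfl
        have hee : (⟨s(u, v), he⟩ : G.edgeSet) = e₀ := by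
          have hj' : (Sum.inr ((⟨s(u, v), he⟩ : G.edgeSet), i) :
              V ⊕ (G.edgeSet × Fin (q - 1))) = Sum.inr (e₀, j) := hj
          simpa using congrArg (fun x => Sum.elim (fun _ => e₀) Prod.fst x) hj'
        have hsym : s(u, v) = s((o e₀).1, (o e₀).2) := by
          rw [ho e₀]
          exact congrArg Subtype.val hee
        rw [Sym2.eq_iff] at hsym
        rcases hsym with ⟨h, -⟩ | ⟨-, h⟩
        · exact Or.inl (by simp [h])
        · exact Or.inr (by simp [h])
      · refine (SimpleGraph.connected_iff _).mpr ⟨?_, ⟨⟨(o e₀).1, rfl⟩⟩⟩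
        rintro ⟨a, ha⟩ ⟨b, hb⟩
        rw [Set.mem_singleton_iff] at ha hb
        subst ha; subst hb
        exact SimpleGraph.Reachable.refl _
      · rw [Set.ncard_singleton]
        exact hk1
end Paper
end

section
/- Let G be a graph with n ≥ 3 vertices and m edges, and let G' be obtained from G by adding vertices x and y each adjacent to all vertices of G, plus pendant vertices x' adjacent only to x and y' adjacent only to y. Then G has a Hamiltonian path if and only if G' has a Hamiltonian path, and moreover every Hamiltonian path of G' has endpoints x' and y'. -/
open SimpleGraph

namespace Paper

variable {V : Type*}

/-- The graph `G'` obtained from `G` by adding vertices `x = Sum.inr 0` and `y = Sum.inr 1`, each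
adjacent to all vertices of `G`, plus pendant vertices `x' = Sum.inr 2` adjacent only to `x` and
`y' = Sum.inr 3` adjacent only to `y`. -/
def hamExt (G : SimpleGraph V) : SimpleGraph (V ⊕ Fin 4) :=
  SimpleGraph.fromRel fun a b =>
    (∃ u v : V, a = Sum.inl u ∧ b = Sum.inl v ∧ G.Adj u v) ∨
    (∃ u : V, a = Sum.inr 0 ∧ b = Sum.inl u) ∨
    (∃ u : V, a = Sum.inr 1 ∧ b = Sum.inl u) ∨
    (a = Sum.inr 0 ∧ b = Sum.inr 2) ∨
    (a = Sum.inr 1 ∧ b = Sum.inr 3)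

/-- `G` has a Hamiltonian path. -/
def HasHamPath [DecidableEq V] (G : SimpleGraph V) : Prop :=
  ∃ (a b : V) (p : G.Walk a b), p.IsHamiltonian

variable {G : SimpleGraph V}

lemma adj_inl_inl {u v : V} : (hamExt G).Adj (Sum.inl u) (Sum.inl v) ↔ G.Adj u v := by
  constructor
  · rintro ⟨hne, h | h | h | h | h⟩ <;> aesop (add norm [SimpleGraph.adj_comm])
  · intro h
    rw [hamExt, SimpleGraph.fromRel_adj]
    exact ⟨by simp [h.ne], Or.inl (Or.inl ⟨u, v, rfl, rfl, h⟩)⟩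

lemma adj_inr2 {c : V ⊕ Fin 4} (h : (hamExt G).Adj (Sum.inr 2) c) : c = Sum.inr 0 := by
  obtain ⟨hne, h | h | h | h | h⟩ := h <;> aesop

lemma adj_inr3 {c : V ⊕ Fin 4} (h : (hamExt G).Adj (Sum.inr 3) c) : c = Sum.inr 1 := by
  obtain ⟨hne, h | h | h | h | h⟩ := h <;> aesop

lemma adj_inr0 {c : V ⊕ Fin 4} (h : (hamExt G).Adj (Sum.inr 0) c) :
    c = Sum.inr 2 ∨ ∃ u, c = Sum.inl u := by
  obtain ⟨hne, h | h | h | h | h⟩ := h <;> aesop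

lemma adj_inl {v : V} {c : V ⊕ Fin 4} (h : (hamExt G).Adj (Sum.inl v) c) :
    (∃ u, c = Sum.inl u ∧ G.Adj v u) ∨ c = Sum.inr 0 ∨ c = Sum.inr 1 := by
  obtain ⟨hne, h | h | h | h | h⟩ := h <;> aesop (add norm [SimpleGraph.adj_comm])

lemma ne_inr {i j : Fin 4} (h : i ≠ j) : (Sum.inr i : V ⊕ Fin 4) ≠ Sum.inr j :=
  fun hh => h (Sum.inr_injective hh)

lemma adj_20 : (hamExt G).Adj (Sum.inr 2) (Sum.inr 0) := by
  rw [hamExt, SimpleGraph.fromRel_adj]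
  exact ⟨ne_inr (by decide), Or.inr (Or.inr (Or.inr (Or.inr (Or.inl ⟨rfl, rfl⟩))))⟩

lemma adj_0l (a : V) : (hamExt G).Adj (Sum.inr 0) (Sum.inl a) := by
  rw [hamExt, SimpleGraph.fromRel_adj]
  exact ⟨by simp, Or.inl (Or.inr (Or.inl ⟨a, rfl, rfl⟩))⟩

lemma adj_l1 (b : V) : (hamExt G).Adj (Sum.inl b) (Sum.inr 1) := by
  rw [hamExt, SimpleGraph.fromRel_adj]
  exact ⟨by simp, Or.inr (Or.inr (Or.inr (Or.inl ⟨b, rfl, rfl⟩)))⟩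

lemma adj_13 : (hamExt G).Adj (Sum.inr 1) (Sum.inr 3) := by
  rw [hamExt, SimpleGraph.fromRel_adj]
  exact ⟨ne_inr (by decide), Or.inl (Or.inr (Or.inr (Or.inr (Or.inr ⟨rfl, rfl⟩))))⟩

lemma pendant_endpoint {W : Type*} {H : SimpleGraph W} {z w : W}
    (hz : ∀ c, H.Adj z c → c = w) :
    ∀ {a b : W} (p : H.Walk a b), p.support.Nodup → z ∈ p.support → z ≠ a → z ≠ b → False := by
  intro a b p
  induction p with
  | nil => intro _ hm ha _; simp only [Walk.support_nil, List.mem_singleton] at hm; exact ha hm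
  | @cons a c b h q ih =>
    intro hnd hm ha hb
    rw [Walk.support_cons] at hnd hm
    obtain ⟨hac, hndq⟩ := List.nodup_cons.mp hnd
    have hmq : z ∈ q.support := by
      rcases List.mem_cons.mp hm with h1 | h2
      · exact absurd h1 ha
      · exact h2
    by_cases hzc : z = c
    · subst hzc
      cases q with
      | nil => exact hb rfl
      | cons h' q' =>
        have haw : a = w := hz a h.symm
        have hdw := hz _ h'
        rw [Walk.support_cons] at hac
        exact hac (by rw [haw, ← hdw]; exact List.mem_cons_of_mem _ q'.start_mem_support)
    · exact ih hndq hmq hzc hb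

lemma closed_support {W : Type*} {H : SimpleGraph W} {c : W} (q : H.Walk c c)
    (h : q.support.Nodup) : q.support = [c] := by
  cases q with
  | nil => simp
  | cons h' q' =>
    rw [Walk.support_cons] at h
    exact absurd q'.end_mem_support (List.nodup_cons.mp h).1

lemma mem1_of_walk_to3 :
    ∀ {c b : V ⊕ Fin 4} (w : (hamExt G).Walk c b), b = Sum.inr 3 → c ≠ Sum.inr 3 →
      (Sum.inr 1 : V ⊕ Fin 4) ∈ w.support := by
  intro c b w
  induction w with
  | nil => intro hb h; exact absurd hb h
  | @cons c d _ h w' ih =>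
    intro hb _
    by_cases hd : d = Sum.inr 3
    · have : c = Sum.inr 1 := adj_inr3 (hd ▸ h).symm
      rw [Walk.support_cons]; exact List.mem_cons.mpr (Or.inl this.symm)
    · exact List.mem_cons_of_mem _ (ih hb hd)

lemma extract :
    ∀ {c b : V ⊕ Fin 4} (r : (hamExt G).Walk c b), b = Sum.inr 3 → r.support.Nodup →
      (Sum.inr 0 : V ⊕ Fin 4) ∉ r.support → ∀ v, c = Sum.inl v →
      ∃ (w : V) (q : G.Walk v w),
        r.support = q.support.map Sum.inl ++ [Sum.inr 1, Sum.inr 3] := by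
  intro c b r
  induction r with
  | nil => intro hb _ _ v hv; rw [hb] at hv; exact absurd hv (by simp)
  | @cons c d _ h r' ih =>
    intro hb hnd h0 v hv
    subst hv
    subst hb
    rw [Walk.support_cons] at hnd h0
    obtain ⟨hnmem, hnd'⟩ := List.nodup_cons.mp hnd
    have h0' : (Sum.inr 0 : V ⊕ Fin 4) ∉ r'.support := fun hh => h0 (List.mem_cons_of_mem _ hh)
    rcases adj_inl h with ⟨u, rfl, hadj⟩ | rfl | rfl
    · obtain ⟨w, q, hq⟩ := ih rfl hnd' h0' u rfl
      exact ⟨w, Walk.cons hadj q, by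
        rw [Walk.support_cons, hq, Walk.support_cons]; simp⟩
    · exact absurd r'.start_mem_support h0'
    · -- d = inr 1
      have hsupp : r'.support = [Sum.inr 1, Sum.inr 3] := by
        cases r' with
        | @cons _ d' _ h'' r''' =>
          rw [Walk.support_cons]
          by_cases hd' : d' = Sum.inr 3
          · subst hd'
            rw [closed_support r''' (by
              rw [Walk.support_cons] at hnd'; exact (List.nodup_cons.mp hnd').2)]
          · exfalso
            rw [Walk.support_cons] at hnd'
            exact (List.nodup_cons.mp hnd').1 (mem1_of_walk_to3 r''' rfl hd')
      exact ⟨v, Walk.nil, by rw [Walk.support_cons, hsupp]; simp⟩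

def homInl (G : SimpleGraph V) : G →g hamExt G := ⟨Sum.inl, fun h => adj_inl_inl.mpr h⟩

@[simp] lemma homInl_coe : ⇑(homInl G) = Sum.inl := rfl

/-- For a graph `G` on `n ≥ 3` vertices, `G` has a Hamiltonian path iff `G'` has a
Hamiltonian path; moreover every Hamiltonian path of `G'` has endpoints `x'` and `y'`. -/
theorem ham_path_extension {V : Type*} [Fintype V] [DecidableEq V] (G : SimpleGraph V)
    (hn : 3 ≤ Fintype.card V) :
    (HasHamPath G ↔ HasHamPath (hamExt G)) ∧
    (∀ (a b : V ⊕ Fin 4) (p : (hamExt G).Walk a b), p.IsHamiltonian →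
      ({a, b} : Set (V ⊕ Fin 4)) = {Sum.inr 2, Sum.inr 3}) := by
  classical
  have hend : ∀ (a b : V ⊕ Fin 4) (p : (hamExt G).Walk a b), p.IsHamiltonian →
      ((Sum.inr 2 : V ⊕ Fin 4) = a ∨ Sum.inr 2 = b) ∧
      ((Sum.inr 3 : V ⊕ Fin 4) = a ∨ Sum.inr 3 = b) := by
    intro a b p hp
    have hnd := hp.isPath.support_nodup
    constructor
    · by_contra hc
      push_neg at hc
      exact pendant_endpoint (fun c h => adj_inr2 h) p hnd (hp.mem_support _) hc.1 hc.2
    · by_contra hc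
      push_neg at hc
      exact pendant_endpoint (fun c h => adj_inr3 h) p hnd (hp.mem_support _) hc.1 hc.2
  have key : ∀ (p : (hamExt G).Walk (Sum.inr 2) (Sum.inr 3)), p.IsHamiltonian →
      HasHamPath G := by
    intro p hp
    have hnd := hp.isPath.support_nodup
    cases p with
    | @cons _ d _ h q =>
      have hd : d = Sum.inr 0 := adj_inr2 h
      subst hd
      cases q with
      | @cons _ e _ h' r =>
        rcases adj_inr0 h' with he | ⟨v, he⟩
        · exfalso
          subst he
          rw [Walk.support_cons, Walk.support_cons] at hnd
          exact (List.nodup_cons.mp hnd).1 (List.mem_cons_of_mem _ r.start_mem_support)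
        · subst he
          rw [Walk.support_cons, Walk.support_cons] at hnd
          obtain ⟨_, hnd1⟩ := List.nodup_cons.mp hnd
          obtain ⟨h0nm, hndr⟩ := List.nodup_cons.mp hnd1
          obtain ⟨w, q', hq⟩ := extract r rfl hndr h0nm v rfl
          refine ⟨v, w, q', (Walk.IsPath.mk' ?_).isHamiltonian_of_mem fun u => ?_⟩
          · have := hndr
            rw [hq] at this
            exact ((List.nodup_append.mp this).1).of_map
          · have hu := hp.mem_support (Sum.inl u)
            rw [Walk.support_cons, Walk.support_cons, hq] at hu
            simpa using hu
  have hfwd : HasHamPath G → HasHamPath (hamExt G) := by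
    rintro ⟨a, b, p, hp⟩
    refine ⟨Sum.inr 2, Sum.inr 3,
      Walk.cons adj_20 (Walk.cons (adj_0l a)
        ((p.map (homInl G)).append
          (Walk.cons (adj_l1 b) (Walk.cons adj_13 Walk.nil)))), ?_⟩
    have hS : (Walk.cons (adj_20 (G := G)) (Walk.cons (adj_0l a)
        ((p.map (homInl G)).append
          (Walk.cons (adj_l1 b) (Walk.cons adj_13 Walk.nil))))).support
        = Sum.inr 2 :: Sum.inr 0 ::
          (p.support.map Sum.inl ++ [Sum.inr 1, Sum.inr 3]) := by
      simp [Walk.support_cons, Walk.support_append, Walk.support_map]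
      exact (Walk.support_append _ _).trans (congrArg₂ (· ++ ·) (Walk.support_map _ _) rfl)
    refine (Walk.IsPath.mk' ?_).isHamiltonian_of_mem fun x => ?_
    · rw [hS]
      refine List.Nodup.cons ?_ (List.Nodup.cons ?_ (List.Nodup.append ?_ ?_ ?_))
      · simp [Fin.ext_iff] <;> decide
      · simp [Fin.ext_iff] <;> decide
      · exact hp.isPath.support_nodup.map Sum.inl_injective
      · simp [Fin.ext_iff] <;> decide
      · intro z hz hz'
        simp only [List.mem_map] at hz
        obtain ⟨u, _, rfl⟩ := hz
        simp at hz'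
    · rw [hS]
      cases x with
      | inl u => simp [hp.mem_support u]
      | inr i => fin_cases i <;> simp
  refine ⟨⟨hfwd, ?_⟩, ?_⟩
  · rintro ⟨a, b, p, hp⟩
    obtain ⟨h2, h3⟩ := hend a b p hp
    have hne : (Sum.inr 2 : V ⊕ Fin 4) ≠ Sum.inr 3 := ne_inr (by decide)
    rcases h2 with rfl | rfl <;> rcases h3 with h3 | h3
    · exact absurd h3.symm hne
    · subst h3; exact key p hp
    · subst h3
      refine key p.reverse ((Walk.IsPath.mk' ?_).isHamiltonian_of_mem fun w => ?_)
      · rw [Walk.support_reverse]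
        exact List.nodup_reverse.mpr hp.isPath.support_nodup
      · rw [Walk.support_reverse, List.mem_reverse]
        exact hp.mem_support w
    · exact absurd h3.symm hne
  · intro a b p hp
    obtain ⟨h2, h3⟩ := hend a b p hp
    have hne : (Sum.inr 2 : V ⊕ Fin 4) ≠ Sum.inr 3 := ne_inr (by decide)
    rcases h2 with rfl | rfl <;> rcases h3 with h3 | h3
    · exact absurd h3.symm hne
    · subst h3; rfl
    · subst h3; exact Set.pair_comm _ _
    · exact absurd h3.symm hne
end Paper
end
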